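/- arXiv:1602.02166 — 7 statements merged into one kernel-verified Lean document; each statement's English description precedes it below -/
import Mathlib

section
/- For every positive integer M, the number of orbits of fermionic binary words of length M under the rotation action of the cyclic group Z/M equals (1/(2M)) · Σ_{n | M, n odd} φ(n) · 2^{M/n}, where the sum runs over the odd divisors n of M. -/
/-- Rotation of a binary word of length `M` by `k`: `(c_k · x)(i) = x (i + k)`. -/
def rot (M : ℕ) (k : ZMod M) (x : ZMod M → ZMod 2) : ZMod M → ZMod 2 :=
  fun i => x (i + k)

/-- The orbit of a binary word under the rotation action of the cyclic group `ZMod M`. -/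
def rotOrbit (M : ℕ) (x : ZMod M → ZMod 2) : Set (ZMod M → ZMod 2) :=
  {y | ∃ k : ZMod M, y = rot M k x}

/-- A binary word is fermionic if it contains an odd number of ones. -/
def Fermionic (M : ℕ) [NeZero M] (x : ZMod M → ZMod 2) : Prop :=
  Odd (Finset.univ.filter (fun i : ZMod M => x i = 1)).card

namespace FermAux

open Finset

variable (M : ℕ)

/-- number of ones of a word over an arbitrary finite index type -/
def ones {ι : Type*} [Fintype ι] [DecidableEq (ZMod 2)] (x : ι → ZMod 2) : ℕ :=
  (Finset.univ.filter fun i => x i = 1).card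

lemma rot_rot (a b : ZMod M) (x : ZMod M → ZMod 2) :
    rot M a (rot M b x) = rot M (a + b) x := by
  funext i; simp [rot, add_assoc]

lemma rot_zero (x : ZMod M → ZMod 2) : rot M 0 x = x := by
  funext i; simp [rot]

lemma ones_rot [NeZero M] (k : ZMod M) (x : ZMod M → ZMod 2) :
    ones (rot M k x) = ones x := by
  classical
  unfold ones
  apply Finset.card_bij (fun i _ => i + k)
  · intro a ha; simp only [mem_filter, mem_univ, true_and] at ha ⊢; exact ha
  · intro a _ b _ h; exact add_right_cancel h
  · intro b hb
    refine ⟨b - k, ?_, by ring⟩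
    simp only [mem_filter, mem_univ, true_and, rot] at hb ⊢
    exact Finset.mem_filter.2 ⟨Finset.mem_univ _, by simpa [rot] using hb⟩

lemma fermionic_rot [NeZero M] (k : ZMod M) (x : ZMod M → ZMod 2) :
    Fermionic M (rot M k x) ↔ Fermionic M x := by
  classical
  unfold Fermionic
  rw [show (Finset.univ.filter fun i : ZMod M => rot M k x i = 1).card
      = ones (rot M k x) from rfl,
    show (Finset.univ.filter fun i : ZMod M => x i = 1).card = ones x from rfl,
    ones_rot]

instance actFull : AddAction (ZMod M) (ZMod M → ZMod 2) where
  vadd k x := rot M k x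
  zero_vadd x := rot_zero M x
  add_vadd a b x := (rot_rot M a b x).symm

lemma vadd_def (k : ZMod M) (x : ZMod M → ZMod 2) : k +ᵥ x = rot M k x := rfl

variable [NeZero M]

instance actFerm : AddAction (ZMod M) {x : ZMod M → ZMod 2 // Fermionic M x} where
  vadd k x := ⟨rot M k x.1, (fermionic_rot M k x.1).2 x.2⟩
  zero_vadd x := Subtype.ext (rot_zero M x.1)
  add_vadd a b x := Subtype.ext (rot_rot M a b x.1).symm

lemma vaddF_def (k : ZMod M) (x : {x : ZMod M → ZMod 2 // Fermionic M x}) :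
    (k +ᵥ x).1 = rot M k x.1 := rfl

lemma rotOrbit_rot (k : ZMod M) (x : ZMod M → ZMod 2) :
    rotOrbit M (rot M k x) = rotOrbit M x := by
  ext z
  constructor
  · rintro ⟨l, rfl⟩; exact ⟨l + k, rot_rot M l k x⟩
  · rintro ⟨l, rfl⟩
    exact ⟨l - k, by rw [rot_rot]; ring_nf⟩

omit [NeZero M] in
lemma mem_rotOrbit_self (x : ZMod M → ZMod 2) : x ∈ rotOrbit M x :=
  ⟨0, (rot_zero M x).symm⟩

noncomputable def orbitEquiv :
    AddAction.orbitRel.Quotient (ZMod M) {x : ZMod M → ZMod 2 // Fermionic M x} ≃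
      {S : Set (ZMod M → ZMod 2) // ∃ x, Fermionic M x ∧ S = rotOrbit M x} := by
  refine Equiv.ofBijective
    (Quotient.lift (fun x => ⟨rotOrbit M x.1, x.1, x.2, rfl⟩) ?_) ⟨?_, ?_⟩
  · rintro a b ⟨k, rfl⟩
    exact Subtype.ext (rotOrbit_rot M k b.1)
  · rintro ⟨a⟩ ⟨b⟩ h
    apply Quotient.sound
    replace h : rotOrbit M a.1 = rotOrbit M b.1 := congrArg Subtype.val h
    have : a.1 ∈ rotOrbit M b.1 := h ▸ mem_rotOrbit_self M a.1
    obtain ⟨k, hk⟩ := this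
    exact ⟨k, Subtype.ext hk.symm⟩
  · rintro ⟨S, x, hx, rfl⟩
    exact ⟨Quotient.mk _ ⟨x, hx⟩, rfl⟩

section FixedCount

variable {M} (d : ℕ) (hd : d ∣ M) [NeZero d]

/-- fixed points of rotation by `d` are functions of the residue mod `d` -/
lemma fixed_step (x : ZMod M → ZMod 2) (hx : rot M (d : ZMod M) x = x) (a t : ℕ) :
    x ((a + t * d : ℕ) : ZMod M) = x ((a : ℕ) : ZMod M) := by
  induction t with
  | zero => simp
  | succ t ih =>
      have : (a + (t + 1) * d : ℕ) = ((a + t * d) + d : ℕ) := by ring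
      rw [this, Nat.cast_add]
      have h2 := congrFun hx ((a + t * d : ℕ) : ZMod M)
      simp only [rot] at h2
      rw [h2, ih]

lemma fixed_congr (x : ZMod M → ZMod 2) (hx : rot M (d : ZMod M) x = x)
    {i i' : ZMod M} (h : ZMod.castHom hd (ZMod d) i = ZMod.castHom hd (ZMod d) i') :
    x i = x i' := by
  have hi : ((i.val : ℕ) : ZMod M) = i := ZMod.natCast_rightInverse i
  have hi' : ((i'.val : ℕ) : ZMod M) = i' := ZMod.natCast_rightInverse i'
  have hmod : (i.val : ZMod d) = (i'.val : ZMod d) := by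
    rw [← hi, ← hi'] at h
    simpa only [map_natCast] using h
  have hmod' : i.val % d = i'.val % d := (ZMod.natCast_eq_natCast_iff' _ _ _).1 hmod
  have e1 : x i = x ((i.val % d : ℕ) : ZMod M) := by
    conv_lhs => rw [← hi, ← Nat.mod_add_div' i.val d]
    exact fixed_step d x hx _ _
  have e2 : x i' = x ((i'.val % d : ℕ) : ZMod M) := by
    conv_lhs => rw [← hi', ← Nat.mod_add_div' i'.val d]
    exact fixed_step d x hx _ _
  rw [e1, e2, hmod']

variable [NeZero M]

lemma fiber_card (j : ZMod d) :
    (Finset.univ.filter fun i : ZMod M => ZMod.castHom hd (ZMod d) i = j).card = M / d := by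
  classical
  set π := ZMod.castHom hd (ZMod d) with hπ
  have hconst : ∀ j j' : ZMod d,
      (Finset.univ.filter fun i : ZMod M => π i = j).card
        = (Finset.univ.filter fun i : ZMod M => π i = j').card := by
    intro j j'
    have hcast : ∀ a : ZMod d, π ((a.val : ℕ) : ZMod M) = a := by
      intro a
      rw [map_natCast]
      exact ZMod.natCast_rightInverse a
    apply Finset.card_bij' (fun i _ => i + ((j' - j).val : ZMod M))
      (fun i _ => i - ((j' - j).val : ZMod M))
    · intro a ha
      simp only [Finset.mem_filter, Finset.mem_univ, true_and] at ha ⊢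
      rw [map_add, ha, hcast]; ring
    · intro a ha
      simp only [Finset.mem_filter, Finset.mem_univ, true_and] at ha ⊢
      rw [map_sub, ha, hcast]; ring
    · intro a _; ring
    · intro a _; ring
  have hsum : ∑ j : ZMod d, (Finset.univ.filter fun i : ZMod M => π i = j).card
      = M := by
    rw [← Finset.card_eq_sum_card_fiberwise (fun i _ => Finset.mem_univ (π i))]
    simp [ZMod.card]
  have h2 : ∑ j' : ZMod d, (Finset.univ.filter fun i : ZMod M => π i = j').card
      = d * (Finset.univ.filter fun i : ZMod M => π i = j).card := by
    rw [Finset.sum_congr rfl fun j' _ => hconst j' j, Finset.sum_const,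
      Finset.card_univ, ZMod.card, smul_eq_mul]
  have hM : d * (Finset.univ.filter fun i : ZMod M => π i = j).card = M :=
    h2.symm.trans hsum
  exact (Nat.div_eq_of_eq_mul_left (Nat.pos_of_ne_zero (NeZero.ne d))
    (by rw [mul_comm] at hM; exact hM.symm)).symm

lemma ones_comp (y : ZMod d → ZMod 2) :
    ones (fun i : ZMod M => y (ZMod.castHom hd (ZMod d) i)) = (M / d) * ones y := by
  classical
  set π := ZMod.castHom hd (ZMod d)
  unfold ones
  rw [Finset.card_eq_sum_card_fiberwise
    (f := π) (t := Finset.univ.filter fun j => y j = 1)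
    (fun i hi => by
      simp only [Finset.coe_filter, Finset.mem_coe, Set.mem_setOf_eq, Finset.mem_filter, Finset.mem_univ, true_and] at hi ⊢; exact hi)]
  have : ∀ j ∈ Finset.univ.filter fun j => y j = 1,
      ((Finset.univ.filter fun i : ZMod M => y (π i) = 1).filter
        fun i => π i = j).card = M / d := by
    intro j hj
    simp only [Finset.mem_filter, Finset.mem_univ, true_and] at hj
    rw [show ((Finset.univ.filter fun i : ZMod M => y (π i) = 1).filter
        fun i => π i = j) = Finset.univ.filter fun i : ZMod M => π i = j by
      ext i
      simp only [Finset.mem_filter, Finset.mem_univ, true_and]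
      constructor
      · rintro ⟨_, h⟩; exact h
      · intro h; exact ⟨by rw [h, hj], h⟩]
    exact fiber_card d hd j
  rw [Finset.sum_congr rfl this, Finset.sum_const, smul_eq_mul, mul_comm]

/-- fixed words of the rotation by `d` correspond to words of length `d` -/
def fixedEquiv (hdvd : d ∣ M) : {x : ZMod M → ZMod 2 // rot M (d : ZMod M) x = x} ≃ (ZMod d → ZMod 2) where
  toFun x := fun j => x.1 ((j.val : ℕ) : ZMod M)
  invFun y := ⟨fun i => y (ZMod.castHom hdvd (ZMod d) i), by
    funext i
    show y (ZMod.castHom hdvd (ZMod d) (i + (d : ZMod M))) = _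
    rw [map_add, map_natCast, ZMod.natCast_self, add_zero]⟩
  left_inv x := by
    apply Subtype.ext
    funext i
    apply fixed_congr d hdvd x.1 x.2
    rw [map_natCast]
    exact ZMod.natCast_rightInverse _
  right_inv y := by
    funext j
    show y (ZMod.castHom hdvd (ZMod d) ((j.val : ℕ) : ZMod M)) = y j
    rw [map_natCast]
    congr 1
    exact ZMod.natCast_rightInverse j

include hd in
lemma ones_of_fixed (x : ZMod M → ZMod 2) (hx : rot M (d : ZMod M) x = x) :
    ones x = (M / d) * ones (fun j : ZMod d => x ((j.val : ℕ) : ZMod M)) := by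
  have hxx : x = fun i => (fun j : ZMod d => x ((j.val : ℕ) : ZMod M))
      (ZMod.castHom hd (ZMod d) i) :=
    (congrArg Subtype.val ((fixedEquiv d hd).left_inv ⟨x, hx⟩)).symm
  conv_lhs => rw [hxx]
  exact ones_comp d hd (fun j : ZMod d => x ((j.val : ℕ) : ZMod M))

end FixedCount

section OddCount

variable {M} (d : ℕ) [NeZero d]

lemma ones_update (y : ZMod d → ZMod 2) :
    Odd (ones (Function.update y 0 (y 0 + 1))) ↔ ¬ Odd (ones y) := by
  classical
  by_cases h : y 0 = 1
  · have hfilter : (Finset.univ.filter fun i => Function.update y 0 (y 0 + 1) i = 1)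
        = (Finset.univ.filter fun i : ZMod d => y i = 1).erase 0 := by
      ext i
      by_cases hi : i = 0
      · subst hi
        have h11 : (1 + 1 : ZMod 2) ≠ 1 := by decide
        simp [Function.update_self, h, h11]
      · simp [Function.update_of_ne hi, hi]
    unfold ones
    rw [hfilter, Finset.card_erase_of_mem (by simp [h])]
    have hpos : 1 ≤ (Finset.univ.filter fun i : ZMod d => y i = 1).card :=
      Finset.card_pos.2 ⟨0, by simp [h]⟩
    rw [Nat.odd_sub hpos]
    simp
  · have h0 : y 0 = 0 := by
      have : ∀ a : ZMod 2, a ≠ 1 → a = 0 := by decide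
      exact this _ h
    have hfilter : (Finset.univ.filter fun i => Function.update y 0 (y 0 + 1) i = 1)
        = insert 0 (Finset.univ.filter fun i : ZMod d => y i = 1) := by
      ext i
      by_cases hi : i = 0
      · subst hi
        simp [Function.update_self, h0]
      · simp [Function.update_of_ne hi, hi]
    unfold ones
    rw [hfilter, Finset.card_insert_of_notMem (by simp [h0]), Nat.odd_add_one]

lemma update_update (y : ZMod d → ZMod 2) :
    Function.update (Function.update y 0 (y 0 + 1)) 0
      (Function.update y 0 (y 0 + 1) 0 + 1) = y := by
  funext i
  by_cases hi : i = 0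
  · subst hi
    simp only [Function.update_self]
    have h11 : (1 + 1 : ZMod 2) = 0 := by decide
    rw [add_assoc, h11, add_zero]
  · simp [Function.update_of_ne hi]

lemma card_odd_fun :
    (Finset.univ.filter fun y : ZMod d → ZMod 2 => Odd (ones y)).card = 2 ^ (d - 1) := by
  classical
  have hbij : (Finset.univ.filter fun y : ZMod d → ZMod 2 => Odd (ones y)).card
      = (Finset.univ.filter fun y : ZMod d → ZMod 2 => ¬ Odd (ones y)).card := by
    refine Finset.card_bij' (fun y _ => Function.update y 0 (y 0 + 1))
      (fun y _ => Function.update y 0 (y 0 + 1)) ?_ ?_ ?_ ?_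
    · intro a ha
      simp only [Finset.mem_filter, Finset.mem_univ, true_and] at ha ⊢
      rw [ones_update]
      exact not_not.mpr ha
    · intro a ha
      simp only [Finset.mem_filter, Finset.mem_univ, true_and] at ha ⊢
      rw [ones_update]
      exact ha
    · intro a _
      exact update_update d a
    · intro a _
      exact update_update d a
  have hcard : (Finset.univ : Finset (ZMod d → ZMod 2)).card = 2 ^ d := by
    rw [Finset.card_univ, Fintype.card_fun, ZMod.card, ZMod.card]
  have htot : (Finset.univ.filter fun y : ZMod d → ZMod 2 => Odd (ones y)).card
      + (Finset.univ.filter fun y : ZMod d → ZMod 2 => ¬ Odd (ones y)).card = 2 ^ d := by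
    rw [← hcard]
    exact Finset.card_filter_add_card_filter_not (fun y => Odd (ones y))
  have hd1 : 2 ^ d = 2 * 2 ^ (d - 1) := by
    rw [← pow_succ']
    congr 1
    have hd0 : d ≠ 0 := NeZero.ne d
    omega
  rw [← hbij, hd1] at htot
  rw [hbij]
  omega

end OddCount

lemma rot_gcd_iff (k : ZMod M) (x : ZMod M → ZMod 2) :
    rot M k x = x ↔ rot M ((M.gcd k.val : ℕ) : ZMod M) x = x := by
  have hk : ((k.val : ℕ) : ZMod M) = k := ZMod.natCast_rightInverse k
  constructor
  · intro h
    have hmem : k ∈ AddAction.stabilizer (ZMod M) x := h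
    have hz : ((M.gcd k.val : ℕ) : ZMod M) = (Nat.gcdB M k.val) • k := by
      have hbezout : (M.gcd k.val : ℤ) = M * Nat.gcdA M k.val + k.val * Nat.gcdB M k.val :=
        Nat.gcd_eq_gcd_ab M k.val
      calc ((M.gcd k.val : ℕ) : ZMod M)
          = (((M.gcd k.val : ℤ)) : ZMod M) := by push_cast; rfl
        _ = ((M : ℤ) * Nat.gcdA M k.val + (k.val : ℤ) * Nat.gcdB M k.val : ℤ) := by
            rw [hbezout]
        _ = (M : ZMod M) * ((Nat.gcdA M k.val : ℤ) : ZMod M)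
              + ((k.val : ℕ) : ZMod M) * ((Nat.gcdB M k.val : ℤ) : ZMod M) := by
            push_cast; ring
        _ = ((Nat.gcdB M k.val : ℤ) : ZMod M) * k := by
            rw [ZMod.natCast_self, hk]; ring
        _ = Nat.gcdB M k.val • k := (zsmul_eq_mul k _).symm
    rw [hz]
    exact AddSubgroup.zsmul_mem _ hmem _
  · intro h
    have hmem : ((M.gcd k.val : ℕ) : ZMod M) ∈ AddAction.stabilizer (ZMod M) x := h
    have hks : k = (k.val / M.gcd k.val) • ((M.gcd k.val : ℕ) : ZMod M) := by
      rw [nsmul_eq_mul, ← Nat.cast_mul,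
        Nat.div_mul_cancel (Nat.gcd_dvd_right M k.val), hk]
    show k ∈ AddAction.stabilizer (ZMod M) x
    rw [hks]
    exact AddSubgroup.nsmul_mem _ hmem _

lemma card_fixedFerm (k : ZMod M) :
    Nat.card {x : ZMod M → ZMod 2 // rot M k x = x ∧ Fermionic M x}
      = if Odd (M / M.gcd k.val) then 2 ^ (M.gcd k.val - 1) else 0 := by
  classical
  set g := M.gcd k.val with hgdef
  have hgd : g ∣ M := Nat.gcd_dvd_left M k.val
  haveI : NeZero g := ⟨Nat.gcd_ne_zero_left (NeZero.ne M)⟩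
  have e1 : {x : ZMod M → ZMod 2 // rot M k x = x ∧ Fermionic M x}
      ≃ {x : ZMod M → ZMod 2 // rot M (g : ZMod M) x = x ∧ Fermionic M x} :=
    Equiv.subtypeEquivRight (fun x => by rw [rot_gcd_iff])
  have e2 : {x : ZMod M → ZMod 2 // rot M (g : ZMod M) x = x ∧ Fermionic M x}
      ≃ {p : {x : ZMod M → ZMod 2 // rot M (g : ZMod M) x = x} // Fermionic M p.1} :=
    (Equiv.subtypeSubtypeEquivSubtypeInter _ _).symm
  have hferm : ∀ p : {x : ZMod M → ZMod 2 // rot M (g : ZMod M) x = x},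
      Fermionic M p.1 ↔ Odd ((M / g) * ones (fixedEquiv g hgd p)) := by
    intro p
    have h1 := ones_of_fixed g hgd p.1 p.2
    unfold Fermionic
    rw [show (Finset.univ.filter fun i : ZMod M => p.1 i = 1).card = ones p.1 from rfl, h1]
    exact Iff.rfl
  have e3 : {p : {x : ZMod M → ZMod 2 // rot M (g : ZMod M) x = x} // Fermionic M p.1}
      ≃ {y : ZMod g → ZMod 2 // Odd ((M / g) * ones y)} :=
    Equiv.subtypeEquiv (fixedEquiv g hgd) hferm
  rw [Nat.card_congr (e1.trans (e2.trans e3))]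
  by_cases hodd : Odd (M / g)
  · rw [if_pos hodd]
    have e4 : {y : ZMod g → ZMod 2 // Odd ((M / g) * ones y)}
        ≃ {y : ZMod g → ZMod 2 // Odd (ones y)} :=
      Equiv.subtypeEquivRight (fun y => by rw [Nat.odd_mul]; simp [hodd])
    rw [Nat.card_congr e4, Nat.card_eq_fintype_card, Fintype.card_subtype]
    exact card_odd_fun g
  · rw [if_neg hodd]
    haveI : IsEmpty {y : ZMod g → ZMod 2 // Odd ((M / g) * ones y)} :=
      ⟨fun y => hodd (Nat.odd_mul.1 y.2).1⟩
    exact Nat.card_of_isEmpty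

def fixedBy_equiv (k : ZMod M) :
    AddAction.fixedBy {x : ZMod M → ZMod 2 // Fermionic M x} k
      ≃ {x : ZMod M → ZMod 2 // rot M k x = x ∧ Fermionic M x} where
  toFun p := ⟨p.1.1, congrArg Subtype.val p.2, p.1.2⟩
  invFun q := ⟨⟨q.1, q.2.2⟩, Subtype.ext q.2.1⟩
  left_inv p := rfl
  right_inv q := rfl

lemma burnside :
    Nat.card {S : Set (ZMod M → ZMod 2) // ∃ x, Fermionic M x ∧ S = rotOrbit M x} * M
      = ∑ k : ZMod M, (if Odd (M / M.gcd k.val) then 2 ^ (M.gcd k.val - 1) else 0) := by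
  classical
  letI : Fintype {x : ZMod M → ZMod 2 // Fermionic M x} := Fintype.ofFinite _
  letI : ∀ k : ZMod M, Fintype (AddAction.fixedBy {x : ZMod M → ZMod 2 // Fermionic M x} k) :=
    fun k => Fintype.ofFinite _
  letI : Fintype (Quotient (AddAction.orbitRel (ZMod M)
      {x : ZMod M → ZMod 2 // Fermionic M x})) := Fintype.ofFinite _
  have hb := AddAction.sum_card_fixedBy_eq_card_orbits_mul_card_addGroup (ZMod M)
      {x : ZMod M → ZMod 2 // Fermionic M x}
  rw [ZMod.card] at hb
  have hcards : ∀ k : ZMod M,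
      Fintype.card (AddAction.fixedBy {x : ZMod M → ZMod 2 // Fermionic M x} k)
        = if Odd (M / M.gcd k.val) then 2 ^ (M.gcd k.val - 1) else 0 := by
    intro k
    rw [← Nat.card_eq_fintype_card, Nat.card_congr (fixedBy_equiv M k), card_fixedFerm M k]
  have hQ : Nat.card {S : Set (ZMod M → ZMod 2) // ∃ x, Fermionic M x ∧ S = rotOrbit M x}
      = Fintype.card (Quotient (AddAction.orbitRel (ZMod M)
          {x : ZMod M → ZMod 2 // Fermionic M x})) := by
    rw [← Nat.card_eq_fintype_card]
    exact Nat.card_congr (orbitEquiv M).symm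
  rw [hQ, ← Finset.sum_congr rfl (fun k _ => hcards k)]
  exact hb.symm

lemma sum_orders :
    (∑ k : ZMod M, (if Odd (M / M.gcd k.val) then 2 ^ (M.gcd k.val - 1) else 0))
      = ∑ n ∈ M.divisors.filter (fun n => Odd n), Nat.totient n * 2 ^ (M / n - 1) := by
  classical
  have horder : ∀ k : ZMod M, addOrderOf k = M / M.gcd k.val := by
    intro k
    conv_lhs => rw [← (ZMod.natCast_rightInverse k : ((k.val : ℕ) : ZMod M) = k)]
    rw [ZMod.addOrderOf_coe _ (NeZero.ne M)]
  have hgcd : ∀ k : ZMod M, M.gcd k.val = M / addOrderOf k := by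
    intro k
    rw [horder k, Nat.div_div_self (Nat.gcd_dvd_left M k.val) (NeZero.ne M)]
  have hsummand : ∀ k : ZMod M,
      (if Odd (M / M.gcd k.val) then 2 ^ (M.gcd k.val - 1) else 0)
        = (fun n => if Odd n then 2 ^ (M / n - 1) else 0) (addOrderOf k) := by
    intro k
    simp only
    rw [← horder k, hgcd k]
  rw [Finset.sum_congr rfl (fun k _ => hsummand k)]
  have hmaps : ∀ k : ZMod M, k ∈ Finset.univ → addOrderOf k ∈ M.divisors := by
    intro k _
    refine Nat.mem_divisors.mpr ⟨?_, NeZero.ne M⟩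
    have := addOrderOf_dvd_card (x := k)
    rwa [ZMod.card] at this
  rw [← Finset.sum_fiberwise_of_maps_to hmaps]
  have hinner : ∀ n ∈ M.divisors,
      (∑ k ∈ Finset.univ.filter (fun k : ZMod M => addOrderOf k = n),
        (fun m => if Odd m then 2 ^ (M / m - 1) else 0) (addOrderOf k))
        = Nat.totient n * (if Odd n then 2 ^ (M / n - 1) else 0) := by
    intro n hn
    rw [Finset.sum_congr rfl (fun k hk => by
      rw [(Finset.mem_filter.1 hk).2]), Finset.sum_const, smul_eq_mul]
    congr 1
    have hdvd : n ∣ Fintype.card (ZMod M) := by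
      rw [ZMod.card]; exact (Nat.mem_divisors.1 hn).1
    exact IsAddCyclic.card_addOrderOf_eq_totient (α := ZMod M) hdvd
  rw [Finset.sum_congr rfl hinner, Finset.sum_filter]
  refine Finset.sum_congr rfl fun n _ => ?_
  by_cases h : Odd n <;> simp [h]

end FermAux




/-- For every positive integer `M`, the number of orbits of fermionic binary words of
length `M` under the rotation action of the cyclic group `ZMod M` equals
`(1/(2M)) · Σ_{n | M, n odd} φ(n) · 2^(M/n)`. -/
theorem number_of_fermionic_single_trace_states (M : ℕ) [NeZero M] :
    (Nat.card {S : Set (ZMod M → ZMod 2) // ∃ x, Fermionic M x ∧ S = rotOrbit M x} : ℚ)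
      = (1 / (2 * M)) *
        ∑ n ∈ M.divisors.filter (fun n => Odd n),
          (Nat.totient n : ℚ) * 2 ^ (M / n) := by
  classical
  have hb := (FermAux.burnside M).trans (FermAux.sum_orders M)
  set Q := Nat.card {S : Set (ZMod M → ZMod 2) // ∃ x, Fermionic M x ∧ S = rotOrbit M x}
    with hQdef
  have hbQ : (Q : ℚ) * M = ∑ n ∈ M.divisors.filter (fun n => Odd n),
      (Nat.totient n : ℚ) * 2 ^ (M / n - 1) := by
    exact_mod_cast congrArg (Nat.cast : ℕ → ℚ) hb
  have hS : ∑ n ∈ M.divisors.filter (fun n => Odd n),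
      (Nat.totient n : ℚ) * 2 ^ (M / n)
        = 2 * ((Q : ℚ) * M) := by
    rw [hbQ, Finset.mul_sum]
    refine Finset.sum_congr rfl fun n hn => ?_
    obtain ⟨hdvd, -⟩ := Nat.mem_divisors.1 (Finset.mem_filter.1 hn).1
    have hn0 : 0 < n := Nat.pos_of_mem_divisors (Finset.mem_filter.1 hn).1
    have hpos : 0 < M / n :=
      Nat.div_pos (Nat.le_of_dvd (Nat.pos_of_ne_zero (NeZero.ne M)) hdvd) hn0
    rw [show (2 : ℚ) ^ (M / n) = 2 * 2 ^ (M / n - 1) by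
      rw [← pow_succ']
      congr 1
      omega]
    ring
  rw [hS]
  have hM0 : (M : ℚ) ≠ 0 := Nat.cast_ne_zero.mpr (NeZero.ne M)
  field_simp
end

section
/- For every positive integer M, the number of orbits of bosonic binary words of length M under the rotation action of the cyclic group Z/M equals (1/(2M)) · ( Σ_{i | M, i odd} φ(i) · 2^{M/i} + 2 · Σ_{i | M, i even} φ(i) · 2^{M/i} ), where the first sum runs over the odd divisors of M and the second over the even divisors of M. -/
/-- A binary word is bosonic if it contains an even number of ones. -/
def Bosonic (M : ℕ) [NeZero M] (x : ZMod M → ZMod 2) : Prop :=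
  Even (Finset.univ.filter (fun i : ZMod M => x i = 1)).card

lemma rot_rot (M : ℕ) (k l : ZMod M) (x : ZMod M → ZMod 2) :
    rot M k (rot M l x) = rot M (k + l) x := by
  funext i; simp [rot, add_assoc]

lemma rot_zero (M : ℕ) (x : ZMod M → ZMod 2) : rot M 0 x = x := by
  funext i; simp [rot]

lemma weight_rot (M : ℕ) [NeZero M] (k : ZMod M) (x : ZMod M → ZMod 2) :
    (Finset.univ.filter (fun i : ZMod M => rot M k x i = 1)).card
      = (Finset.univ.filter (fun i : ZMod M => x i = 1)).card := by
  apply Finset.card_bij' (fun i _ => i + k) (fun j _ => j - k)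
  · intro i hi
    simpa [rot] using (Finset.mem_filter.mp hi).2
  · intro j hj
    simp only [Finset.mem_filter, Finset.mem_univ, true_and] at hj ⊢
    simpa [rot] using hj
  · intro i _; ring
  · intro j _; ring

lemma bosonic_rot (M : ℕ) [NeZero M] (k : ZMod M) (x : ZMod M → ZMod 2)
    (h : Bosonic M x) : Bosonic M (rot M k x) := by
  unfold Bosonic at *
  rwa [weight_rot]

lemma rotOrbit_eq (M : ℕ) (k : ZMod M) (x : ZMod M → ZMod 2) :
    rotOrbit M (rot M k x) = rotOrbit M x := by
  ext z
  constructor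
  · rintro ⟨l, rfl⟩; exact ⟨l + k, (rot_rot M l k x)⟩
  · rintro ⟨l, rfl⟩
    exact ⟨l - k, by rw [rot_rot, sub_add_cancel]⟩

lemma mem_rotOrbit_self (M : ℕ) (x : ZMod M → ZMod 2) : x ∈ rotOrbit M x :=
  ⟨0, (rot_zero M x).symm⟩

lemma fiber_card (M d : ℕ) [NeZero M] [NeZero d] (hdvd : d ∣ M) (j : ZMod d) :
    (Finset.univ.filter (fun i : ZMod M => ((i.val : ZMod d)) = j)).card = M / d := by
  have hd : 0 < d := Nat.pos_of_ne_zero (NeZero.ne d)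
  have hlt : ∀ q : Fin (M / d), j.val + d * q.val < M := by
    intro q
    have h1 : j.val < d := ZMod.val_lt j
    have h2 : d * (q.val + 1) ≤ d * (M / d) := Nat.mul_le_mul_left d q.isLt
    rw [Nat.mul_div_cancel' hdvd] at h2
    rw [Nat.mul_succ] at h2
    omega
  rw [← Finset.card_fin (M / d)]
  apply Finset.card_bij' (fun i _ => (⟨i.val / d, Nat.div_lt_div_of_lt_of_dvd hdvd i.val_lt⟩ : Fin (M / d)))
    (fun q _ => ((j.val + d * q.val : ℕ) : ZMod M))
  case hi => intro i _; exact Finset.mem_univ _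
  case hj =>
    intro q _
    simp only [Finset.mem_filter, Finset.mem_univ, true_and]
    rw [ZMod.val_natCast_of_lt (hlt q)]
    push_cast
    simp [ZMod.natCast_self, ZMod.natCast_rightInverse j]
  case left_inv =>
    intro i hi
    simp only [Finset.mem_filter, Finset.mem_univ, true_and] at hi
    have hjv : j.val = i.val % d := by
      rw [← hi, ZMod.val_natCast]
    have h : j.val + d * (i.val / d) = i.val := by
      rw [hjv]; exact Nat.mod_add_div _ _
    rw [h, ZMod.natCast_rightInverse i]
  case right_inv =>
    intro q _
    apply Fin.ext
    simp only []
    rw [ZMod.val_natCast_of_lt (hlt q)]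
    have h1 : j.val < d := ZMod.val_lt j
    rw [Nat.add_mul_div_left _ _ hd, Nat.div_eq_of_lt h1]
    simp

lemma weight_comp (M d : ℕ) [NeZero M] [NeZero d] (hdvd : d ∣ M)
    (y : ZMod d → ZMod 2) :
    (Finset.univ.filter (fun i : ZMod M => y ((i.val : ZMod d)) = 1)).card
      = (M / d) * (Finset.univ.filter (fun j : ZMod d => y j = 1)).card := by
  rw [Finset.card_eq_sum_card_fiberwise
    (f := fun i : ZMod M => ((i.val : ZMod d)))
    (t := Finset.univ.filter (fun j : ZMod d => y j = 1))
    (fun i hi => by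
      simp only [Finset.mem_coe, Finset.mem_filter, Finset.mem_univ, true_and] at hi ⊢
      exact hi)]
  have key : ∀ j ∈ Finset.univ.filter (fun j : ZMod d => y j = 1),
      ((Finset.univ.filter (fun i : ZMod M => y ((i.val : ZMod d)) = 1)).filter
        (fun i => ((i.val : ZMod d)) = j)).card = M / d := by
    intro j hj
    simp only [Finset.mem_filter, Finset.mem_univ, true_and] at hj
    rw [Finset.filter_filter]
    have heq : (Finset.univ.filter fun i : ZMod M =>
        y ((i.val : ZMod d)) = 1 ∧ ((i.val : ZMod d)) = j)
        = Finset.univ.filter fun i : ZMod M => ((i.val : ZMod d)) = j := by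
      apply Finset.filter_congr
      intro i _
      constructor
      · rintro ⟨_, h⟩; exact h
      · rintro h; exact ⟨h ▸ hj, h⟩
    rw [heq, fiber_card M d hdvd j]
  rw [Finset.sum_congr rfl key, Finset.sum_const, smul_eq_mul, mul_comm]

lemma zmod2_parity {α : Type*} [Fintype α] [DecidableEq α] (y : α → ZMod 2) :
    (((Finset.univ.filter (fun j : α => y j = 1)).card : ℕ) : ZMod 2) = ∑ j, y j := by
  have h1 : ∑ j, y j = ∑ j ∈ Finset.univ.filter (fun j : α => y j = 1), y j := by
    rw [Finset.sum_filter_of_ne]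
    intro x _ hx
    revert hx
    generalize y x = a
    revert a; decide
  rw [h1, Finset.sum_congr rfl (fun j hj => (Finset.mem_filter.mp hj).2),
    Finset.sum_const, nsmul_eq_mul, mul_one]

lemma even_iff_zmod2 (n : ℕ) : Even n ↔ ((n : ZMod 2) = 0) := by
  rw [ZMod.natCast_eq_zero_iff, even_iff_two_dvd]

lemma even_weight_card (d : ℕ) [NeZero d] :
    (Finset.univ.filter (fun y : ZMod d → ZMod 2 =>
      Even (Finset.univ.filter (fun j : ZMod d => y j = 1)).card)).card = 2 ^ (d - 1) := by
  classical
  set P : (ZMod d → ZMod 2) → Prop := fun y => (∑ j, y j) = 0 with hP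
  have hfilter : (Finset.univ.filter (fun y : ZMod d → ZMod 2 =>
      Even (Finset.univ.filter (fun j : ZMod d => y j = 1)).card))
      = Finset.univ.filter P := by
    apply Finset.filter_congr
    intro y _
    rw [even_iff_zmod2, zmod2_parity]
  rw [hfilter]
  set δ : ZMod d → ZMod 2 := Pi.single (0 : ZMod d) 1 with hδ
  have hδsum : (∑ j, δ j) = 1 := by
    rw [hδ]
    simp [Finset.sum_pi_single']
  have hδδ : ∀ y : ZMod d → ZMod 2, (y + δ) + δ = y := by
    intro y; funext j
    simp only [Pi.add_apply]
    generalize y j = a; generalize δ j = b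
    revert a b; decide
  have hsum : ∀ y : ZMod d → ZMod 2, (∑ j, (y + δ) j) = (∑ j, y j) + 1 := by
    intro y
    simp only [Pi.add_apply]
    rw [Finset.sum_add_distrib, hδsum]
  have hcards : (Finset.univ.filter P).card
      = (Finset.univ.filter (fun y => ¬ P y)).card := by
    apply Finset.card_nbij' (fun y => y + δ) (fun y => y + δ)
    · intro y hy
      simp only [Finset.mem_coe, Finset.mem_filter, Finset.mem_univ, true_and, hP] at hy ⊢
      rw [hsum, hy]
      decide
    · intro y hy
      simp only [Finset.mem_coe, Finset.mem_filter, Finset.mem_univ, true_and, hP] at hy ⊢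
      rw [hsum]
      revert hy
      generalize (∑ j, y j) = a
      revert a; decide
    · intro y _; exact hδδ y
    · intro y _; exact hδδ y
  have htot : (Finset.univ.filter P).card + (Finset.univ.filter (fun y => ¬ P y)).card
      = 2 ^ d := by
    rw [Finset.card_filter_add_card_filter_not, Finset.card_univ]
    rw [Fintype.card_fun, ZMod.card, ZMod.card]
  have hd : 0 < d := Nat.pos_of_ne_zero (NeZero.ne d)
  have h2 : 2 ^ d = 2 * 2 ^ (d - 1) := by
    rw [← pow_succ']
    congr 1
    omega
  omega



lemma fix_zsmul (M : ℕ) (k : ZMod M) (x : ZMod M → ZMod 2)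
    (hfix : rot M k x = x) : ∀ (m : ℤ) (a : ZMod M), x (a + m • k) = x a := by
  have hstep : ∀ b : ZMod M, x (b + k) = x b := fun b => congrFun hfix b
  intro m
  induction m using Int.induction_on with
  | zero => simp
  | succ n ih =>
      intro a
      have h : a + ((n : ℤ) + 1) • k = (a + (n : ℤ) • k) + k := by
        rw [add_smul, one_smul]; ring
      rw [h, hstep, ih]
  | pred n ih =>
      intro a
      have h : a + (-(n : ℤ)) • k = (a + (-(n : ℤ) - 1) • k) + k := by
        rw [sub_smul, one_smul]; ring
      have h2 := hstep (a + (-(n : ℤ) - 1) • k)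
      rw [← h, ih] at h2
      rw [h2]

lemma gcd_cast (M : ℕ) [NeZero M] (k : ZMod M) :
    ((Nat.gcd k.val M : ℕ) : ZMod M) = (Nat.gcdA k.val M : ZMod M) * k := by
  have h := Nat.gcd_eq_gcd_ab k.val M
  have h2 := congrArg (fun z : ℤ => (z : ZMod M)) h
  push_cast at h2
  rw [ZMod.natCast_self, zero_mul, add_zero, ZMod.natCast_rightInverse k] at h2
  rw [h2, mul_comm]

lemma fix_mod (M : ℕ) [NeZero M] (k : ZMod M) (x : ZMod M → ZMod 2)
    (hfix : rot M k x = x) (i : ZMod M) :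
    x i = x ((i.val % Nat.gcd k.val M : ℕ) : ZMod M) := by
  set d := Nat.gcd k.val M with hd
  have h1 : ((i.val % d : ℕ) : ZMod M) + ((d * (i.val / d) : ℕ) : ZMod M) = i := by
    rw [← Nat.cast_add, Nat.mod_add_div]
    exact ZMod.natCast_rightInverse i
  have h3 : ((d * (i.val / d) : ℕ) : ZMod M)
      = (Nat.gcdA k.val M * ((i.val / d : ℕ) : ℤ)) • k := by
    rw [zsmul_eq_mul, Nat.cast_mul, hd, gcd_cast M k, Int.cast_mul, Int.cast_natCast]
    ring
  conv_lhs => rw [← h1]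
  rw [h3, fix_zsmul M k x hfix]

lemma fixed_count (M : ℕ) [NeZero M] (k : ZMod M) :
    Nat.card {x : ZMod M → ZMod 2 // rot M k x = x ∧ Bosonic M x}
      = if Even (M / Nat.gcd k.val M) then 2 ^ (Nat.gcd k.val M)
        else 2 ^ (Nat.gcd k.val M - 1) := by
  classical
  set d := Nat.gcd k.val M with hd
  have hdvd : d ∣ M := Nat.gcd_dvd_right _ _
  have hdpos : 0 < d := Nat.gcd_pos_of_pos_right _ (Nat.pos_of_ne_zero (NeZero.ne M))
  haveI : NeZero d := ⟨hdpos.ne'⟩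
  have hdM : d ≤ M := Nat.le_of_dvd (Nat.pos_of_ne_zero (NeZero.ne M)) hdvd
  have hπ : ∀ a : ZMod M, ((a.val : ZMod d)) = ZMod.castHom hdvd (ZMod d) a := by
    intro a
    rw [ZMod.natCast_val, ZMod.castHom_apply]
  have key : ∀ (y : ZMod d → ZMod 2),
      rot M k (fun i => y ((i.val : ZMod d))) = (fun i => y ((i.val : ZMod d))) := by
    intro y
    funext i
    simp only [rot]
    congr 1
    rw [hπ, hπ, map_add]
    have hk0 : ZMod.castHom hdvd (ZMod d) k = 0 := by
      rw [← hπ, ZMod.natCast_eq_zero_iff]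
      exact Nat.gcd_dvd_left _ _
    rw [hk0, add_zero]
  have hback : ∀ (x : ZMod M → ZMod 2) (_ : rot M k x = x) (i : ZMod M),
      x ((((i.val : ZMod d)).val : ℕ) : ZMod M) = x i := by
    intro x hx i
    rw [ZMod.val_natCast]
    exact (fix_mod M k x hx i).symm
  have hfwd : ∀ (j : ZMod d), (((((j.val : ℕ) : ZMod M)).val : ZMod d)) = j := by
    intro j
    rw [ZMod.val_natCast, Nat.mod_eq_of_lt (lt_of_lt_of_le (ZMod.val_lt j) hdM),
      ZMod.natCast_rightInverse j]
  let e : {x : ZMod M → ZMod 2 // rot M k x = x ∧ Bosonic M x} ≃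
      {y : ZMod d → ZMod 2 //
        Even ((M / d) * (Finset.univ.filter (fun j : ZMod d => y j = 1)).card)} :=
    { toFun := fun x => ⟨fun j => x.1 ((j.val : ℕ) : ZMod M), by
        obtain ⟨x, hx, hb⟩ := x
        set y : ZMod d → ZMod 2 := fun j => x ((j.val : ℕ) : ZMod M) with hy
        have hxy : ∀ i : ZMod M, y ((i.val : ZMod d)) = x i := by
          intro i
          rw [hy]
          exact hback x hx i
        have hw := weight_comp M d hdvd y
        rw [show (Finset.univ.filter (fun i : ZMod M => y ((i.val : ZMod d)) = 1))
            = (Finset.univ.filter (fun i : ZMod M => x i = 1)) from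
          Finset.filter_congr (fun i _ => by rw [hxy i])] at hw
        rw [← hw]
        exact hb⟩,
      invFun := fun y => ⟨fun i => y.1 ((i.val : ZMod d)), by
        obtain ⟨y, hy⟩ := y
        refine ⟨key y, ?_⟩
        unfold Bosonic
        rw [weight_comp M d hdvd y]
        exact hy⟩,
      left_inv := fun x => by
        apply Subtype.ext
        funext i
        exact hback x.1 x.2.1 i,
      right_inv := fun y => by
        apply Subtype.ext
        funext j
        simp only []
        rw [hfwd j] }
  rw [Nat.card_congr e]
  by_cases hpar : Even (M / d)
  · rw [if_pos hpar]
    have hall : ∀ y : ZMod d → ZMod 2,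
        Even ((M / d) * (Finset.univ.filter (fun j : ZMod d => y j = 1)).card) :=
      fun y => hpar.mul_right _
    rw [Nat.card_congr (Equiv.subtypeUnivEquiv hall)]
    rw [Nat.card_eq_fintype_card, Fintype.card_fun, ZMod.card, ZMod.card]
  · rw [if_neg hpar]
    have hiff : ∀ y : ZMod d → ZMod 2,
        (Even ((M / d) * (Finset.univ.filter (fun j : ZMod d => y j = 1)).card)
          ↔ Even (Finset.univ.filter (fun j : ZMod d => y j = 1)).card) := by
      intro y
      rw [Nat.even_mul]
      tauto
    rw [Nat.card_congr (Equiv.subtypeEquivRight hiff)]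
    rw [Nat.card_eq_fintype_card, Fintype.card_subtype]
    exact even_weight_card d
instance rotAddAction (M : ℕ) [NeZero M] :
    AddAction (ZMod M) {x : ZMod M → ZMod 2 // Bosonic M x} where
  vadd k x := ⟨rot M k x.1, bosonic_rot M k x.1 x.2⟩
  zero_vadd x := Subtype.ext (rot_zero M x.1)
  add_vadd k l x := Subtype.ext (rot_rot M k l x.1).symm

/-- For every positive integer `M`, the number of orbits of bosonic binary words of
length `M` under the rotation action of the cyclic group `ZMod M` equals
`(1/(2M)) · ( Σ_{i | M, i odd} φ(i) · 2^(M/i) + 2 · Σ_{i | M, i even} φ(i) · 2^(M/i) )`. -/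
theorem number_of_even_b_states (M : ℕ) [NeZero M] :
    (Nat.card {S : Set (ZMod M → ZMod 2) // ∃ x, Bosonic M x ∧ S = rotOrbit M x} : ℚ)
      = (1 / (2 * M)) *
        ((∑ i ∈ M.divisors.filter (fun i => Odd i),
            (Nat.totient i : ℚ) * 2 ^ (M / i))
          + 2 * ∑ i ∈ M.divisors.filter (fun i => Even i),
            (Nat.totient i : ℚ) * 2 ^ (M / i)) := by
  classical
  have hM : 0 < M := Nat.pos_of_ne_zero (NeZero.ne M)
  set B := {x : ZMod M → ZMod 2 // Bosonic M x} with hB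
  letI : Fintype B := Fintype.ofFinite B
  letI : ∀ k : ZMod M, Fintype (AddAction.fixedBy B k) := fun k => Fintype.ofFinite _
  letI : Fintype (AddAction.orbitRel.Quotient (ZMod M) B) := Fintype.ofFinite _
  -- Step 1: orbit sets are in bijection with the orbit quotient
  have hcardT : Nat.card {S : Set (ZMod M → ZMod 2) // ∃ x, Bosonic M x ∧ S = rotOrbit M x}
      = Nat.card (AddAction.orbitRel.Quotient (ZMod M) B) := by
    symm
    apply Nat.card_congr
    refine Equiv.ofBijective
      (Quotient.lift
        (fun b : B => (⟨rotOrbit M b.1, b.1, b.2, rfl⟩ :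
          {S : Set (ZMod M → ZMod 2) // ∃ x, Bosonic M x ∧ S = rotOrbit M x}))
        ?_) ⟨?_, ?_⟩
    · rintro b c hbc
      have hbc' : b ∈ AddAction.orbit (ZMod M) c := hbc
      obtain ⟨k, hk⟩ := hbc'
      apply Subtype.ext
      have hk1 : b.1 = rot M k c.1 := congrArg Subtype.val hk.symm
      simp only
      rw [hk1, rotOrbit_eq]
    · intro q1 q2
      induction q1 using Quotient.ind with | _ b =>
      induction q2 using Quotient.ind with | _ c =>
      intro h
      have h2 : rotOrbit M b.1 = rotOrbit M c.1 := congrArg Subtype.val h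
      have h3 : b.1 ∈ rotOrbit M c.1 := h2 ▸ mem_rotOrbit_self M b.1
      obtain ⟨k, hk⟩ := h3
      exact Quotient.sound (show b ∈ AddAction.orbit (ZMod M) c from ⟨k, Subtype.ext hk.symm⟩)
    · rintro ⟨S, x, hbx, rfl⟩
      exact ⟨Quotient.mk _ ⟨x, hbx⟩, rfl⟩
  -- Step 2: Burnside
  have hburn := AddAction.sum_card_fixedBy_eq_card_orbits_mul_card_addGroup (ZMod M) B
  -- Step 3: identify fixed point counts
  have hfix : ∀ k : ZMod M, Fintype.card (AddAction.fixedBy B k)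
      = if Even (M / Nat.gcd k.val M) then 2 ^ (Nat.gcd k.val M)
        else 2 ^ (Nat.gcd k.val M - 1) := by
    intro k
    rw [← fixed_count M k, ← Nat.card_eq_fintype_card]
    apply Nat.card_congr
    exact
      { toFun := fun b => ⟨b.1.1, Subtype.ext_iff.mp b.2, b.1.2⟩
        invFun := fun x => ⟨⟨x.1, x.2.2⟩, Subtype.ext x.2.1⟩
        left_inv := fun b => by apply Subtype.ext; apply Subtype.ext; rfl
        right_inv := fun x => by apply Subtype.ext; rfl }
  set N : ℕ → ℕ := fun d => if Even (M / d) then 2 ^ d else 2 ^ (d - 1) with hN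
  have hburn2 : Nat.card (AddAction.orbitRel.Quotient (ZMod M) B) * M
      = ∑ k : ZMod M, N (Nat.gcd k.val M) := by
    calc Nat.card (AddAction.orbitRel.Quotient (ZMod M) B) * M
        = Fintype.card (Quotient (AddAction.orbitRel (ZMod M) B)) * Fintype.card (ZMod M) := by
          rw [Nat.card_eq_fintype_card, ZMod.card]
      _ = ∑ a : ZMod M, Fintype.card (AddAction.fixedBy B a) := hburn.symm
      _ = ∑ k : ZMod M, N (Nat.gcd k.val M) := Finset.sum_congr rfl fun k _ => hfix k
  -- Step 4: reindex the sum over ZMod M as a sum over range M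
  have hsum1 : ∑ k : ZMod M, N (Nat.gcd k.val M) = ∑ m ∈ Finset.range M, N (Nat.gcd M m) := by
    apply Finset.sum_nbij' (i := fun k : ZMod M => k.val) (j := fun m : ℕ => (m : ZMod M))
    · intro k _
      exact Finset.mem_range.mpr (ZMod.val_lt k)
    · intro m _
      exact Finset.mem_univ _
    · intro k _
      exact ZMod.natCast_rightInverse k
    · intro m hm
      exact ZMod.val_natCast_of_lt (Finset.mem_range.mp hm)
    · intro k _
      rw [Nat.gcd_comm]
  -- Step 5: group by gcd
  have hsum2 : ∑ m ∈ Finset.range M, N (Nat.gcd M m)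
      = ∑ d ∈ M.divisors, Nat.totient (M / d) * N d := by
    rw [← Finset.sum_fiberwise_of_maps_to (g := fun m => Nat.gcd M m)
      (t := M.divisors) (fun m _ => Nat.mem_divisors.mpr ⟨Nat.gcd_dvd_left _ _, hM.ne'⟩)]
    apply Finset.sum_congr rfl
    intro d hd
    have hdvd : d ∣ M := (Nat.mem_divisors.mp hd).1
    rw [Nat.totient_div_of_dvd hdvd]
    rw [Finset.sum_congr rfl (fun m hm => by
      rw [(Finset.mem_filter.mp hm).2]), Finset.sum_const, smul_eq_mul]
  -- Step 6: reindex divisors d ↦ M / d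
  have hsum3 : ∑ d ∈ M.divisors, Nat.totient (M / d) * N d
      = ∑ i ∈ M.divisors, Nat.totient i * N (M / i) := by
    rw [← Nat.sum_div_divisors M (fun i => Nat.totient i * N (M / i))]
    apply Finset.sum_congr rfl
    intro d hd
    rw [Nat.div_div_self (Nat.mem_divisors.mp hd).1 hM.ne']
  have hmain : Nat.card (AddAction.orbitRel.Quotient (ZMod M) B) * M
      = ∑ i ∈ M.divisors, Nat.totient i * N (M / i) := by
    rw [hburn2, hsum1, hsum2, hsum3]
  -- Step 7: rational arithmetic
  have hNq : ∀ i ∈ M.divisors, ((Nat.totient i * N (M / i) : ℕ) : ℚ)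
      = (Nat.totient i : ℚ) * (if Even i then 2 ^ (M / i) else 2 ^ (M / i) / 2) := by
    intro i hi
    obtain ⟨hidvd, _⟩ := Nat.mem_divisors.mp hi
    have hipos : 0 < i := Nat.pos_of_mem_divisors hi
    have hMi : 0 < M / i := Nat.div_pos (Nat.le_of_dvd hM hidvd) hipos
    have hii : M / (M / i) = i := Nat.div_div_self hidvd hM.ne'
    rw [hN]
    simp only [hii]
    split_ifs with h
    · push_cast; ring
    · have h2 : (2 : ℚ) ^ (M / i) = 2 ^ (M / i - 1) * 2 := by
        rw [← pow_succ]
        congr 1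
        omega
      push_cast
      rw [h2]
      field_simp
  have hcast : (Nat.card (AddAction.orbitRel.Quotient (ZMod M) B) : ℚ) * M
      = ∑ i ∈ M.divisors, (Nat.totient i : ℚ) *
          (if Even i then 2 ^ (M / i) else 2 ^ (M / i) / 2) := by
    have := congrArg (fun n : ℕ => (n : ℚ)) hmain
    push_cast at this
    rw [this]
    rw [← Finset.sum_congr rfl hNq]
    push_cast
    rfl
  -- split the divisor sum into odd and even parts
  have hsplit : ∑ i ∈ M.divisors, (Nat.totient i : ℚ) *
          (if Even i then 2 ^ (M / i) else 2 ^ (M / i) / 2)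
      = (∑ i ∈ M.divisors.filter (fun i => Odd i),
            (Nat.totient i : ℚ) * 2 ^ (M / i)) / 2
        + ∑ i ∈ M.divisors.filter (fun i => Even i),
            (Nat.totient i : ℚ) * 2 ^ (M / i) := by
    rw [← Finset.sum_filter_add_sum_filter_not M.divisors (fun i => Odd i)]
    congr 1
    · rw [Finset.sum_div]
      apply Finset.sum_congr rfl
      intro i hi
      have hodd : Odd i := (Finset.mem_filter.mp hi).2
      rw [if_neg (Nat.not_even_iff_odd.mpr hodd), mul_div_assoc]
    · rw [Finset.filter_congr (fun i _ => by rw [Nat.not_odd_iff_even])]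
      apply Finset.sum_congr rfl
      intro i hi
      rw [if_pos (Finset.mem_filter.mp hi).2]
  rw [hcardT]
  have hMQ : (M : ℚ) ≠ 0 := Nat.cast_ne_zero.mpr hM.ne'
  rw [hsplit] at hcast
  field_simp at hcast ⊢
  linarith [hcast]
end

section
/- For every positive integer M, the number of orbits of vanishing binary words of length M under the rotation action of the cyclic group Z/M equals (1/M) · Σ_{i | M, i even} φ(i) · 2^{M/i}, where the sum runs over the even divisors i of M. -/
set_option linter.unusedSectionVars false

/-- A binary word `x` of length `M` is vanishing if there is a divisor `d` of `M` with
`M/d` even such that `x` is `d`-periodic and the block `(x 0, …, x (d-1))` contains an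
odd number of ones. -/
def Vanishing (M : ℕ) (x : ZMod M → ZMod 2) : Prop :=
  ∃ d : ℕ, d ∣ M ∧ Even (M / d) ∧ (∀ i : ZMod M, x (i + (d : ZMod M)) = x i) ∧
    Odd ((Finset.range d).filter (fun j : ℕ => x ((j : ZMod M)) = 1)).card

namespace VanAux

open Finset

variable {M : ℕ} [NeZero M]

/-- `d`-periodicity. -/
def Per (M d : ℕ) (x : ZMod M → ZMod 2) : Prop := ∀ i, x (i + (d : ZMod M)) = x i

/-- number of ones in the window `[0,d)`. -/
def cnt (M d : ℕ) (x : ZMod M → ZMod 2) : ℕ :=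
  ((Finset.range d).filter (fun j : ℕ => x ((j : ZMod M)) = 1)).card

instance (d : ℕ) : DecidablePred (Per M d) := fun x => by unfold Per; infer_instance

lemma Per.mul {d : ℕ} {x : ZMod M → ZMod 2} (h : Per M d x) (a : ℕ) : Per M (a * d) x := by
  induction a with
  | zero => intro i; simp
  | succ n ih => intro i; have := ih i; push_cast at this ⊢
                 rw [add_mul, one_mul, ← add_assoc]; rw [h (i + n * d)] at *; exact this

lemma Per.of_dvd {d e : ℕ} {x : ZMod M → ZMod 2} (h : Per M d x) (hde : d ∣ e) : Per M e x := by
  obtain ⟨a, rfl⟩ := hde; rw [mul_comm]; exact h.mul a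

lemma Per.natCast_mod {d : ℕ} (hd : 0 < d) {x : ZMod M → ZMod 2} (h : Per M d x) (a : ℕ) :
    x ((a : ZMod M)) = x (((a % d : ℕ) : ZMod M)) := by
  conv_lhs => rw [← Nat.mod_add_div a d]
  have := (h.mul (a / d)) ((a % d : ℕ) : ZMod M)
  push_cast at this ⊢
  rw [mul_comm ((a / d : ℕ) : ZMod M)] at this
  exact this

lemma Per.val_mod {d : ℕ} (hd : 0 < d) {x : ZMod M → ZMod 2} (h : Per M d x) (i : ZMod M) :
    x i = x (((i.val % d : ℕ) : ZMod M)) := by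
  conv_lhs => rw [← ZMod.natCast_zmod_val i]
  exact h.natCast_mod hd i.val

lemma cnt_add {s d : ℕ} {x : ZMod M → ZMod 2} (h : Per M d x) (hds : d ∣ s) :
    cnt M (s + d) x = cnt M s x + cnt M d x := by
  unfold cnt
  rw [Finset.range_add, filter_union, Finset.filter_map, card_union_of_disjoint, card_map]
  · congr 1
    apply Finset.card_nbij' (fun j => j) (fun j => j) <;> intro a ha <;>
      simp only [mem_coe, mem_filter, mem_range, Function.comp_apply, addLeftEmbedding_apply] at * <;>
      refine ⟨ha.1, ?_⟩
    · have hp : Per M s x := h.of_dvd hds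
      have : ((s + a : ℕ) : ZMod M) = ((a : ℕ) : ZMod M) + ((s : ℕ) : ZMod M) := by push_cast; ring
      rw [this, hp] at ha
      exact ha.2
    · have hp : Per M s x := h.of_dvd hds
      have : ((s + a : ℕ) : ZMod M) = ((a : ℕ) : ZMod M) + ((s : ℕ) : ZMod M) := by push_cast; ring
      rw [this, hp]
      exact ha.2
  · simp only [disjoint_left, mem_filter, mem_range, Finset.mem_map, addLeftEmbedding_apply]
    rintro a ⟨ha, -⟩ ⟨b, -, rfl⟩
    omega

/-- counting over a multiple window. -/
lemma cnt_mul {d : ℕ} {x : ZMod M → ZMod 2} (h : Per M d x) (a : ℕ) :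
    cnt M (a * d) x = a * cnt M d x := by
  induction a with
  | zero => simp [cnt]
  | succ n ih =>
    rw [Nat.succ_mul, cnt_add h (dvd_mul_left d n), ih, Nat.succ_mul]

lemma odd_cnt_iff {d e : ℕ} (hd : 0 < d) (hde : d ∣ e) {x : ZMod M → ZMod 2} (h : Per M d x) :
    Odd (cnt M e x) ↔ Odd (e / d) ∧ Odd (cnt M d x) := by
  obtain ⟨a, rfl⟩ := hde
  rw [mul_comm, cnt_mul h, Nat.mul_div_cancel _ hd, Nat.odd_mul]

lemma val_add_cast_mod {c : ℕ} (hcM : c ∣ M) (i : ZMod M) :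
    ((i + (c : ZMod M)).val) % c = i.val % c := by
  rw [ZMod.val_add, Nat.mod_mod_of_dvd _ hcM, ZMod.val_natCast, Nat.add_mod,
    Nat.mod_mod_of_dvd c hcM, Nat.mod_self, add_zero, Nat.mod_mod_of_dvd _ (dvd_refl c)]

lemma cast_val_lt {c j : ℕ} (hc : 0 < c) (hcM : c ∣ M) (hj : j < c) :
    ((j : ZMod M)).val = j := by
  apply ZMod.val_cast_of_lt
  exact lt_of_lt_of_le hj (Nat.le_of_dvd (Nat.pos_of_ne_zero (NeZero.ne M)) hcM)

/-- number of `c`-periodic words is `2 ^ c`. -/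
lemma card_per {c : ℕ} (hc : 0 < c) (hcM : c ∣ M) :
    (univ.filter (fun x : ZMod M → ZMod 2 => Per M c x)).card = 2 ^ c := by
  have h2 : (univ : Finset (Fin c → ZMod 2)).card = 2 ^ c := by
    simp [Fintype.card_fun]
  rw [← h2]
  apply Finset.card_nbij' (i := fun (x : ZMod M → ZMod 2) (j : Fin c) => x ((j : ℕ) : ZMod M))
    (j := fun (y : Fin c → ZMod 2) (i : ZMod M) => y ⟨i.val % c, Nat.mod_lt _ hc⟩)
  · intro a _; exact mem_univ _
  · intro y _
    simp only [mem_coe, mem_filter, mem_univ, true_and]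
    intro i
    have : ((i + (c : ZMod M)).val) % c = i.val % c := val_add_cast_mod hcM i
    simp only [this]
  · intro x hx
    simp only [mem_coe, mem_filter, mem_univ, true_and] at hx
    funext i
    exact (hx.val_mod hc i).symm
  · intro y _
    funext j
    have : (⟨((j : ℕ) : ZMod M).val % c, Nat.mod_lt _ hc⟩ : Fin c) = j := by
      apply Fin.ext
      show ((j : ℕ) : ZMod M).val % c = (j : ℕ)
      rw [cast_val_lt hc hcM j.isLt, Nat.mod_eq_of_lt j.isLt]
    show y ⟨((j : ℕ) : ZMod M).val % c, Nat.mod_lt _ hc⟩ = y j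
    rw [this]

lemma flip_parity {c : ℕ} (hc : 0 < c) (hcM : c ∣ M) (x : ZMod M → ZMod 2) :
    Odd (cnt M c (x + (fun i => if i.val % c = 0 then (1 : ZMod 2) else 0)))
      ↔ ¬ Odd (cnt M c x) := by
  set e : ZMod M → ZMod 2 := fun i => if i.val % c = 0 then (1 : ZMod 2) else 0 with he
  have hsplit : Finset.range c = insert 0 (Finset.Ico 1 c) := by
    ext j; simp only [mem_range, Finset.mem_insert, Finset.mem_Ico]; omega
  have key : ∀ z : ZMod M → ZMod 2, cnt M c z
      = (if z ((0:ℕ) : ZMod M) = 1 then 1 else 0)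
        + ((Finset.Ico 1 c).filter (fun j : ℕ => z ((j : ZMod M)) = 1)).card := by
    intro z
    unfold cnt
    rw [hsplit, filter_insert]
    by_cases hz : z ((0 : ℕ) : ZMod M) = 1
    · rw [if_pos hz, if_pos hz, card_insert_of_notMem (by simp), add_comm]
    · rw [if_neg hz, if_neg hz, zero_add]
  have he0 : ∀ j ∈ Finset.Ico 1 c, e ((j : ℕ) : ZMod M) = 0 := by
    intro j hj
    simp only [Finset.mem_Ico] at hj
    have hv : ((j : ZMod M)).val = j := cast_val_lt hc hcM hj.2
    show (if ((j : ZMod M)).val % c = 0 then (1 : ZMod 2) else 0) = 0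
    rw [hv, Nat.mod_eq_of_lt hj.2]
    exact if_neg (by omega)
  have hsame : (Finset.Ico 1 c).filter (fun j : ℕ => (x + e) ((j : ZMod M)) = 1)
      = (Finset.Ico 1 c).filter (fun j : ℕ => x ((j : ZMod M)) = 1) := by
    apply filter_congr
    intro j hj
    rw [Pi.add_apply, he0 j hj, add_zero]
  have he1 : e ((0 : ℕ) : ZMod M) = 1 := by
    show (if ((0 : ℕ) : ZMod M).val % c = 0 then (1 : ZMod 2) else 0) = 1
    rw [Nat.cast_zero, ZMod.val_zero, Nat.zero_mod, if_pos rfl]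
  rw [key (x + e), key x, hsame, Pi.add_apply, he1]
  rcases (show ∀ a : ZMod 2, a = 0 ∨ a = 1 by decide) (x ((0 : ℕ) : ZMod M)) with h0 | h0 <;>
      rw [h0]
  · rw [if_pos (by decide), if_neg (by decide), Nat.odd_iff, Nat.odd_iff]
    omega
  · rw [if_neg (by decide), if_pos rfl, Nat.odd_iff, Nat.odd_iff]
    omega

/-- number of `c`-periodic words with odd window count is `2 ^ (c-1)`. -/
lemma card_per_odd {c : ℕ} (hc : 0 < c) (hcM : c ∣ M) :
    (univ.filter (fun x : ZMod M → ZMod 2 => Per M c x ∧ Odd (cnt M c x))).card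
      = 2 ^ (c - 1) := by
  set e : ZMod M → ZMod 2 := fun i => if i.val % c = 0 then (1 : ZMod 2) else 0 with he
  have hePer : Per M c e := by
    intro i
    show (if (i + (c : ZMod M)).val % c = 0 then (1 : ZMod 2) else 0) = _
    rw [val_add_cast_mod hcM i]
  have hinv : ∀ x : ZMod M → ZMod 2, x + e + e = x := by
    intro x
    funext i
    have : ∀ a b : ZMod 2, a + b + b = a := by decide
    simp only [Pi.add_apply, this]
  have hbij : (univ.filter (fun x : ZMod M → ZMod 2 => Per M c x ∧ Odd (cnt M c x))).card
      = (univ.filter (fun x : ZMod M → ZMod 2 => Per M c x ∧ ¬ Odd (cnt M c x))).card := by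
    apply Finset.card_nbij' (i := fun x => x + e) (j := fun x => x + e)
    · intro x hx
      simp only [mem_coe, mem_filter, mem_univ, true_and] at *
      refine ⟨fun i => by rw [Pi.add_apply, Pi.add_apply, hx.1 i, hePer i], ?_⟩
      exact fun ho => (flip_parity hc hcM x).mp ho hx.2
    · intro x hx
      simp only [mem_coe, mem_filter, mem_univ, true_and] at *
      refine ⟨fun i => by rw [Pi.add_apply, Pi.add_apply, hx.1 i, hePer i], ?_⟩
      exact (flip_parity hc hcM x).mpr hx.2
    · intro x _; exact hinv x
    · intro x _; exact hinv x
  have hu : (univ.filter (fun x : ZMod M → ZMod 2 => Per M c x ∧ Odd (cnt M c x))).card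
      + (univ.filter (fun x : ZMod M → ZMod 2 => Per M c x ∧ ¬ Odd (cnt M c x))).card
      = 2 ^ c := by
    rw [← card_per hc hcM (M := M), ← filter_filter, ← filter_filter,
      card_filter_add_card_filter_not]
  have h2 : 2 ^ c = 2 * 2 ^ (c - 1) := by
    conv_lhs => rw [show c = (c - 1) + 1 by omega]
    rw [pow_succ]
    ring
  omega


lemma per_gcd {a b : ℕ} {x : ZMod M → ZMod 2} (ha : Per M a x) (hb : Per M b x) :
    Per M (Nat.gcd a b) x := by
  let S : AddSubgroup (ZMod M) :=
    { carrier := {s | ∀ i, x (i + s) = x i}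
      zero_mem' := by intro i; simp
      add_mem' := by
        intro s t hs ht i
        rw [← add_assoc, ht (i + s)]
        exact hs i
      neg_mem' := by
        intro s hs i
        have h := hs (i + -s)
        rw [add_assoc, neg_add_cancel, add_zero] at h
        exact h.symm }
  have haS : ((a : ℕ) : ZMod M) ∈ S := ha
  have hbS : ((b : ℕ) : ZMod M) ∈ S := hb
  have hg : ((Nat.gcd a b : ℕ) : ZMod M)
      = (Nat.gcdA a b) • ((a : ℕ) : ZMod M) + (Nat.gcdB a b) • ((b : ℕ) : ZMod M) := by
    have h := Nat.gcd_eq_gcd_ab a b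
    have h2 : ((Nat.gcd a b : ℤ) : ZMod M)
        = (((a : ℤ) * Nat.gcdA a b + (b : ℤ) * Nat.gcdB a b : ℤ) : ZMod M) := by
      rw [← h]
    push_cast at h2
    rw [h2, zsmul_eq_mul, zsmul_eq_mul]
    ring
  have : ((Nat.gcd a b : ℕ) : ZMod M) ∈ S := by
    rw [hg]
    exact S.add_mem (S.zsmul_mem haS _) (S.zsmul_mem hbS _)
  exact this

lemma rot_eq_iff_per {k : ZMod M} {x : ZMod M → ZMod 2} :
    rot M k x = x ↔ Per M k.val x := by
  constructor
  · intro h i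
    have := congrFun h i
    rwa [ZMod.natCast_zmod_val]
  · intro h
    funext i
    have := h i
    rwa [ZMod.natCast_zmod_val] at this

lemma fix_per_iff {e : ℕ} (heM : e ∣ M) (k : ZMod M) (x : ZMod M → ZMod 2) :
    (Per M e x ∧ rot M k x = x) ↔ Per M (Nat.gcd k.val e) x := by
  rw [rot_eq_iff_per]
  constructor
  · rintro ⟨hpe, hpk⟩
    exact per_gcd hpk hpe
  · intro hg
    exact ⟨hg.of_dvd (Nat.gcd_dvd_right _ _), hg.of_dvd (Nat.gcd_dvd_left _ _)⟩

lemma card_per_odd_window {e c : ℕ} (hc : 0 < c) (hce : c ∣ e) (heM : e ∣ M) :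
    (univ.filter (fun x : ZMod M → ZMod 2 => Per M c x ∧ Odd (cnt M e x))).card
      = if Odd (e / c) then 2 ^ (c - 1) else 0 := by
  by_cases ho : Odd (e / c)
  · rw [if_pos ho, ← card_per_odd hc (dvd_trans hce heM)]
    apply congrArg
    apply filter_congr
    intro x _
    constructor
    · rintro ⟨h1, h2⟩
      exact ⟨h1, ((odd_cnt_iff hc hce h1).mp h2).2⟩
    · rintro ⟨h1, h2⟩
      exact ⟨h1, (odd_cnt_iff hc hce h1).mpr ⟨ho, h2⟩⟩
  · rw [if_neg ho, Finset.card_eq_zero, Finset.filter_eq_empty_iff]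
    rintro x _ ⟨h1, h2⟩
    exact ho ((odd_cnt_iff hc hce h1).mp h2).1

lemma sum_zmod_val (g : ℕ → ℕ) : ∑ k : ZMod M, g k.val = ∑ r ∈ range M, g r := by
  apply Finset.sum_nbij' (i := fun k : ZMod M => k.val) (j := fun r : ℕ => (r : ZMod M))
  · intro k _
    exact mem_range.mpr (ZMod.val_lt k)
  · intro r _
    exact mem_univ _
  · intro k _
    exact ZMod.natCast_zmod_val k
  · intro r hr
    exact ZMod.val_cast_of_lt (mem_range.mp hr)
  · intro k _
    rfl

lemma sum_range_mul_mod (g : ℕ → ℕ) (q e : ℕ) :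
    ∑ r ∈ range (q * e), g (r % e) = q * ∑ r ∈ range e, g (r % e) := by
  induction q with
  | zero => simp
  | succ n ih =>
    have hdisj : Disjoint (range (n * e)) ((range e).map (addLeftEmbedding (n * e))) := by
      simp only [disjoint_left, mem_range, Finset.mem_map, addLeftEmbedding_apply]
      rintro a ha ⟨b, -, rfl⟩
      omega
    have h2 : ∑ x ∈ range e, g ((addLeftEmbedding (n * e)) x % e) = ∑ r ∈ range e, g (r % e) := by
      apply sum_congr rfl
      intro j _
      have h3 : (addLeftEmbedding (n * e)) j = n * e + j := rfl
      rw [h3, add_comm, Nat.add_mul_mod_self_right]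
    rw [Nat.succ_mul, Finset.range_add, sum_union hdisj, ih, Finset.sum_map, h2, Nat.succ_mul]

lemma card_gcd_fiber {e d : ℕ} (he : 0 < e) (hd : d ∣ e) :
    ((range e).filter (fun r => Nat.gcd r e = d)).card = Nat.totient (e / d) := by
  have hd0 : 0 < d := Nat.pos_of_dvd_of_pos hd he
  rw [Nat.totient_eq_card_coprime]
  apply Finset.card_nbij' (i := fun r => r / d) (j := fun s => s * d)
  · intro r hr
    simp only [mem_coe, mem_filter, mem_range] at hr ⊢
    obtain ⟨hr1, hr2⟩ := hr
    have hdr : d ∣ r := hr2 ▸ Nat.gcd_dvd_left r e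
    refine ⟨Nat.div_lt_div_of_lt_of_dvd hd hr1, ?_⟩
    have := Nat.coprime_div_gcd_div_gcd (m := r) (n := e) (hr2 ▸ hd0)
    rw [hr2] at this
    exact ((this).symm : Nat.Coprime (e / d) (r / d))
  · intro s hs
    simp only [mem_coe, mem_filter, mem_range] at hs ⊢
    obtain ⟨hs1, hs2⟩ := hs
    constructor
    · calc s * d < (e / d) * d := (Nat.mul_lt_mul_right hd0).mpr hs1
        _ = e := Nat.div_mul_cancel hd
    · have : e = (e / d) * d := (Nat.div_mul_cancel hd).symm
      rw [this, Nat.gcd_mul_right]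
      have : Nat.gcd s (e / d) = 1 := (hs2.symm : Nat.Coprime s (e / d))
      rw [this, one_mul]
  · intro r hr
    simp only [mem_coe, mem_filter, mem_range] at hr
    exact Nat.div_mul_cancel (hr.2 ▸ Nat.gcd_dvd_left r e)
  · intro s _
    exact Nat.mul_div_cancel s hd0

lemma sum_gcd_range {e : ℕ} (he : 0 < e) (f : ℕ → ℕ) :
    ∑ r ∈ range e, f (Nat.gcd r e) = ∑ d ∈ e.divisors, Nat.totient (e / d) * f d := by
  rw [← Finset.sum_fiberwise_of_maps_to (g := fun r => Nat.gcd r e) (t := e.divisors)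
    (fun r _ => Nat.mem_divisors.mpr ⟨Nat.gcd_dvd_right r e, he.ne'⟩)]
  apply sum_congr rfl
  intro d hd
  have hdvd : d ∣ e := (Nat.mem_divisors.mp hd).1
  calc ∑ r ∈ (range e).filter (fun r => Nat.gcd r e = d), f (Nat.gcd r e)
      = ∑ r ∈ (range e).filter (fun r => Nat.gcd r e = d), f d := by
        apply sum_congr rfl
        intro r hr
        rw [(mem_filter.mp hr).2]
    _ = ((range e).filter (fun r => Nat.gcd r e = d)).card * f d := by
        rw [Finset.sum_const, smul_eq_mul]
    _ = Nat.totient (e / d) * f d := by rw [card_gcd_fiber he hdvd]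

lemma sum_over_k {e : ℕ} (he : 0 < e) (heM : e ∣ M) (f : ℕ → ℕ) :
    ∑ k : ZMod M, f (Nat.gcd k.val e) = (M / e) * ∑ d ∈ e.divisors, Nat.totient (e / d) * f d := by
  rw [sum_zmod_val (fun r => f (Nat.gcd r e))]
  obtain ⟨q, hq⟩ := heM
  have hMe : M / e = q := by rw [hq, Nat.mul_div_cancel_left _ he]
  have h1 : ∀ r : ℕ, f (Nat.gcd r e) = f (Nat.gcd (r % e) e) := by
    intro r
    rw [Nat.gcd_comm, Nat.gcd_rec]
  calc ∑ r ∈ range M, f (Nat.gcd r e)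
      = ∑ r ∈ range (q * e), (fun t => f (Nat.gcd t e)) (r % e) := by
        rw [hq, mul_comm]
        exact sum_congr rfl fun r _ => h1 r
    _ = q * ∑ r ∈ range e, (fun t => f (Nat.gcd t e)) (r % e) := sum_range_mul_mod (fun t => f (Nat.gcd t e)) q e
    _ = q * ∑ r ∈ range e, f (Nat.gcd r e) := by
        congr 1
        exact sum_congr rfl fun r hr => by
          simp only []
          rw [Nat.mod_eq_of_lt (mem_range.mp hr)]
    _ = (M / e) * ∑ d ∈ e.divisors, Nat.totient (e / d) * f d := by
        rw [hMe, sum_gcd_range he f]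


lemma vanishing_iff (x : ZMod M → ZMod 2) :
    Vanishing M x ↔ ∃ β < M.factorization 2,
      Per M (2 ^ β * ordCompl[2] M) x ∧ Odd (cnt M (2 ^ β * ordCompl[2] M) x) := by
  have hM0 : M ≠ 0 := NeZero.ne M
  set A := M.factorization 2 with hA
  set m := ordCompl[2] M with hm
  have hm_odd : ¬ 2 ∣ m := Nat.not_dvd_ordCompl Nat.prime_two hM0
  have hm_pos : 0 < m := Nat.ordCompl_pos 2 hM0
  have hMeq : 2 ^ A * m = M := Nat.ordProj_mul_ordCompl_eq_self M 2
  constructor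
  · rintro ⟨d, hdM, hEven, hPer, hOdd⟩
    have hd0 : d ≠ 0 := by
      rintro rfl
      simp [Finset.range_zero] at hOdd
    set β := d.factorization 2 with hβ
    set u := ordCompl[2] d with hu
    have hdu : 2 ^ β * u = d := Nat.ordProj_mul_ordCompl_eq_self d 2
    have hβA : β ≤ A := by
      have := Nat.ordProj_dvd_ordProj_of_dvd hM0 hdM 2
      exact (Nat.pow_dvd_pow_iff_le_right one_lt_two).mp this
    have hum : u ∣ m := Nat.ordCompl_dvd_ordCompl_of_dvd hdM 2
    have hu0 : 0 < u := Nat.ordCompl_pos 2 hd0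
    have hde : d ∣ 2 ^ β * m := by
      rw [← hdu]
      exact mul_dvd_mul_left _ hum
    have hperd : Per M d x := hPer
    refine ⟨β, ?_, hperd.of_dvd hde, ?_⟩
    · -- β < A
      rcases lt_or_eq_of_le hβA with h | h
      · exact h
      · exfalso
        have hMd : d * (M / d) = M := Nat.mul_div_cancel' hdM
        have h2 : 2 ∣ M / d := hEven.two_dvd
        have hd2 : d = 2 ^ A * u := h ▸ hdu.symm
        have h3 : u * (M / d) = m := by
          apply Nat.eq_of_mul_eq_mul_left (pow_pos two_pos A)
          calc 2 ^ A * (u * (M / d)) = d * (M / d) := by rw [hd2]; ring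
            _ = M := hMd
            _ = 2 ^ A * m := hMeq.symm
        exact hm_odd (h3 ▸ (h2.mul_left u))
    · rw [odd_cnt_iff (Nat.pos_of_ne_zero hd0) hde hperd]
      have hq : (2 ^ β * m) / d = m / u := by
        rw [← hdu, Nat.mul_div_mul_left _ _ (pow_pos two_pos β)]
      refine ⟨?_, hOdd⟩
      rw [hq, Nat.odd_iff]
      have hnd : ¬ 2 ∣ m / u := fun h => hm_odd (h.trans (Nat.div_dvd_of_dvd hum))
      omega
  · rintro ⟨β, hβA, hPer, hOdd⟩
    refine ⟨2 ^ β * m, ?_, ?_, hPer, hOdd⟩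
    · rw [← hMeq]
      exact mul_dvd_mul (pow_dvd_pow 2 hβA.le) dvd_rfl
    · have hdiv : M / (2 ^ β * m) = 2 ^ (A - β) := by
        apply Nat.div_eq_of_eq_mul_left (by positivity)
        calc M = 2 ^ A * m := hMeq.symm
          _ = 2 ^ (A - β) * (2 ^ β * m) := by
              rw [← mul_assoc, ← pow_add]
              congr 2
              omega
      rw [hdiv]
      have hpe : (2:ℕ) ^ (A - β) = 2 ^ (A - β - 1) + 2 ^ (A - β - 1) := by
        rw [← two_mul, ← pow_succ']
        congr 1
        omega
      exact ⟨2 ^ (A - β - 1), hpe⟩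
lemma disj_aux {β β' : ℕ} (hlt : β < β') (hβ' : β' < M.factorization 2) (x : ZMod M → ZMod 2)
    (h1 : Per M (2 ^ β * ordCompl[2] M) x ∧ Odd (cnt M (2 ^ β * ordCompl[2] M) x))
    (h2 : Per M (2 ^ β' * ordCompl[2] M) x ∧ Odd (cnt M (2 ^ β' * ordCompl[2] M) x)) :
    False := by
  have hM0 : M ≠ 0 := NeZero.ne M
  have hm_pos : 0 < ordCompl[2] M := Nat.ordCompl_pos 2 hM0
  have hdvd : 2 ^ β * ordCompl[2] M ∣ 2 ^ β' * ordCompl[2] M :=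
    mul_dvd_mul (pow_dvd_pow 2 hlt.le) dvd_rfl
  have hpos : 0 < 2 ^ β * ordCompl[2] M := by positivity
  have := (odd_cnt_iff hpos hdvd h1.1).mp h2.2
  have hq : (2 ^ β' * ordCompl[2] M) / (2 ^ β * ordCompl[2] M) = 2 ^ (β' - β) := by
    rw [Nat.mul_div_mul_right _ _ hm_pos, Nat.pow_div hlt.le two_pos]
  rw [hq, Nat.odd_iff] at this
  have h2d : 2 ∣ 2 ^ (β' - β) := dvd_pow_self 2 (by omega)
  omega

attribute [local instance] Classical.propDecidable

lemma card_vanishing_fix (k : ZMod M) :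
    (univ.filter (fun x : ZMod M → ZMod 2 => Vanishing M x ∧ rot M k x = x)).card
      = ∑ β ∈ range (M.factorization 2),
          (if Odd ((2 ^ β * ordCompl[2] M) / Nat.gcd k.val (2 ^ β * ordCompl[2] M))
           then 2 ^ (Nat.gcd k.val (2 ^ β * ordCompl[2] M) - 1) else 0) := by
  have hM0 : M ≠ 0 := NeZero.ne M
  set A := M.factorization 2 with hA
  set m := ordCompl[2] M with hm
  have hm_pos : 0 < m := Nat.ordCompl_pos 2 hM0
  have hsplit : (univ.filter (fun x : ZMod M → ZMod 2 => Vanishing M x ∧ rot M k x = x))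
      = (range A).biUnion (fun β => univ.filter (fun x : ZMod M → ZMod 2 =>
          (Per M (2 ^ β * m) x ∧ Odd (cnt M (2 ^ β * m) x)) ∧ rot M k x = x)) := by
    ext x
    simp only [mem_filter, mem_univ, true_and, Finset.mem_biUnion, mem_range]
    constructor
    · rintro ⟨hv, hfix⟩
      obtain ⟨β, hβ, h1, h2⟩ := (vanishing_iff x).mp hv
      exact ⟨β, hβ, ⟨h1, h2⟩, hfix⟩
    · rintro ⟨β, hβ, ⟨h1, h2⟩, hfix⟩
      exact ⟨(vanishing_iff x).mpr ⟨β, hβ, h1, h2⟩, hfix⟩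
  rw [hsplit, Finset.card_biUnion]
  · apply sum_congr rfl
    intro β hβ
    have hβA : β < A := mem_range.mp hβ
    have heM : 2 ^ β * m ∣ M := by
      conv_rhs => rw [← Nat.ordProj_mul_ordCompl_eq_self M 2]
      exact mul_dvd_mul (pow_dvd_pow 2 hβA.le) dvd_rfl
    have hgpos : 0 < Nat.gcd k.val (2 ^ β * m) :=
      Nat.gcd_pos_of_pos_right _ (by positivity)
    have hgd : Nat.gcd k.val (2 ^ β * m) ∣ 2 ^ β * m := Nat.gcd_dvd_right _ _
    rw [← card_per_odd_window hgpos hgd heM]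
    apply congrArg
    apply filter_congr
    intro x _
    constructor
    · rintro ⟨⟨h1, h2⟩, hfix⟩
      exact ⟨(fix_per_iff heM k x).mp ⟨h1, hfix⟩, h2⟩
    · rintro ⟨hg, h2⟩
      obtain ⟨h1, hfix⟩ := (fix_per_iff heM k x).mpr hg
      exact ⟨⟨h1, h2⟩, hfix⟩
  · intro β hβ β' hβ' hne
    simp only [disjoint_left, mem_filter, mem_univ, true_and]
    rintro x ⟨⟨h1, h2⟩, -⟩ ⟨⟨h1', h2'⟩, -⟩
    rcases (Ne.lt_or_gt hne) with h | h
    · exact disj_aux h (mem_range.mp hβ') x ⟨h1, h2⟩ ⟨h1', h2'⟩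
    · exact disj_aux h (mem_range.mp hβ) x ⟨h1', h2'⟩ ⟨h1, h2⟩

lemma sum_k :
    ∑ k : ZMod M, (univ.filter (fun x : ZMod M → ZMod 2 =>
        Vanishing M x ∧ rot M k x = x)).card
      = ∑ β ∈ range (M.factorization 2),
          (M / (2 ^ β * ordCompl[2] M)) *
            ∑ d ∈ (2 ^ β * ordCompl[2] M).divisors,
              Nat.totient ((2 ^ β * ordCompl[2] M) / d) *
                (if Odd ((2 ^ β * ordCompl[2] M) / d) then 2 ^ (d - 1) else 0) := by
  have hM0 : M ≠ 0 := NeZero.ne M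
  set A := M.factorization 2 with hA
  set m := ordCompl[2] M with hm
  have hm_pos : 0 < m := Nat.ordCompl_pos 2 hM0
  calc ∑ k : ZMod M, (univ.filter (fun x : ZMod M → ZMod 2 =>
        Vanishing M x ∧ rot M k x = x)).card
      = ∑ k : ZMod M, ∑ β ∈ range A,
          (if Odd ((2 ^ β * m) / Nat.gcd k.val (2 ^ β * m))
           then 2 ^ (Nat.gcd k.val (2 ^ β * m) - 1) else 0) := by
        exact Finset.sum_congr rfl fun k _ => card_vanishing_fix k
    _ = ∑ β ∈ range A, ∑ k : ZMod M,
          (if Odd ((2 ^ β * m) / Nat.gcd k.val (2 ^ β * m))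
           then 2 ^ (Nat.gcd k.val (2 ^ β * m) - 1) else 0) := Finset.sum_comm
    _ = _ := by
        apply sum_congr rfl
        intro β hβ
        have hβA : β < A := mem_range.mp hβ
        have heM : 2 ^ β * m ∣ M := by
          conv_rhs => rw [← Nat.ordProj_mul_ordCompl_eq_self M 2]
          exact mul_dvd_mul (pow_dvd_pow 2 hβA.le) dvd_rfl
        exact sum_over_k (by positivity) heM
          (fun c => if Odd ((2 ^ β * m) / c) then 2 ^ (c - 1) else 0)

lemma fact2_of_pow_mul_odd {s w : ℕ} (hw : ¬ 2 ∣ w) (hw0 : 0 < w) :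
    (2 ^ s * w).factorization 2 = s := by
  rw [Nat.factorization_mul (by positivity) (by omega)]
  simp [Nat.Prime.factorization_pow, Nat.factorization_eq_zero_of_not_dvd hw,
    Nat.prime_two.factorization]

lemma final_algebra :
    ∑ β ∈ range (M.factorization 2),
        (M / (2 ^ β * ordCompl[2] M)) *
          ∑ d ∈ (2 ^ β * ordCompl[2] M).divisors,
            Nat.totient ((2 ^ β * ordCompl[2] M) / d) *
              (if Odd ((2 ^ β * ordCompl[2] M) / d) then 2 ^ (d - 1) else 0)
      = ∑ i ∈ M.divisors.filter (fun i => Even i), Nat.totient i * 2 ^ (M / i) := by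
  have hM0 : M ≠ 0 := NeZero.ne M
  set A := M.factorization 2 with hA
  set m := ordCompl[2] M with hm
  have hm_odd : ¬ 2 ∣ m := Nat.not_dvd_ordCompl Nat.prime_two hM0
  have hm_pos : 0 < m := Nat.ordCompl_pos 2 hM0
  have hMeq : 2 ^ A * m = M := Nat.ordProj_mul_ordCompl_eq_self M 2
  -- step 1 : rewrite the inner sums
  have step1 : ∀ β < A,
      ∑ d ∈ (2 ^ β * m).divisors, Nat.totient ((2 ^ β * m) / d) *
          (if Odd ((2 ^ β * m) / d) then 2 ^ (d - 1) else 0)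
        = ∑ u ∈ m.divisors, Nat.totient (m / u) * 2 ^ (2 ^ β * u - 1) := by
    intro β hβ
    have hppos : (0:ℕ) < 2 ^ β := by positivity
    have step : ∀ d ∈ (2 ^ β * m).divisors, Nat.totient ((2 ^ β * m) / d) *
          (if Odd ((2 ^ β * m) / d) then 2 ^ (d - 1) else 0)
        = if Odd ((2 ^ β * m) / d) then Nat.totient ((2 ^ β * m) / d) * 2 ^ (d - 1) else 0 := by
      intro d _
      split <;> simp
    rw [Finset.sum_congr rfl step, ← Finset.sum_filter]
    apply Finset.sum_nbij' (i := fun d => d / 2 ^ β) (j := fun u => 2 ^ β * u)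
    · intro d hd
      simp only [mem_filter, Nat.mem_divisors] at hd ⊢
      obtain ⟨⟨hdvd, hne⟩, hodd⟩ := hd
      have h2d : 2 ^ β ∣ d := by
        have hX : ¬ 2 ∣ ((2 ^ β * m) / d) := by
          rw [Nat.odd_iff] at hodd
          omega
        have hcop : Nat.Coprime (2 ^ β) ((2 ^ β * m) / d) :=
          Nat.Coprime.pow_left _ ((Nat.prime_two.coprime_iff_not_dvd).mpr hX)
        have hmul : d * ((2 ^ β * m) / d) = 2 ^ β * m := Nat.mul_div_cancel' hdvd
        have hdd : 2 ^ β ∣ d * ((2 ^ β * m) / d) := by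
          rw [hmul]
          exact dvd_mul_right _ _
        exact hcop.dvd_of_dvd_mul_right hdd
      refine ⟨?_, by omega⟩
      have hcan : 2 ^ β * (d / 2 ^ β) = d := Nat.mul_div_cancel' h2d
      have h3 : 2 ^ β * (d / 2 ^ β) ∣ 2 ^ β * m := by rw [hcan]; exact hdvd
      exact (Nat.mul_dvd_mul_iff_left hppos).mp h3
    · intro u hu
      simp only [mem_filter, Nat.mem_divisors] at hu ⊢
      obtain ⟨hdvd, hne⟩ := hu
      have hu0 : 0 < u := Nat.pos_of_dvd_of_pos hdvd hm_pos
      refine ⟨⟨mul_dvd_mul_left _ hdvd, by positivity⟩, ?_⟩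
      rw [Nat.mul_div_mul_left _ _ hppos, Nat.odd_iff]
      have : ¬ 2 ∣ m / u := fun h2 => hm_odd (h2.trans (Nat.div_dvd_of_dvd hdvd))
      omega
    · intro d hd
      simp only [mem_filter, Nat.mem_divisors] at hd
      obtain ⟨⟨hdvd, hne⟩, hodd⟩ := hd
      have h2d : 2 ^ β ∣ d := by
        have hX : ¬ 2 ∣ ((2 ^ β * m) / d) := by
          rw [Nat.odd_iff] at hodd
          omega
        have hcop : Nat.Coprime (2 ^ β) ((2 ^ β * m) / d) :=
          Nat.Coprime.pow_left _ ((Nat.prime_two.coprime_iff_not_dvd).mpr hX)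
        have hmul : d * ((2 ^ β * m) / d) = 2 ^ β * m := Nat.mul_div_cancel' hdvd
        have hdd : 2 ^ β ∣ d * ((2 ^ β * m) / d) := by
          rw [hmul]
          exact dvd_mul_right _ _
        exact hcop.dvd_of_dvd_mul_right hdd
      exact Nat.mul_div_cancel' h2d
    · intro u _
      exact Nat.mul_div_cancel_left u hppos
    · intro d hd
      simp only [mem_filter, Nat.mem_divisors] at hd
      obtain ⟨⟨hdvd, hne⟩, hodd⟩ := hd
      have h2d : 2 ^ β ∣ d := by
        have hX : ¬ 2 ∣ ((2 ^ β * m) / d) := by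
          rw [Nat.odd_iff] at hodd
          omega
        have hcop : Nat.Coprime (2 ^ β) ((2 ^ β * m) / d) :=
          Nat.Coprime.pow_left _ ((Nat.prime_two.coprime_iff_not_dvd).mpr hX)
        have hmul : d * ((2 ^ β * m) / d) = 2 ^ β * m := Nat.mul_div_cancel' hdvd
        have hdd : 2 ^ β ∣ d * ((2 ^ β * m) / d) := by
          rw [hmul]
          exact dvd_mul_right _ _
        exact hcop.dvd_of_dvd_mul_right hdd
      have hrw : 2 ^ β * (d / 2 ^ β) = d := Nat.mul_div_cancel' h2d
      congr 1
      · congr 1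
        conv_lhs => rw [← hrw]
        rw [Nat.mul_div_mul_left _ _ hppos]
      · rw [hrw]
  rw [Finset.sum_congr rfl (fun β hβ => by
    rw [step1 β (mem_range.mp hβ)])]
  -- step 2 : reindex the double sum
  have hdouble : ∑ β ∈ range A, M / (2 ^ β * m) *
        ∑ u ∈ m.divisors, (m / u).totient * 2 ^ (2 ^ β * u - 1)
      = ∑ p ∈ range A ×ˢ m.divisors,
          M / (2 ^ p.1 * m) * ((m / p.2).totient * 2 ^ (2 ^ p.1 * p.2 - 1)) := by
    rw [Finset.sum_product]
    exact Finset.sum_congr rfl fun β _ => Finset.mul_sum _ _ _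
  rw [hdouble]
  apply Finset.sum_nbij' (i := fun p : ℕ × ℕ => 2 ^ (A - p.1) * (m / p.2))
    (j := fun i : ℕ => (A - i.factorization 2, m / (i / 2 ^ i.factorization 2)))
  · rintro ⟨β, u⟩ hp
    simp only [Finset.mem_product, mem_range, Nat.mem_divisors, mem_filter] at hp ⊢
    obtain ⟨hβ, hu, -⟩ := hp
    have hu0 : 0 < u := Nat.pos_of_dvd_of_pos hu hm_pos
    refine ⟨⟨?_, hM0⟩, ?_⟩
    · rw [← hMeq]
      exact mul_dvd_mul (pow_dvd_pow 2 (by omega)) (Nat.div_dvd_of_dvd hu)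
    · have : Even ((2:ℕ) ^ (A - β)) := (Nat.even_pow).mpr ⟨even_two, by omega⟩
      exact this.mul_right _
  · intro i hi
    simp only [Finset.mem_product, mem_range, Nat.mem_divisors, mem_filter] at hi ⊢
    obtain ⟨⟨hdvd, -⟩, heven⟩ := hi
    have hi0 : i ≠ 0 := fun h => by
      subst h
      exact hM0 (Nat.eq_zero_of_zero_dvd hdvd)
    have hs1 : 0 < i.factorization 2 :=
      Nat.Prime.factorization_pos_of_dvd Nat.prime_two hi0 heven.two_dvd
    have hsA : i.factorization 2 ≤ A := by
      have := Nat.ordProj_dvd_ordProj_of_dvd hM0 hdvd 2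
      exact (Nat.pow_dvd_pow_iff_le_right one_lt_two).mp this
    have hw : i / 2 ^ i.factorization 2 ∣ m := Nat.ordCompl_dvd_ordCompl_of_dvd hdvd 2
    exact ⟨by omega, Nat.div_dvd_of_dvd hw, by omega⟩
  · rintro ⟨β, u⟩ hp
    simp only [Finset.mem_product, mem_range, Nat.mem_divisors] at hp
    obtain ⟨hβ, hu, -⟩ := hp
    have hu0 : 0 < u := Nat.pos_of_dvd_of_pos hu hm_pos
    have hmu_odd : ¬ 2 ∣ m / u := fun h2 => hm_odd (h2.trans (Nat.div_dvd_of_dvd hu))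
    have hmu0 : 0 < m / u := Nat.div_pos (Nat.le_of_dvd hm_pos hu) hu0
    have hfact : (2 ^ (A - β) * (m / u)).factorization 2 = A - β :=
      fact2_of_pow_mul_odd hmu_odd hmu0
    have hcompl : (2 ^ (A - β) * (m / u)) / 2 ^ (A - β) = m / u :=
      Nat.mul_div_cancel_left _ (by positivity)
    ext
    · simp only [hfact]
      omega
    · simp only [hfact, hcompl]
      exact Nat.div_div_self hu (by omega)
  · intro i hi
    simp only [Nat.mem_divisors, mem_filter] at hi
    obtain ⟨⟨hdvd, -⟩, heven⟩ := hi
    have hi0 : i ≠ 0 := fun h => by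
      subst h
      exact hM0 (Nat.eq_zero_of_zero_dvd hdvd)
    have hs1 : 0 < i.factorization 2 :=
      Nat.Prime.factorization_pos_of_dvd Nat.prime_two hi0 heven.two_dvd
    have hsA : i.factorization 2 ≤ A := by
      have := Nat.ordProj_dvd_ordProj_of_dvd hM0 hdvd 2
      exact (Nat.pow_dvd_pow_iff_le_right one_lt_two).mp this
    have hw : i / 2 ^ i.factorization 2 ∣ m := Nat.ordCompl_dvd_ordCompl_of_dvd hdvd 2
    show 2 ^ (A - (A - i.factorization 2)) * (m / (m / (i / 2 ^ i.factorization 2))) = i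
    rw [show A - (A - i.factorization 2) = i.factorization 2 by omega,
      Nat.div_div_self hw (by omega)]
    exact Nat.ordProj_mul_ordCompl_eq_self i 2
  · rintro ⟨β, u⟩ hp
    simp only [Finset.mem_product, mem_range, Nat.mem_divisors] at hp
    obtain ⟨hβ, hu, -⟩ := hp
    have hu0 : 0 < u := Nat.pos_of_dvd_of_pos hu hm_pos
    have hmu_odd : ¬ 2 ∣ m / u := fun h2 => hm_odd (h2.trans (Nat.div_dvd_of_dvd hu))
    have hi0 : 0 < 2 ^ (A - β) * (m / u) := by
      have : 0 < m / u := Nat.div_pos (Nat.le_of_dvd hm_pos hu) hu0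
      positivity
    have hMdiv : M / (2 ^ β * m) = 2 ^ (A - β) := by
      apply Nat.div_eq_of_eq_mul_left (by positivity)
      calc M = 2 ^ A * m := hMeq.symm
        _ = 2 ^ (A - β) * (2 ^ β * m) := by
            rw [← mul_assoc, ← pow_add]
            congr 2
            omega
    have hMi : M / (2 ^ (A - β) * (m / u)) = 2 ^ β * u := by
      apply Nat.div_eq_of_eq_mul_left hi0
      have hmu : u * (m / u) = m := Nat.mul_div_cancel' hu
      calc M = 2 ^ A * m := hMeq.symm
        _ = (2 ^ β * u) * (2 ^ (A - β) * (m / u)) := by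
            conv_lhs => rw [show (2:ℕ) ^ A = 2 ^ β * 2 ^ (A - β) from by
              rw [← pow_add]; congr 1; omega, ← hmu]
            ring
    have htot : Nat.totient (2 ^ (A - β) * (m / u))
        = 2 ^ (A - β - 1) * Nat.totient (m / u) := by
      rw [Nat.totient_mul, Nat.totient_prime_pow Nat.prime_two (by omega : 0 < A - β)]
      · norm_num
      · apply Nat.Coprime.pow_left
        exact (Nat.prime_two.coprime_iff_not_dvd).mpr hmu_odd
    rw [hMdiv, hMi, htot]
    have e1 : (2:ℕ) ^ (A - β) = 2 * 2 ^ (A - β - 1) := by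
      rw [← pow_succ']
      congr 1
      omega
    have e2 : (2:ℕ) ^ (2 ^ β * u) = 2 * 2 ^ (2 ^ β * u - 1) := by
      rw [← pow_succ']
      congr 1
      have : 0 < 2 ^ β * u := by positivity
      omega
    rw [e1, e2]
    ring

lemma rot_add (a b : ZMod M) (x : ZMod M → ZMod 2) :
    rot M a (rot M b x) = rot M (a + b) x := by
  funext i
  show x (i + a + b) = x (i + (a + b))
  rw [add_assoc]

lemma rot_zero (x : ZMod M → ZMod 2) : rot M 0 x = x := by
  funext i
  show x (i + 0) = x i
  rw [add_zero]

lemma rot_cancel {k : ZMod M} {x y : ZMod M → ZMod 2} (h : rot M k x = rot M k y) : x = y := by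
  have := congrArg (rot M (-k)) h
  rwa [rot_add, rot_add, neg_add_cancel, rot_zero, rot_zero] at this

/-- the orbit as a finset. -/
def orbF (x : ZMod M → ZMod 2) : Finset (ZMod M → ZMod 2) :=
  Finset.image (fun k => rot M k x) univ

/-- the stabiliser as a finset. -/
def stab (x : ZMod M → ZMod 2) : Finset (ZMod M) :=
  univ.filter (fun k => rot M k x = x)

lemma mem_orbF_self (x : ZMod M → ZMod 2) : x ∈ orbF x := by
  rw [orbF, Finset.mem_image]
  exact ⟨0, mem_univ 0, rot_zero x⟩

lemma orbF_rot (k : ZMod M) (x : ZMod M → ZMod 2) : orbF (rot M k x) = orbF x := by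
  ext y
  simp only [orbF, Finset.mem_image, mem_univ, true_and]
  constructor
  · rintro ⟨a, rfl⟩
    exact ⟨a + k, (rot_add a k x).symm⟩
  · rintro ⟨a, rfl⟩
    refine ⟨a - k, ?_⟩
    rw [rot_add, sub_add_cancel]

lemma stab_rot (k : ZMod M) (x : ZMod M → ZMod 2) : stab (rot M k x) = stab x := by
  ext k'
  simp only [stab, mem_filter, mem_univ, true_and]
  constructor
  · intro h
    rw [rot_add, add_comm, ← rot_add] at h
    exact rot_cancel h
  · intro h
    rw [rot_add, add_comm, ← rot_add, h]

lemma full_count (x : ZMod M → ZMod 2) :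
    (univ.filter (fun i : ZMod M => x i = 1)).card = cnt M M x := by
  rw [cnt]
  apply Finset.card_nbij' (i := fun i : ZMod M => i.val) (j := fun r : ℕ => (r : ZMod M))
  · intro i hi
    simp only [mem_coe, mem_filter, mem_univ, true_and, mem_range] at hi ⊢
    rw [ZMod.natCast_zmod_val]
    exact ⟨ZMod.val_lt i, hi⟩
  · intro r hr
    simp only [mem_coe, mem_filter, mem_univ, true_and, mem_range] at hr ⊢
    exact hr.2
  · intro i _
    exact ZMod.natCast_zmod_val i
  · intro r hr
    simp only [mem_coe, mem_filter, mem_range] at hr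
    exact ZMod.val_cast_of_lt hr.1

lemma cnt_rot_invariant {d : ℕ} (hd : 0 < d) (hdM : d ∣ M) (k : ZMod M)
    {x : ZMod M → ZMod 2} (hx : Per M d x) : cnt M d (rot M k x) = cnt M d x := by
  have hrx : Per M d (rot M k x) := by
    intro i
    show x (i + ↑d + k) = x (i + k)
    rw [add_right_comm]
    exact hx (i + k)
  have hMd : (M / d) * d = M := Nat.div_mul_cancel hdM
  have h1 : cnt M M (rot M k x) = (M / d) * cnt M d (rot M k x) := by
    have h := cnt_mul hrx (M / d)
    rwa [hMd] at h
  have h2 : cnt M M x = (M / d) * cnt M d x := by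
    have h := cnt_mul hx (M / d)
    rwa [hMd] at h
  have h3 : cnt M M (rot M k x) = cnt M M x := by
    rw [← full_count, ← full_count]
    apply Finset.card_nbij' (i := fun i : ZMod M => i + k) (j := fun i : ZMod M => i - k)
    · intro i hi
      simp only [mem_coe, mem_filter, mem_univ, true_and] at hi ⊢
      exact hi
    · intro i hi
      simp only [mem_coe, mem_filter, mem_univ, true_and] at hi ⊢
      show x (i - k + k) = 1
      rwa [sub_add_cancel]
    · intro i _
      exact add_sub_cancel_right i k
    · intro i _
      exact sub_add_cancel i k
  have hMdpos : 0 < M / d := Nat.div_pos (Nat.le_of_dvd (Nat.pos_of_ne_zero (NeZero.ne M)) hdM)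
    hd
  rw [h1, h2] at h3
  exact Nat.eq_of_mul_eq_mul_left hMdpos h3

lemma vanishing_rot {x : ZMod M → ZMod 2} (hx : Vanishing M x) (k : ZMod M) :
    Vanishing M (rot M k x) := by
  obtain ⟨d, hdM, hEven, hPer, hOdd⟩ := hx
  have hd0 : 0 < d := by
    rcases Nat.eq_zero_or_pos d with h | h
    · subst h
      simp [Finset.range_zero] at hOdd
    · exact h
  have hPer' : Per M d x := hPer
  refine ⟨d, hdM, hEven, ?_, ?_⟩
  · intro i
    show x (i + ↑d + k) = x (i + k)
    rw [add_right_comm]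
    exact hPer' (i + k)
  · have := cnt_rot_invariant hd0 hdM k hPer'
    rw [cnt] at this
    rw [this]
    exact hOdd

lemma orbit_stabilizer (x : ZMod M → ZMod 2) : (orbF x).card * (stab x).card = M := by
  have h1 : (univ : Finset (ZMod M)).card = ∑ y ∈ orbF x,
      (univ.filter (fun k => rot M k x = y)).card := by
    apply Finset.card_eq_sum_card_fiberwise
    intro k _
    rw [orbF, Finset.mem_coe, Finset.mem_image]
    exact ⟨k, mem_univ k, rfl⟩
  have h2 : ∀ y ∈ orbF x, (univ.filter (fun k => rot M k x = y)).card = (stab x).card := by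
    intro y hy
    rw [orbF, Finset.mem_image] at hy
    obtain ⟨k₀, -, hk₀⟩ := hy
    apply Finset.card_nbij' (i := fun k => k - k₀) (j := fun k => k + k₀)
    · intro k hk
      simp only [mem_coe, mem_filter, mem_univ, true_and, stab] at hk ⊢
      have e1 : rot M (k - k₀) x = rot M (-k₀) (rot M k x) := by
        rw [rot_add, neg_add_eq_sub]
      rw [e1, hk, ← hk₀, rot_add, neg_add_cancel, rot_zero]
    · intro k hk
      simp only [mem_coe, mem_filter, mem_univ, true_and, stab] at hk ⊢
      have e1 : rot M (k + k₀) x = rot M k₀ (rot M k x) := by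
        rw [rot_add, add_comm]
      rw [e1, hk, hk₀]
    · intro k _
      exact sub_add_cancel k k₀
    · intro k _
      exact add_sub_cancel_right k k₀
  have h3 := h1
  rw [Finset.sum_congr rfl h2, Finset.sum_const, smul_eq_mul] at h3
  rw [← h3, Finset.card_univ, ZMod.card]

lemma rotOrbit_eq_coe (x : ZMod M → ZMod 2) : rotOrbit M x = ↑(orbF x) := by
  ext y
  simp only [rotOrbit, Set.mem_setOf_eq, orbF, Finset.coe_image, Set.mem_image,
    Finset.coe_univ, Set.mem_univ, true_and, Set.image_univ, Set.mem_range]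
  exact exists_congr fun k => eq_comm

lemma fiber_eq_orbit {T : Finset (ZMod M → ZMod 2)}
    (hT : T ∈ (univ.filter (Vanishing M)).image orbF) :
    (univ.filter (Vanishing M)).filter (fun x => orbF x = T) = T := by
  rw [Finset.mem_image] at hT
  obtain ⟨x₀, hx₀, rfl⟩ := hT
  have hvan₀ : Vanishing M x₀ := (mem_filter.mp hx₀).2
  ext y
  simp only [filter_filter, mem_filter, mem_univ, true_and]
  constructor
  · rintro ⟨-, h⟩
    rw [← h]
    exact mem_orbF_self y
  · intro hy
    rw [orbF, Finset.mem_image] at hy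
    obtain ⟨k, -, rfl⟩ := hy
    exact ⟨vanishing_rot hvan₀ k, orbF_rot k x₀⟩

lemma burnside :
    M * ((univ.filter (Vanishing M)).image orbF).card
      = ∑ k : ZMod M, (univ.filter (fun x : ZMod M → ZMod 2 =>
          Vanishing M x ∧ rot M k x = x)).card := by
  have hR : ∑ k : ZMod M, (univ.filter (fun x : ZMod M → ZMod 2 =>
        Vanishing M x ∧ rot M k x = x)).card
      = ∑ x ∈ univ.filter (Vanishing M), (stab x).card := by
    calc ∑ k : ZMod M, (univ.filter (fun x : ZMod M → ZMod 2 =>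
          Vanishing M x ∧ rot M k x = x)).card
        = ∑ k : ZMod M, ∑ x : ZMod M → ZMod 2,
            (if Vanishing M x ∧ rot M k x = x then 1 else 0) := by
          exact sum_congr rfl fun k _ => Finset.card_filter _ _
      _ = ∑ x : ZMod M → ZMod 2, ∑ k : ZMod M,
            (if Vanishing M x ∧ rot M k x = x then 1 else 0) := Finset.sum_comm
      _ = ∑ x : ZMod M → ZMod 2, (if Vanishing M x then (stab x).card else 0) := by
          refine sum_congr rfl fun x _ => ?_
          by_cases hv : Vanishing M x
          · rw [if_pos hv, stab, Finset.card_filter]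
            exact sum_congr rfl fun k _ => by rw [if_congr (and_iff_right hv) rfl rfl]
          · rw [if_neg hv]
            exact Finset.sum_eq_zero fun k _ => by rw [if_neg (fun h => hv h.1)]
      _ = ∑ x ∈ univ.filter (Vanishing M), (stab x).card := (Finset.sum_filter _ _).symm
  rw [hR, ← Finset.sum_fiberwise_of_maps_to (g := orbF)
    (t := (univ.filter (Vanishing M)).image orbF)
    (fun x hx => Finset.mem_image_of_mem orbF hx)]
  have hT : ∀ T ∈ (univ.filter (Vanishing M)).image orbF,
      ∑ x ∈ (univ.filter (Vanishing M)).filter (fun x => orbF x = T), (stab x).card = M := by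
    intro T hTmem
    rw [fiber_eq_orbit hTmem]
    rw [Finset.mem_image] at hTmem
    obtain ⟨x₀, hx₀, rfl⟩ := hTmem
    have hconst : ∀ y ∈ orbF x₀, (stab y).card = (stab x₀).card := by
      intro y hy
      rw [orbF, Finset.mem_image] at hy
      obtain ⟨k, -, rfl⟩ := hy
      rw [stab_rot]
    rw [Finset.sum_congr rfl hconst, Finset.sum_const, smul_eq_mul]
    exact orbit_stabilizer x₀
  rw [Finset.sum_congr rfl hT, Finset.sum_const, smul_eq_mul, mul_comm]

lemma card_orbits :
    Nat.card {S : Set (ZMod M → ZMod 2) // ∃ x, Vanishing M x ∧ S = rotOrbit M x}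
      = ((univ.filter (Vanishing M)).image orbF).card := by
  rw [← Nat.card_eq_finsetCard]
  apply Nat.card_congr
  symm
  refine Equiv.ofBijective
    (fun T => ⟨(↑(T : Finset (ZMod M → ZMod 2)) : Set (ZMod M → ZMod 2)), ?_⟩) ⟨?_, ?_⟩
  · obtain ⟨x₀, hx₀, hTeq⟩ := Finset.mem_image.mp T.2
    exact ⟨x₀, (mem_filter.mp hx₀).2, by rw [← hTeq, rotOrbit_eq_coe]⟩
  · intro a b hab
    apply Subtype.ext
    apply Finset.coe_injective
    exact congrArg Subtype.val hab
  · rintro ⟨S, x, hvan, rfl⟩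
    refine ⟨⟨orbF x, Finset.mem_image_of_mem orbF (mem_filter.mpr ⟨mem_univ x, hvan⟩)⟩, ?_⟩
    apply Subtype.ext
    exact (rotOrbit_eq_coe x).symm

end VanAux

/-- For every positive integer `M`, the number of orbits of vanishing binary words of
length `M` under the rotation action of the cyclic group `ZMod M` equals
`(1/M) · Σ_{i | M, i even} φ(i) · 2^(M/i)`. -/
theorem number_of_vanishing_states (M : ℕ) [NeZero M] :
    (Nat.card {S : Set (ZMod M → ZMod 2) // ∃ x, Vanishing M x ∧ S = rotOrbit M x} : ℚ)
      = (1 / M) *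
        ∑ i ∈ M.divisors.filter (fun i => Even i),
          (Nat.totient i : ℚ) * 2 ^ (M / i) := by
  have key : M * Nat.card {S : Set (ZMod M → ZMod 2) // ∃ x, Vanishing M x ∧ S = rotOrbit M x}
      = ∑ i ∈ M.divisors.filter (fun i => Even i), Nat.totient i * 2 ^ (M / i) := by
    rw [VanAux.card_orbits, VanAux.burnside, VanAux.sum_k, VanAux.final_algebra]
  have hM : (M : ℚ) ≠ 0 := Nat.cast_ne_zero.mpr (NeZero.ne M)
  have key' := congrArg (fun n : ℕ => (n : ℚ)) key
  push_cast at key'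
  rw [div_mul_eq_mul_div, one_mul, eq_div_iff hM, mul_comm]
  exact key'
end

section
/- For every positive integer M, the number of orbits of bosonic non-vanishing binary words of length M under the rotation action of the cyclic group Z/M equals the number of orbits of fermionic binary words of length M, and both numbers equal (1/(2M)) · Σ_{n | M, n odd} φ(n) · 2^{M/n}. (In the string bit model this says that for every bit number M there are equally many bosonic and fermionic single trace states.) -/
open Finset

namespace STB

set_option linter.unusedSectionVars false
set_option linter.unusedVariables false

variable {M : ℕ}

/-- `x` is `c`-periodic. -/
def Per (M c : ℕ) (x : ZMod M → ZMod 2) : Prop :=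
  ∀ i : ZMod M, x (i + (c : ZMod M)) = x i

instance perDecidable (M c : ℕ) [NeZero M] : DecidablePred (Per M c) := fun x =>
  inferInstanceAs (Decidable (∀ i : ZMod M, x (i + (c : ZMod M)) = x i))

instance fermionicDecidable (M : ℕ) [NeZero M] : DecidablePred (Fermionic M) := fun x =>
  inferInstanceAs (Decidable (Odd _))

instance bosonicDecidable (M : ℕ) [NeZero M] : DecidablePred (Bosonic M) := fun x =>
  inferInstanceAs (Decidable (Even _))

instance vanishingDecidable (M : ℕ) [NeZero M] : DecidablePred (Vanishing M) := fun x => by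
  haveI : Decidable (∃ d ∈ Finset.range (M + 1), d ∣ M ∧ Even (M / d) ∧
      (∀ i : ZMod M, x (i + (d : ZMod M)) = x i) ∧
      Odd ((Finset.range d).filter (fun j : ℕ => x ((j : ZMod M)) = 1)).card) := by
    infer_instance
  apply decidable_of_iff
    (∃ d ∈ Finset.range (M + 1), d ∣ M ∧ Even (M / d) ∧
      (∀ i : ZMod M, x (i + (d : ZMod M)) = x i) ∧
      Odd ((Finset.range d).filter (fun j : ℕ => x ((j : ZMod M)) = 1)).card)
    (by constructor
        · rintro ⟨d, -, h⟩; exact ⟨d, h⟩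
        · rintro ⟨d, h⟩
          refine ⟨d, Finset.mem_range.mpr ?_, h⟩
          have := Nat.le_of_dvd (Nat.pos_of_ne_zero (NeZero.ne M)) h.1
          omega)

/-- weight of a word -/
def wt (N : ℕ) [NeZero N] (x : ZMod N → ZMod 2) : ℕ :=
  (Finset.univ.filter (fun i : ZMod N => x i = 1)).card

/-- block weight -/
def bwt (N c : ℕ) (x : ZMod N → ZMod 2) : ℕ :=
  ((Finset.range c).filter (fun j : ℕ => x ((j : ZMod N)) = 1)).card

/-- the subgroup of periods -/
def periods (M : ℕ) (x : ZMod M → ZMod 2) : AddSubgroup (ZMod M) where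
  carrier := {t | ∀ i, x (i + t) = x i}
  zero_mem' := by intro i; simp
  add_mem' := by
    intro a b ha hb i
    rw [← add_assoc, hb, ha]
  neg_mem' := by
    intro a ha i
    have := ha (i + -a)
    rw [add_assoc, neg_add_cancel, add_zero] at this
    exact this.symm

lemma per_iff_mem {c : ℕ} {x : ZMod M → ZMod 2} :
    Per M c x ↔ (c : ZMod M) ∈ periods M x := Iff.rfl

lemma per_self (x : ZMod M → ZMod 2) : Per M M x := by
  intro i; simp [ZMod.natCast_self]

lemma per_of_dvd {c c' : ℕ} {x : ZMod M → ZMod 2} (h : Per M c x) (hcc : c ∣ c') :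
    Per M c' x := by
  obtain ⟨t, rfl⟩ := hcc
  rw [per_iff_mem] at h ⊢
  have : ((c * t : ℕ) : ZMod M) = t • ((c : ℕ) : ZMod M) := by
    push_cast
    rw [nsmul_eq_mul]
    ring
  rw [this]
  exact AddSubgroup.nsmul_mem _ h t

lemma per_gcd {a b : ℕ} {x : ZMod M → ZMod 2} (ha : Per M a x) (hb : Per M b x) :
    Per M (Nat.gcd a b) x := by
  rw [per_iff_mem] at ha hb ⊢
  have key : ((Nat.gcd a b : ℕ) : ZMod M) =
      (Nat.gcdA a b) • ((a : ℕ) : ZMod M) + (Nat.gcdB a b) • ((b : ℕ) : ZMod M) := by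
    have := Nat.gcd_eq_gcd_ab a b
    calc ((Nat.gcd a b : ℕ) : ZMod M) = (((Nat.gcd a b : ℤ)) : ZMod M) := by push_cast; ring
    _ = (((a : ℤ) * Nat.gcdA a b + (b : ℤ) * Nat.gcdB a b : ℤ) : ZMod M) := by rw [← this]
    _ = (Nat.gcdA a b) • ((a : ℕ) : ZMod M) + (Nat.gcdB a b) • ((b : ℕ) : ZMod M) := by
        push_cast
        rw [zsmul_eq_mul, zsmul_eq_mul]
        ring
  rw [key]
  exact AddSubgroup.add_mem _ (AddSubgroup.zsmul_mem _ ha _) (AddSubgroup.zsmul_mem _ hb _)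

lemma per_nat {c : ℕ} {x : ZMod M → ZMod 2} (h : Per M c x) (q : ℕ) (i : ZMod M) :
    x (i + ((q * c : ℕ) : ZMod M)) = x i := by
  induction q with
  | zero => simp
  | succ n ih =>
    have : ((n + 1) * c : ℕ) = n * c + c := by ring
    rw [this, Nat.cast_add, ← add_assoc, h (i + ((n * c : ℕ) : ZMod M))]
    exact ih

lemma rot_fixed_iff [NeZero M] {k : ZMod M} {x : ZMod M → ZMod 2} :
    rot M k x = x ↔ Per M (Nat.gcd (ZMod.val k) M) x := by
  have hk : ((ZMod.val k : ℕ) : ZMod M) = k := ZMod.natCast_rightInverse k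
  constructor
  · intro h
    have hkper : Per M (ZMod.val k) x := by
      intro i
      rw [hk]
      exact congrFun h i
    exact per_gcd hkper (per_self x)
  · intro h
    funext i
    have := per_of_dvd h (Nat.gcd_dvd_left (ZMod.val k) M) i
    rw [hk] at this
    exact this

section Transfer

variable {M d : ℕ} [NeZero M]

/-- the block of a word -/
def blockOf (d : ℕ) [NeZero d] (x : ZMod M → ZMod 2) : ZMod d → ZMod 2 :=
  fun j => x ((ZMod.val j : ℕ) : ZMod M)

lemma neZero_of_dvd (hd : d ∣ M) : NeZero d :=
  ⟨fun h => (NeZero.ne M) (Nat.eq_zero_of_zero_dvd (h ▸ hd))⟩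

variable [NeZero d]

lemma pi_natCast (hd : d ∣ M) (j : ℕ) :
    (ZMod.castHom hd (ZMod d)) ((j : ℕ) : ZMod M) = ((j : ℕ) : ZMod d) :=
  map_natCast _ j

lemma pi_apply (hd : d ∣ M) (i : ZMod M) :
    (ZMod.castHom hd (ZMod d)) i = ((ZMod.val i : ℕ) : ZMod d) := by
  conv_lhs => rw [← ZMod.natCast_rightInverse i]
  exact pi_natCast hd _

lemma pi_surj (hd : d ∣ M) : Function.Surjective (ZMod.castHom hd (ZMod d)) := by
  intro j
  refine ⟨((ZMod.val j : ℕ) : ZMod M), ?_⟩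
  rw [pi_natCast hd]
  exact ZMod.natCast_rightInverse j

lemma comp_pi_eq (hd : d ∣ M) {x : ZMod M → ZMod 2} (h : Per M d x) :
    (blockOf d x) ∘ (ZMod.castHom hd (ZMod d)) = x := by
  funext i
  show x ((ZMod.val ((ZMod.castHom hd (ZMod d)) i) : ℕ) : ZMod M) = x i
  rw [pi_apply hd, ZMod.val_natCast]
  conv_rhs => rw [← ZMod.natCast_rightInverse i]
  have hsplit : ZMod.val i = ZMod.val i % d + (ZMod.val i / d) * d := by
    rw [mul_comm]; exact (Nat.mod_add_div _ _).symm
  conv_rhs => rw [hsplit]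
  rw [Nat.cast_add]
  exact (per_nat h (ZMod.val i / d) _).symm

lemma per_comp (hd : d ∣ M) (b : ZMod d → ZMod 2) :
    Per M d (b ∘ (ZMod.castHom hd (ZMod d))) := by
  intro i
  show b ((ZMod.castHom hd (ZMod d)) (i + ((d : ℕ) : ZMod M))) = _
  rw [map_add, pi_natCast hd, ZMod.natCast_self, add_zero]
  rfl

lemma per_comp_iff (hd : d ∣ M) (b : ZMod d → ZMod 2) (c : ℕ) :
    Per M c (b ∘ (ZMod.castHom hd (ZMod d))) ↔ Per d c b := by
  constructor
  · intro h j
    obtain ⟨i, rfl⟩ := pi_surj hd j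
    have := h i
    show b _ = b _
    rw [← map_natCast (ZMod.castHom hd (ZMod d)) c, ← map_add]
    exact this
  · intro h i
    show b ((ZMod.castHom hd (ZMod d)) (i + ((c : ℕ) : ZMod M))) = _
    rw [map_add, pi_natCast hd]
    exact h _

lemma blockOf_comp (hd : d ∣ M) (b : ZMod d → ZMod 2) :
    blockOf d (b ∘ (ZMod.castHom hd (ZMod d))) = b := by
  funext j
  show b ((ZMod.castHom hd (ZMod d)) ((ZMod.val j : ℕ) : ZMod M)) = b j
  rw [pi_natCast hd, ZMod.natCast_rightInverse j]

lemma bwt_comp (hd : d ∣ M) (b : ZMod d → ZMod 2) (c : ℕ) :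
    bwt M c (b ∘ (ZMod.castHom hd (ZMod d))) = bwt d c b := by
  unfold bwt
  congr 1
  apply Finset.filter_congr
  intro j _
  show (b ((ZMod.castHom hd (ZMod d)) ((j : ℕ) : ZMod M)) = 1) ↔ _
  rw [pi_natCast hd]

/-- weight of a shifted window equals the weight -/
lemma wt_window (N : ℕ) [NeZero N] (b : ZMod N → ZMod 2) (s : ZMod N) :
    ((Finset.range N).filter (fun j : ℕ => b (((j : ℕ) : ZMod N) + s) = 1)).card
      = wt N b := by
  apply Finset.card_nbij' (fun j => ((j : ℕ) : ZMod N) + s) (fun u => ZMod.val (u - s))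
  · intro j hj
    simp only [Finset.mem_coe, Finset.mem_filter, Finset.mem_range, Finset.mem_univ, true_and] at hj ⊢
    exact hj.2
  · intro u hu
    simp only [Finset.mem_coe, Finset.mem_filter, Finset.mem_range, Finset.mem_univ, true_and] at hu ⊢
    constructor
    · exact ZMod.val_lt _
    · rw [ZMod.natCast_rightInverse (u - s), sub_add_cancel]
      exact hu
  · intro j hj
    simp only [Finset.mem_coe, Finset.mem_filter, Finset.mem_range] at hj
    beta_reduce
    rw [add_sub_cancel_right, ZMod.val_cast_of_lt hj.1]
  · intro u hu
    beta_reduce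
    rw [ZMod.natCast_rightInverse (u - s), sub_add_cancel]

lemma bwt_self (N : ℕ) [NeZero N] (b : ZMod N → ZMod 2) : bwt N N b = wt N b := by
  have := wt_window N b 0
  simpa [bwt] using this

lemma bwt_full_of_comp (hd : d ∣ M) (b : ZMod d → ZMod 2) :
    bwt M d (b ∘ (ZMod.castHom hd (ZMod d))) = wt d b := by
  rw [bwt_comp hd, bwt_self]

lemma bwt_rot (hd : d ∣ M) {x : ZMod M → ZMod 2} (h : Per M d x) (k : ZMod M) :
    bwt M d (rot M k x) = bwt M d x := by
  have hx : (blockOf d x) ∘ (ZMod.castHom hd (ZMod d)) = x := comp_pi_eq hd h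
  set b := blockOf d x with hb
  calc bwt M d (rot M k x)
      = ((Finset.range d).filter
          (fun j : ℕ => b (((j : ℕ) : ZMod d) + (ZMod.castHom hd (ZMod d)) k) = 1)).card := by
        unfold bwt
        apply congrArg
        apply Finset.filter_congr
        intro j _
        show (rot M k x ((j : ℕ) : ZMod M) = 1) ↔ _
        rw [rot, ← hx]
        show (b ((ZMod.castHom hd (ZMod d)) (((j : ℕ) : ZMod M) + k)) = 1) ↔ _
        rw [map_add, pi_natCast hd]
    _ = wt d b := wt_window d b _
    _ = bwt M d x := by rw [← hx, bwt_full_of_comp hd]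

lemma fiber_card (hd : d ∣ M) (u : ZMod d) :
    (Finset.univ.filter (fun i : ZMod M => (ZMod.castHom hd (ZMod d)) i = u)).card = M / d := by
  have hcomm : ∀ u v : ZMod d,
      (Finset.univ.filter (fun i : ZMod M => (ZMod.castHom hd (ZMod d)) i = u)).card =
      (Finset.univ.filter (fun i : ZMod M => (ZMod.castHom hd (ZMod d)) i = v)).card := by
    intro u v
    obtain ⟨a, ha⟩ := pi_surj hd u
    obtain ⟨b, hb⟩ := pi_surj hd v
    apply Finset.card_nbij' (fun i => i - a + b) (fun i => i - b + a)
    · intro i hi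
      simp only [Finset.mem_coe, Finset.mem_filter, Finset.mem_univ, true_and] at hi ⊢
      rw [map_add, map_sub, hi, ha, hb, sub_self, zero_add]
    · intro i hi
      simp only [Finset.mem_coe, Finset.mem_filter, Finset.mem_univ, true_and] at hi ⊢
      rw [map_add, map_sub, hi, ha, hb, sub_self, zero_add]
    · intro i _; ring
    · intro i _; ring
  have hsum : ∑ u : ZMod d,
      (Finset.univ.filter (fun i : ZMod M => (ZMod.castHom hd (ZMod d)) i = u)).card = M := by
    rw [← Finset.card_eq_sum_card_fiberwise (fun i _ => Finset.mem_univ _)]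
    simp [ZMod.card]
  have hmul : (d : ℕ) * (Finset.univ.filter
      (fun i : ZMod M => (ZMod.castHom hd (ZMod d)) i = u)).card = M := by
    rw [Finset.sum_congr rfl (fun v _ => hcomm v u)] at hsum
    simpa [Finset.sum_const, ZMod.card, mul_comm, Finset.card_univ] using hsum
  have hd0 : 0 < d := Nat.pos_of_ne_zero (NeZero.ne d)
  have hmul' : (Finset.univ.filter
      (fun i : ZMod M => (ZMod.castHom hd (ZMod d)) i = u)).card * d = M := by
    rw [mul_comm]; exact hmul
  exact (Nat.div_eq_of_eq_mul_left hd0 hmul'.symm).symm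

lemma wt_comp (hd : d ∣ M) (b : ZMod d → ZMod 2) :
    wt M (b ∘ (ZMod.castHom hd (ZMod d))) = (M / d) * wt d b := by
  have h1 : wt M (b ∘ (ZMod.castHom hd (ZMod d))) =
      ∑ u ∈ Finset.univ.filter (fun u : ZMod d => b u = 1),
        (Finset.univ.filter (fun i : ZMod M => (ZMod.castHom hd (ZMod d)) i = u)).card := by
    unfold wt
    rw [Finset.card_eq_sum_card_fiberwise
      (f := (ZMod.castHom hd (ZMod d)))
      (t := Finset.univ.filter (fun u : ZMod d => b u = 1))
      (by intro i hi
          simp only [Finset.mem_coe, Finset.mem_filter, Finset.mem_univ, true_and, Function.comp_apply] at hi ⊢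
          exact hi)]
    apply Finset.sum_congr rfl
    intro u hu
    simp only [Finset.mem_filter, Finset.mem_univ, true_and] at hu
    congr 1
    ext i
    simp only [Finset.mem_filter, Finset.mem_univ, true_and, Function.comp_apply,
      and_iff_right_iff_imp]
    intro h; rw [h, hu]
  rw [h1, Finset.sum_congr rfl (fun u _ => fiber_card hd u)]
  simp [wt, mul_comm]

lemma wt_rot (k : ZMod M) (x : ZMod M → ZMod 2) : wt M (rot M k x) = wt M x := by
  unfold wt rot
  apply Finset.card_nbij' (fun i => i + k) (fun i => i - k)
  · intro i hi; simp only [Finset.mem_coe, Finset.mem_filter, Finset.mem_univ, true_and] at hi ⊢; exact hi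
  · intro i hi
    simp only [Finset.mem_coe, Finset.mem_filter, Finset.mem_univ, true_and] at hi ⊢
    rw [sub_add_cancel]; exact hi
  · intro i _; ring
  · intro i _; ring

/-- key counting bijection -/
lemma count_per (hd : d ∣ M) (p : (ZMod M → ZMod 2) → Prop) [DecidablePred p] :
    (Finset.univ.filter (fun x : ZMod M → ZMod 2 => Per M d x ∧ p x)).card =
    (Finset.univ.filter (fun b : ZMod d → ZMod 2 =>
        p (b ∘ (ZMod.castHom hd (ZMod d))))).card := by
  apply Finset.card_nbij' (fun x => blockOf d x) (fun b => b ∘ (ZMod.castHom hd (ZMod d)))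
  · intro x hx
    simp only [Finset.mem_coe, Finset.mem_filter, Finset.mem_univ, true_and] at hx ⊢
    rw [comp_pi_eq hd hx.1]
    exact hx.2
  · intro b hb
    simp only [Finset.mem_coe, Finset.mem_filter, Finset.mem_univ, true_and] at hb ⊢
    exact ⟨per_comp hd b, hb⟩
  · intro x hx
    simp only [Finset.mem_coe, Finset.mem_filter, Finset.mem_univ, true_and] at hx
    exact comp_pi_eq hd hx.1
  · intro b _
    exact blockOf_comp hd b

end Transfer

section Parity

lemma zmod2_cases : ∀ a : ZMod 2, a = 0 ∨ a = 1 := by decide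

lemma count_odd_even_wt (N : ℕ) [NeZero N] :
    (Finset.univ.filter (fun b : ZMod N → ZMod 2 => Odd (wt N b))).card = 2 ^ (N - 1) ∧
    (Finset.univ.filter (fun b : ZMod N → ZMod 2 => ¬ Odd (wt N b))).card = 2 ^ (N - 1) := by
  classical
  set flip : (ZMod N → ZMod 2) → (ZMod N → ZMod 2) :=
    fun b => Function.update b 0 (b 0 + 1) with hflip
  have hwt : ∀ b : ZMod N → ZMod 2, Odd (wt N (flip b)) ↔ ¬ Odd (wt N b) := by
    intro b
    rcases zmod2_cases (b 0) with h0 | h0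
    · have hset : Finset.univ.filter (fun i => flip b i = 1) =
          insert 0 (Finset.univ.filter (fun i => b i = 1)) := by
        ext i
        by_cases hi : i = (0 : ZMod N)
        · subst hi
          simp [hflip, Function.update_self, h0]
        · simp [hflip, Function.update_of_ne hi, hi]
      have h0n : (0 : ZMod N) ∉ Finset.univ.filter (fun i => b i = 1) := by
        simp [h0]
      have : wt N (flip b) = wt N b + 1 := by
        unfold wt
        rw [hset, Finset.card_insert_of_notMem h0n]
      rw [this, Nat.odd_iff, Nat.odd_iff]
      omega
    · have hset : Finset.univ.filter (fun i => flip b i = 1) =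
          (Finset.univ.filter (fun i => b i = 1)).erase 0 := by
        ext i
        by_cases hi : i = (0 : ZMod N)
        · subst hi
          simp [hflip, Function.update_self, h0]
        · simp [hflip, Function.update_of_ne hi, hi]
      have h0n : (0 : ZMod N) ∈ Finset.univ.filter (fun i => b i = 1) := by
        simp [h0]
      have hcard : wt N (flip b) = wt N b - 1 := by
        unfold wt
        rw [hset, Finset.card_erase_of_mem h0n]
      have hpos : 1 ≤ wt N b := by
        unfold wt
        exact Finset.card_pos.mpr ⟨0, h0n⟩
      rw [hcard, Nat.odd_iff, Nat.odd_iff]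
      omega
  have hinv : ∀ b, flip (flip b) = b := by
    intro b
    simp only [hflip]
    rw [Function.update_self, Function.update_idem]
    have : b 0 + 1 + 1 = b 0 := by
      rcases zmod2_cases (b 0) with h | h <;> rw [h] <;> rfl
    rw [this, Function.update_eq_self]
  have hAB : (Finset.univ.filter (fun b : ZMod N → ZMod 2 => Odd (wt N b))).card =
      (Finset.univ.filter (fun b : ZMod N → ZMod 2 => ¬ Odd (wt N b))).card := by
    apply Finset.card_nbij' flip flip
    · intro b hb
      simp only [Finset.mem_coe, Finset.mem_filter, Finset.mem_univ, true_and] at hb ⊢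
      rw [hwt b]
      simpa using hb
    · intro b hb
      simp only [Finset.mem_coe, Finset.mem_filter, Finset.mem_univ, true_and] at hb ⊢
      exact (hwt b).mpr hb
    · intro b _; exact hinv b
    · intro b _; exact hinv b
  have htot : (Finset.univ.filter (fun b : ZMod N → ZMod 2 => Odd (wt N b))).card +
      (Finset.univ.filter (fun b : ZMod N → ZMod 2 => ¬ Odd (wt N b))).card = 2 ^ N := by
    rw [Finset.card_filter_add_card_filter_not]
    rw [Finset.card_univ]
    rw [Fintype.card_fun]
    simp [ZMod.card]
  have hpow : 2 ^ N = 2 ^ (N - 1) + 2 ^ (N - 1) := by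
    have hN : N = (N - 1) + 1 := (Nat.succ_pred_eq_of_pos (Nat.pos_of_ne_zero (NeZero.ne N))).symm
    conv_lhs => rw [hN, pow_succ]
    omega
  constructor <;> omega

lemma count_odd_wt (N : ℕ) [NeZero N] :
    (Finset.univ.filter (fun b : ZMod N → ZMod 2 => Odd (wt N b))).card = 2 ^ (N - 1) :=
  (count_odd_even_wt N).1

end Parity

section BwtMul

variable {M : ℕ} [NeZero M]

lemma bwt_mul {c : ℕ} {x : ZMod M → ZMod 2} (h : Per M c x) (q : ℕ) :
    bwt M (q * c) x = q * bwt M c x := by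
  induction q with
  | zero => simp [bwt]
  | succ n ih =>
    have hqc : (n + 1) * c = n * c + c := by ring
    rw [hqc]
    unfold bwt at ih ⊢
    rw [Finset.range_add, Finset.filter_union, Finset.card_union_of_disjoint, ih]
    · have hmap : ((Finset.range c).map (addLeftEmbedding (n * c))).filter
          (fun j : ℕ => x ((j : ZMod M)) = 1) =
          ((Finset.range c).filter (fun j : ℕ => x (((n * c + j : ℕ) : ZMod M)) = 1)).map
            (addLeftEmbedding (n * c)) := by
        rw [Finset.filter_map]
        rfl
      rw [hmap, Finset.card_map]
      have : ∀ j, (x (((n * c + j : ℕ) : ZMod M)) = 1) ↔ (x ((j : ZMod M)) = 1) := by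
        intro j
        have : ((n * c + j : ℕ) : ZMod M) = ((j : ℕ) : ZMod M) + ((n * c : ℕ) : ZMod M) := by
          push_cast; ring
        rw [this, per_nat h n]
      rw [Finset.filter_congr (fun j _ => this j)]
      ring
    · apply Finset.disjoint_filter_filter
      rw [Finset.disjoint_left]
      intro a ha hb
      simp only [Finset.mem_range] at ha
      simp only [Finset.mem_map, Finset.mem_range, addLeftEmbedding_apply] at hb
      obtain ⟨b, _, rfl⟩ := hb
      omega

end BwtMul

section Counts

variable {M : ℕ} [NeZero M]

lemma fermionic_iff_odd_wt (x : ZMod M → ZMod 2) : Fermionic M x ↔ Odd (wt M x) := Iff.rfl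

lemma bosonic_iff_not_fermionic (x : ZMod M → ZMod 2) : Bosonic M x ↔ ¬ Fermionic M x := by
  unfold Bosonic Fermionic
  exact (Nat.not_odd_iff_even.symm)

lemma vanishing_iff' (x : ZMod M → ZMod 2) :
    Vanishing M x ↔ ∃ e : ℕ, e ∣ M ∧ Even (M / e) ∧ Per M e x ∧ Odd (bwt M e x) := Iff.rfl

lemma count_fer {d : ℕ} (hd : d ∣ M) :
    (Finset.univ.filter (fun x : ZMod M → ZMod 2 => Per M d x ∧ Fermionic M x)).card =
      if Odd (M / d) then 2 ^ (d - 1) else 0 := by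
  haveI : NeZero d := neZero_of_dvd hd
  rw [count_per hd]
  have hcond : ∀ b : ZMod d → ZMod 2,
      Fermionic M (b ∘ (ZMod.castHom hd (ZMod d))) ↔ (Odd (M / d) ∧ Odd (wt d b)) := by
    intro b
    rw [fermionic_iff_odd_wt, wt_comp hd, Nat.odd_mul]
  by_cases hodd : Odd (M / d)
  · rw [if_pos hodd]
    rw [Finset.filter_congr (fun b _ => by rw [hcond b, and_iff_right hodd])]
    exact count_odd_wt d
  · rw [if_neg hodd]
    rw [Finset.card_eq_zero]
    apply Finset.filter_false_of_mem
    intro b _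
    rw [hcond b]
    tauto

lemma count_all_per {d : ℕ} (hd : d ∣ M) :
    (Finset.univ.filter (fun x : ZMod M → ZMod 2 => Per M d x)).card = 2 ^ d := by
  haveI : NeZero d := neZero_of_dvd hd
  have h1 : (Finset.univ.filter (fun x : ZMod M → ZMod 2 => Per M d x)) =
      (Finset.univ.filter (fun x : ZMod M → ZMod 2 => Per M d x ∧ True)) := by
    simp
  rw [h1, count_per hd (fun _ => True)]
  simp only [Finset.filter_true, Finset.card_univ]
  rw [Fintype.card_fun]
  simp [ZMod.card]

end Counts

section GPsec

/-- the "vanishing-like" predicate for words on `ZMod m` -/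
def GP (m : ℕ) (b : ZMod m → ZMod 2) : Prop :=
  ∃ c : ℕ, c ∣ m ∧ Per m c b ∧ Odd (bwt m c b)

instance gpDecidable (m : ℕ) [NeZero m] : DecidablePred (GP m) := fun b => by
  haveI : Decidable (∃ c ∈ Finset.range (m + 1), c ∣ m ∧ Per m c b ∧ Odd (bwt m c b)) := by
    infer_instance
  apply decidable_of_iff
    (∃ c ∈ Finset.range (m + 1), c ∣ m ∧ Per m c b ∧ Odd (bwt m c b))
    (by constructor
        · rintro ⟨c, -, h⟩; exact ⟨c, h⟩
        · rintro ⟨c, h⟩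
          refine ⟨c, Finset.mem_range.mpr ?_, h⟩
          have := Nat.le_of_dvd (Nat.pos_of_ne_zero (NeZero.ne m)) h.1
          omega)

noncomputable def Gcount (m : ℕ) : ℕ :=
  Nat.card {b : ZMod m → ZMod 2 // GP m b}

lemma Gcount_eq_filter (m : ℕ) [NeZero m] :
    Gcount m = (Finset.univ.filter (fun b : ZMod m → ZMod 2 => GP m b)).card := by
  rw [Gcount, Nat.card_eq_fintype_card, Fintype.card_subtype]

variable {M : ℕ} [NeZero M]

lemma vanishing_bosonic {x : ZMod M → ZMod 2} (h : Vanishing M x) : Bosonic M x := by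
  obtain ⟨e, he, heven, hper, hodd⟩ := h
  haveI : NeZero e := neZero_of_dvd he
  have hx : (blockOf e x) ∘ (ZMod.castHom he (ZMod e)) = x := comp_pi_eq he hper
  unfold Bosonic
  have hwt : wt M x = (M / e) * wt e (blockOf e x) := by
    conv_lhs => rw [← hx]
    exact wt_comp he _
  show Even (wt M x)
  rw [hwt]
  exact heven.mul_right _

/-- auxiliary predicate -/
def GPX (M h : ℕ) [NeZero M] (x : ZMod M → ZMod 2) : Prop :=
  ∃ c : ℕ, c ∣ h ∧ Per M c x ∧ Odd (bwt M c x)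

instance gpxDecidable (M h : ℕ) [NeZero M] [NeZero h] : DecidablePred (GPX M h) := fun x => by
  haveI : Decidable (∃ c ∈ Finset.range (h + 1), c ∣ h ∧ Per M c x ∧ Odd (bwt M c x)) := by
    infer_instance
  apply decidable_of_iff
    (∃ c ∈ Finset.range (h + 1), c ∣ h ∧ Per M c x ∧ Odd (bwt M c x))
    (by constructor
        · rintro ⟨c, -, hh⟩; exact ⟨c, hh⟩
        · rintro ⟨c, hh⟩
          refine ⟨c, Finset.mem_range.mpr ?_, hh⟩
          have := Nat.le_of_dvd (Nat.pos_of_ne_zero (NeZero.ne h)) hh.1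
          omega)

/-- characterization of `Per d ∧ Vanishing` via the gcd with `M/2` -/
lemma per_vanishing_iff {d : ℕ} (hd : d ∣ M) (hM : 2 ∣ M) (x : ZMod M → ZMod 2) :
    (Per M d x ∧ Vanishing M x) ↔
      (Per M (Nat.gcd d (M / 2)) x ∧ GPX M (Nat.gcd d (M / 2)) x) := by
  unfold GPX
  set h := Nat.gcd d (M / 2) with hh
  constructor
  · rintro ⟨hper, e, he, heven, hpe, hodd⟩
    set c := Nat.gcd e d with hc
    have hce : c ∣ e := Nat.gcd_dvd_left e d
    have hpc : Per M c x := per_gcd hpe hper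
    have hcM2 : c ∣ M / 2 := by
      have h2e : e ∣ M / 2 := by
        obtain ⟨t, ht⟩ := heven
        have hMet : M = e * (t + t) := by
          rw [← ht]
          exact (Nat.mul_div_cancel' he).symm
        have h2 : M / 2 = e * t := by
          rw [hMet, show e * (t + t) = e * t * 2 by ring]
          exact Nat.mul_div_cancel _ two_pos
        exact h2 ▸ Dvd.intro t rfl
      exact hce.trans h2e
    have hch : c ∣ h := Nat.dvd_gcd (Nat.gcd_dvd_right e d) hcM2
    refine ⟨per_of_dvd hpc hch, c, hch, hpc, ?_⟩
    have hec : e = (e / c) * c := (Nat.div_mul_cancel hce).symm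
    have hodd' : Odd (bwt M e x) := hodd
    rw [hec, bwt_mul hpc] at hodd'
    exact (Nat.odd_mul.mp hodd').2
  · rintro ⟨hperh, c, hch, hpc, hodd⟩
    have hhd : h ∣ d := Nat.gcd_dvd_left d (M / 2)
    refine ⟨per_of_dvd hperh hhd, c, ?_, ?_, hpc, hodd⟩
    · exact (hch.trans (Nat.gcd_dvd_right d (M / 2))).trans (Nat.div_dvd_of_dvd hM)
    · have hcM2 : c ∣ M / 2 := hch.trans (Nat.gcd_dvd_right d (M / 2))
      obtain ⟨s, hs⟩ := hcM2
      have hM2 : M = 2 * (M / 2) := by omega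
      have hc0 : c ≠ 0 := by
        rintro rfl
        simp at hs
        have := NeZero.ne M
        omega
      have : M / c = 2 * s := by
        rw [hM2, hs]
        rw [show 2 * (c * s) = c * (2 * s) by ring]
        exact Nat.mul_div_cancel_left _ (Nat.pos_of_ne_zero hc0)
      rw [this]
      exact even_two_mul s

lemma not_vanishing_of_odd (hM : ¬ 2 ∣ M) (x : ZMod M → ZMod 2) : ¬ Vanishing M x := by
  rintro ⟨e, he, heven, -, -⟩
  apply hM
  have hMe : M = e * (M / e) := (Nat.mul_div_cancel' he).symm
  rcases heven with ⟨t, ht⟩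
  exact ⟨e * t, by rw [hMe, ht]; ring⟩

lemma count_van {d : ℕ} (hd : d ∣ M) (hM : 2 ∣ M) :
    (Finset.univ.filter (fun x : ZMod M → ZMod 2 => Per M d x ∧ Vanishing M x)).card =
      Gcount (Nat.gcd d (M / 2)) := by
  set h := Nat.gcd d (M / 2) with hh
  have hhM : h ∣ M := (Nat.gcd_dvd_right d (M / 2)).trans (Nat.div_dvd_of_dvd hM)
  haveI : NeZero h := neZero_of_dvd hhM
  rw [Finset.filter_congr (fun x _ => by
    rw [per_vanishing_iff hd hM x])]
  rw [count_per hhM, Gcount_eq_filter]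
  congr 1
  apply Finset.filter_congr
  intro b _
  constructor
  · rintro ⟨c, hch, hpc, hodd⟩
    exact ⟨c, hch, (per_comp_iff hhM b c).mp hpc, by rwa [bwt_comp hhM] at hodd⟩
  · rintro ⟨c, hch, hpc, hodd⟩
    exact ⟨c, hch, (per_comp_iff hhM b c).mpr hpc, by rwa [bwt_comp hhM]⟩

end GPsec

section GRec

lemma odd_div_of_odd {m c : ℕ} (hm : Odd m) (hc : c ∣ m) : Odd (m / c) := by
  rcases Nat.even_or_odd (m / c) with he | ho
  · exfalso
    have h := Nat.div_mul_cancel hc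
    have : Even m := by rw [← h]; exact he.mul_right c
    exact (Nat.not_odd_iff_even.mpr this) hm
  · exact ho

lemma wt_eq_mul_bwt {m c : ℕ} [NeZero m] {b : ZMod m → ZMod 2} (hc : c ∣ m)
    (hpc : Per m c b) : wt m b = (m / c) * bwt m c b := by
  have h1 : wt m b = bwt m m b := (bwt_self m b).symm
  have h2 : m = (m / c) * c := (Nat.div_mul_cancel hc).symm
  have h4 : bwt m m b = bwt m ((m / c) * c) b := congrArg (fun t => bwt m t b) h2
  rw [h1, h4, bwt_mul hpc]

lemma gp_iff_odd_wt_of_odd {m : ℕ} [NeZero m] (hm : Odd m) (b : ZMod m → ZMod 2) :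
    GP m b ↔ Odd (wt m b) := by
  constructor
  · rintro ⟨c, hc, hpc, hodd⟩
    rw [wt_eq_mul_bwt hc hpc]
    exact (odd_div_of_odd hm hc).mul hodd
  · intro h
    exact ⟨m, dvd_refl m, per_self b, by rwa [bwt_self]⟩

lemma Gcount_odd {m : ℕ} [NeZero m] (hm : Odd m) : Gcount m = 2 ^ (m - 1) := by
  rw [Gcount_eq_filter]
  rw [Finset.filter_congr (fun b (_ : b ∈ Finset.univ) => gp_iff_odd_wt_of_odd hm b)]
  exact count_odd_wt m

lemma per_even_wt {m : ℕ} [NeZero m] (hm : 2 ∣ m) (b : ZMod m → ZMod 2)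
    (h : Per m (m / 2) b) : Even (wt m b) := by
  rw [wt_eq_mul_bwt (Nat.div_dvd_of_dvd hm) h]
  have : m / (m / 2) = 2 := Nat.div_div_self hm (NeZero.ne m)
  rw [this]
  exact ⟨bwt m (m / 2) b, by ring⟩

lemma gp_rec {m : ℕ} [NeZero m] (hm : 2 ∣ m) (b : ZMod m → ZMod 2) :
    GP m b ↔ (Odd (wt m b) ∨ (Per m (m / 2) b ∧ GPX m (m / 2) b)) := by
  constructor
  · rintro ⟨c, hc, hpc, hodd⟩
    rcases Nat.even_or_odd (m / c) with he | ho
    · right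
      have hc2 : c ∣ m / 2 := by
        rcases he with ⟨t, ht⟩
        have h1 : m = c * (m / c) := (Nat.mul_div_cancel' hc).symm
        have h2 : m = c * t * 2 := by rw [h1, ht]; ring
        have h3 : m / 2 = c * t := by rw [h2]; exact Nat.mul_div_cancel _ two_pos
        exact h3 ▸ Dvd.intro t rfl
      exact ⟨per_of_dvd hpc hc2, c, hc2, hpc, hodd⟩
    · left
      rw [wt_eq_mul_bwt hc hpc]
      exact ho.mul hodd
  · rintro (h | ⟨hper, c, hc, hpc, hodd⟩)
    · exact ⟨m, dvd_refl m, per_self b, by rwa [bwt_self]⟩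
    · exact ⟨c, hc.trans (Nat.div_dvd_of_dvd hm), hpc, hodd⟩

lemma Gcount_even {m : ℕ} [NeZero m] (hm : 2 ∣ m) :
    Gcount m = 2 ^ (m - 1) + Gcount (m / 2) := by
  have hm0 : m ≠ 0 := NeZero.ne m
  haveI : NeZero (m / 2) := ⟨by omega⟩
  have hm2 : (m / 2) ∣ m := Nat.div_dvd_of_dvd hm
  rw [Gcount_eq_filter]
  rw [Finset.filter_congr (fun b (_ : b ∈ Finset.univ) => gp_rec hm b)]
  rw [Finset.filter_or]
  rw [Finset.card_union_of_disjoint]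
  · congr 1
    · exact count_odd_wt m
    · have h1 : (Finset.univ.filter (fun b : ZMod m → ZMod 2 =>
          Per m (m / 2) b ∧ GPX m (m / 2) b)).card =
          (Finset.univ.filter (fun b' : ZMod (m / 2) → ZMod 2 =>
            GPX m (m / 2) (b' ∘ (ZMod.castHom hm2 (ZMod (m / 2)))))).card :=
        count_per hm2 (GPX m (m / 2))
      rw [h1, Gcount_eq_filter]
      congr 1
      apply Finset.filter_congr
      intro b _
      unfold GPX GP
      constructor
      · rintro ⟨c, hch, hpc, hodd⟩
        exact ⟨c, hch, (per_comp_iff hm2 b c).mp hpc, by rwa [bwt_comp hm2] at hodd⟩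
      · rintro ⟨c, hch, hpc, hodd⟩
        exact ⟨c, hch, (per_comp_iff hm2 b c).mpr hpc, by rwa [bwt_comp hm2]⟩
  · rw [Finset.disjoint_left]
    intro b hb hb2
    simp only [Finset.mem_filter, Finset.mem_univ, true_and] at hb hb2
    have := per_even_wt hm b hb2.1
    rw [← Nat.not_odd_iff_even] at this
    exact this hb

/-- powers of two -/
def TP (n : ℕ) : Prop := ∃ j : ℕ, n = 2 ^ j

instance : DecidablePred TP := fun n => by
  apply decidable_of_iff (∃ j ∈ Finset.range (n + 1), n = 2 ^ j)
  constructor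
  · rintro ⟨j, -, h⟩; exact ⟨j, h⟩
  · rintro ⟨j, h⟩
    refine ⟨j, Finset.mem_range.mpr ?_, h⟩
    have := Nat.lt_two_pow_self (n := j)
    omega

lemma Gcount_closed : ∀ m : ℕ, m ≠ 0 →
    Gcount m = ∑ e ∈ m.divisors.filter (fun e => TP (m / e)), 2 ^ (e - 1) := by
  intro m
  induction m using Nat.strong_induction_on with
  | _ m ih =>
    intro hm0
    haveI : NeZero m := ⟨hm0⟩
    rcases Nat.even_or_odd m with he | ho
    · have h2m : 2 ∣ m := he.two_dvd
      have hm2 : m / 2 ≠ 0 := by omega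
      have hrec := Gcount_even h2m
      have hIH := ih (m / 2) (by omega) hm2
      have hset : m.divisors.filter (fun e => TP (m / e)) =
          insert m ((m / 2).divisors.filter (fun e => TP (m / 2 / e))) := by
        ext e
        simp only [Finset.mem_insert, Finset.mem_filter, Nat.mem_divisors]
        constructor
        · rintro ⟨⟨hdvd, -⟩, j, hj⟩
          have he0 : e ≠ 0 := by rintro rfl; rw [Nat.zero_dvd] at hdvd; exact hm0 hdvd
          rcases j with _ | j'
          · left
            have h1 : m / e = 1 := by simpa using hj
            have he' : e * (m / e) = m := Nat.mul_div_cancel' hdvd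
            rw [h1] at he'
            omega
          · right
            have hme : m = e * 2 ^ (j' + 1) := by
              rw [← hj]
              exact (Nat.mul_div_cancel' hdvd).symm
            have hm2e : m / 2 = e * 2 ^ j' := by
              rw [hme, pow_succ, show e * (2 ^ j' * 2) = e * 2 ^ j' * 2 by ring]
              exact Nat.mul_div_cancel _ two_pos
            refine ⟨⟨⟨2 ^ j', hm2e⟩, hm2⟩, j', ?_⟩
            rw [hm2e]
            exact Nat.mul_div_cancel_left _ (Nat.pos_of_ne_zero he0)
        · rintro (rfl | ⟨⟨hdvd, -⟩, j, hj⟩)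
          · refine ⟨⟨dvd_refl _, hm0⟩, 0, ?_⟩
            rw [Nat.div_self (Nat.pos_of_ne_zero hm0), pow_zero]
          · have he0 : e ≠ 0 := by rintro rfl; rw [Nat.zero_dvd] at hdvd; exact hm2 hdvd
            have hm2e : m / 2 = e * 2 ^ j := by
              rw [← hj]; exact (Nat.mul_div_cancel' hdvd).symm
            have hme : m = e * 2 ^ (j + 1) := by
              have hh : m = 2 * (m / 2) := by omega
              rw [hh, hm2e]; ring
            refine ⟨⟨⟨2 ^ (j + 1), hme⟩, hm0⟩, j + 1, ?_⟩
            rw [hme]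
            exact Nat.mul_div_cancel_left _ (Nat.pos_of_ne_zero he0)
      have hnotmem : m ∉ (m / 2).divisors.filter (fun e => TP (m / 2 / e)) := by
        simp only [Finset.mem_filter, Nat.mem_divisors]
        rintro ⟨⟨hdvd, -⟩, -⟩
        have := Nat.le_of_dvd (Nat.pos_of_ne_zero hm2) hdvd
        omega
      rw [hset, Finset.sum_insert hnotmem, hrec, hIH]
    · have hGC := Gcount_odd ho
      have hset : m.divisors.filter (fun e => TP (m / e)) = {m} := by
        ext e
        simp only [Finset.mem_filter, Nat.mem_divisors, Finset.mem_singleton]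
        constructor
        · rintro ⟨⟨hdvd, -⟩, j, hj⟩
          have hodd : Odd (m / e) := odd_div_of_odd ho hdvd
          rcases j with _ | j'
          · have h1 : m / e = 1 := by simpa using hj
            have he' : e * (m / e) = m := Nat.mul_div_cancel' hdvd
            rw [h1] at he'; omega
          · exfalso
            rw [hj, Nat.odd_iff] at hodd
            have h2 : 2 ∣ 2 ^ (j' + 1) := dvd_pow_self 2 (Nat.succ_ne_zero j')
            omega
        · rintro rfl
          refine ⟨⟨dvd_refl _, hm0⟩, 0, ?_⟩
          rw [Nat.div_self (Nat.pos_of_ne_zero hm0), pow_zero]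
      rw [hset, Finset.sum_singleton, hGC]

end GRec

section Burnside

variable {M : ℕ} [NeZero M]

lemma rot_rot (k l : ZMod M) (x : ZMod M → ZMod 2) :
    rot M l (rot M k x) = rot M (k + l) x := by
  funext i
  show x (i + l + k) = x (i + (k + l))
  congr 1
  ring

lemma rot_zero (x : ZMod M → ZMod 2) : rot M 0 x = x := by
  funext i
  show x (i + 0) = x i
  rw [add_zero]

lemma rotOrbit_rot (k : ZMod M) (x : ZMod M → ZMod 2) :
    rotOrbit M (rot M k x) = rotOrbit M x := by
  ext y
  constructor
  · rintro ⟨l, rfl⟩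
    exact ⟨k + l, rot_rot k l x⟩
  · rintro ⟨l, rfl⟩
    refine ⟨l - k, ?_⟩
    rw [rot_rot]
    congr 1
    ring

lemma mem_rotOrbit_self (x : ZMod M → ZMod 2) : x ∈ rotOrbit M x :=
  ⟨0, (rot_zero x).symm⟩

lemma orbit_count (P : (ZMod M → ZMod 2) → Prop) [DecidablePred P]
    (hP : ∀ (k : ZMod M) (x : ZMod M → ZMod 2), P x → P (rot M k x)) :
    Nat.card {S : Set (ZMod M → ZMod 2) // ∃ x, P x ∧ S = rotOrbit M x} * M =
      ∑ k : ZMod M,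
        (Finset.univ.filter (fun x : ZMod M → ZMod 2 => P x ∧ rot M k x = x)).card := by
  classical
  letI act : AddAction (ZMod M) {x : ZMod M → ZMod 2 // P x} := {
    vadd := fun k x => ⟨rot M k x.1, hP k x.1 x.2⟩
    zero_vadd := fun x => Subtype.ext (rot_zero x.1)
    add_vadd := fun a b x => Subtype.ext (by
      show rot M (a + b) x.1 = rot M a (rot M b x.1)
      rw [rot_rot]
      congr 1
      ring) }
  have burnside := AddAction.sum_card_fixedBy_eq_card_orbits_mul_card_addGroup
    (ZMod M) {x : ZMod M → ZMod 2 // P x}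
  have hcard : ∀ k : ZMod M,
      Fintype.card (AddAction.fixedBy {x : ZMod M → ZMod 2 // P x} k) =
      (Finset.univ.filter (fun x : ZMod M → ZMod 2 => P x ∧ rot M k x = x)).card := by
    intro k
    have e : (AddAction.fixedBy {x : ZMod M → ZMod 2 // P x} k) ≃
        {x : ZMod M → ZMod 2 // P x ∧ rot M k x = x} := {
      toFun := fun s => ⟨s.1.1, s.1.2, congrArg Subtype.val s.2⟩
      invFun := fun s => ⟨⟨s.1, s.2.1⟩, Subtype.ext s.2.2⟩
      left_inv := fun s => rfl
      right_inv := fun s => rfl }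
    rw [Fintype.card_congr e, Fintype.card_subtype]
  have equot : Quotient (AddAction.orbitRel (ZMod M) {x : ZMod M → ZMod 2 // P x}) ≃
      {S : Set (ZMod M → ZMod 2) // ∃ x, P x ∧ S = rotOrbit M x} := by
    refine Equiv.ofBijective
      (Quotient.lift (fun a : {x : ZMod M → ZMod 2 // P x} =>
        (⟨rotOrbit M a.1, ⟨a.1, a.2, rfl⟩⟩ :
          {S : Set (ZMod M → ZMod 2) // ∃ x, P x ∧ S = rotOrbit M x})) ?_) ⟨?_, ?_⟩
    · intro a b hab
      obtain ⟨g, hg⟩ := hab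
      have : a.1 = rot M g b.1 := (congrArg Subtype.val hg).symm
      apply Subtype.ext
      show rotOrbit M a.1 = rotOrbit M b.1
      rw [this, rotOrbit_rot]
    · intro qa qb
      induction qa using Quotient.ind with
      | _ a =>
        induction qb using Quotient.ind with
        | _ b =>
          intro hab
          have h1 : rotOrbit M a.1 = rotOrbit M b.1 := congrArg Subtype.val hab
          have h2 : a.1 ∈ rotOrbit M b.1 := h1 ▸ mem_rotOrbit_self a.1
          obtain ⟨l, hl⟩ := h2
          apply Quotient.sound
          exact ⟨l, Subtype.ext hl.symm⟩
    · rintro ⟨S, x, hx, rfl⟩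
      exact ⟨⟦⟨x, hx⟩⟧, rfl⟩
  calc Nat.card {S : Set (ZMod M → ZMod 2) // ∃ x, P x ∧ S = rotOrbit M x} * M
      = Fintype.card (Quotient (AddAction.orbitRel (ZMod M) {x : ZMod M → ZMod 2 // P x}))
          * Fintype.card (ZMod M) := by
        rw [← Nat.card_congr equot, Nat.card_eq_fintype_card, ZMod.card]
    _ = ∑ k : ZMod M, Fintype.card (AddAction.fixedBy {x : ZMod M → ZMod 2 // P x} k) :=
        burnside.symm
    _ = ∑ k : ZMod M,
        (Finset.univ.filter (fun x : ZMod M → ZMod 2 => P x ∧ rot M k x = x)).card :=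
        Finset.sum_congr rfl (fun k _ => hcard k)

lemma regroup (f : ℕ → ℕ) :
    ∑ k : ZMod M, f (Nat.gcd (ZMod.val k) M) =
      ∑ d ∈ M.divisors, Nat.totient (M / d) * f d := by
  have h1 : ∑ k : ZMod M, f (Nat.gcd (ZMod.val k) M) =
      ∑ v ∈ Finset.range M, f (Nat.gcd v M) := by
    apply Finset.sum_nbij' (fun k : ZMod M => ZMod.val k) (fun v : ℕ => (v : ZMod M))
    · intro k _
      exact Finset.mem_range.mpr (ZMod.val_lt k)
    · intro v _
      exact Finset.mem_univ _
    · intro k _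
      exact ZMod.natCast_rightInverse k
    · intro v hv
      exact ZMod.val_cast_of_lt (Finset.mem_range.mp hv)
    · intro k _
      rfl
  rw [h1, ← Finset.sum_fiberwise_of_maps_to
    (t := M.divisors) (g := fun v => Nat.gcd M v)
    (fun v _ => Nat.mem_divisors.mpr ⟨Nat.gcd_dvd_left M v, NeZero.ne M⟩)
    (fun v => f (Nat.gcd v M))]
  apply Finset.sum_congr rfl
  intro d hd
  have hdM : d ∣ M := (Nat.mem_divisors.mp hd).1
  have hcong : ∀ v ∈ (Finset.range M).filter (fun v => Nat.gcd M v = d),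
      f (Nat.gcd v M) = f d := by
    intro v hv
    simp only [Finset.mem_filter] at hv
    rw [Nat.gcd_comm, hv.2]
  rw [Finset.sum_congr rfl hcong, Finset.sum_const, smul_eq_mul,
    ← Nat.totient_div_of_dvd hdM]

end Burnside

section Invariance

variable {M : ℕ} [NeZero M]

lemma fermionic_rot (k : ZMod M) (x : ZMod M → ZMod 2) (h : Fermionic M x) :
    Fermionic M (rot M k x) := by
  rw [fermionic_iff_odd_wt] at h ⊢
  rwa [wt_rot]

lemma vanishing_rot (k : ZMod M) (x : ZMod M → ZMod 2) (h : Vanishing M x) :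
    Vanishing M (rot M k x) := by
  obtain ⟨e, he, heven, hper, hodd⟩ := h
  have hper' : Per M e (rot M k x) := by
    intro i
    show x (i + (e : ZMod M) + k) = x (i + k)
    rw [show i + (e : ZMod M) + k = i + k + (e : ZMod M) by ring]
    exact hper (i + k)
  haveI : NeZero e := neZero_of_dvd he
  refine ⟨e, he, heven, hper', ?_⟩
  show Odd (bwt M e (rot M k x))
  rw [bwt_rot he hper k]
  exact hodd

lemma bos_nonvan_rot (k : ZMod M) (x : ZMod M → ZMod 2)
    (h : Bosonic M x ∧ ¬ Vanishing M x) : Bosonic M (rot M k x) ∧ ¬ Vanishing M (rot M k x) := by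
  constructor
  · rw [bosonic_iff_not_fermionic] at h ⊢
    intro hf
    apply h.1
    rw [fermionic_iff_odd_wt] at hf ⊢
    rwa [wt_rot] at hf
  · intro hv
    apply h.2
    have h0 : rot M (-k) (rot M k x) = x := by
      rw [rot_rot, add_neg_cancel, rot_zero]
    have := vanishing_rot (-k) _ hv
    rwa [h0] at this

end Invariance

section Arith

lemma div_helper {a b c : ℕ} (hb : b ≠ 0) (h : a = b * c) : a / b = c := by
  rw [h]
  exact Nat.mul_div_cancel_left _ (Nat.pos_of_ne_zero hb)

variable {M : ℕ} [NeZero M]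

lemma gcd_div_eq {d e : ℕ} (he_d : e ∣ d) (heM : e ∣ M / 2) (he0 : e ≠ 0) :
    Nat.gcd d (M / 2) / e = Nat.gcd (d / e) (M / 2 / e) := by
  have h1 : Nat.gcd (e * (d / e)) (e * (M / 2 / e)) = e * Nat.gcd (d / e) (M / 2 / e) :=
    Nat.gcd_mul_left e _ _
  rw [Nat.mul_div_cancel' he_d, Nat.mul_div_cancel' heM] at h1
  rw [h1]
  exact Nat.mul_div_cancel_left _ (Nat.pos_of_ne_zero he0)

lemma cond_iff (hM : 2 ∣ M) {d e : ℕ} (hd : d ∣ M) (hd0 : d ≠ 0) :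
    (e ∣ Nat.gcd d (M / 2) ∧ TP (Nat.gcd d (M / 2) / e)) ↔
      (e ∣ d ∧ TP (d / e) ∧ e ∣ M / 2) := by
  constructor
  · rintro ⟨heg, a, hge⟩
    have he_d : e ∣ d := heg.trans (Nat.gcd_dvd_left _ _)
    have heM : e ∣ M / 2 := heg.trans (Nat.gcd_dvd_right _ _)
    have he0 : e ≠ 0 := by rintro rfl; rw [Nat.zero_dvd] at he_d; exact hd0 he_d
    refine ⟨he_d, ?_, heM⟩
    set t := d / e with ht
    have ht0 : t ≠ 0 := by
      rw [ht]
      have h1 : e ≤ d := Nat.le_of_dvd (Nat.pos_of_ne_zero hd0) he_d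
      have h2 : 0 < d / e := Nat.div_pos h1 (Nat.pos_of_ne_zero he0)
      omega
    have hprime : ∀ p : ℕ, p.Prime → p ∣ t → p = 2 := by
      intro p hp hpt
      by_contra hp2
      -- p divides M/e
      have hMe : M / e = t * (M / d) := by
        apply div_helper he0
        have hMd : M = d * (M / d) := (Nat.mul_div_cancel' hd).symm
        have hde : d = e * t := (Nat.mul_div_cancel' he_d).symm
        calc M = d * (M / d) := hMd
          _ = e * (t * (M / d)) := by nth_rw 1 [hde]; ring
      have hMe2 : M / e = 2 * (M / 2 / e) := by
        apply div_helper he0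
        have hs : M / 2 = e * (M / 2 / e) := (Nat.mul_div_cancel' heM).symm
        calc M = 2 * (M / 2) := by omega
          _ = e * (2 * (M / 2 / e)) := by nth_rw 1 [hs]; ring
      have hps : p ∣ M / 2 / e := by
        have h1 : p ∣ M / e := hpt.trans ⟨M / d, hMe⟩
        rw [hMe2] at h1
        rcases (Nat.Prime.dvd_mul hp).mp h1 with h2 | h2
        · exfalso
          have := Nat.le_of_dvd two_pos h2
          have := hp.two_le
          omega
        · exact h2
      have hpg : p ∣ Nat.gcd t (M / 2 / e) := Nat.dvd_gcd hpt hps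
      rw [← gcd_div_eq he_d heM he0, hge] at hpg
      have := hp.dvd_of_dvd_pow (n := a) (by rwa [])
      have := Nat.le_of_dvd two_pos this
      have := hp.two_le
      omega
    have := Nat.eq_prime_pow_of_unique_prime_dvd ht0 (fun {q} hq hqt => hprime q hq hqt)
    exact ⟨_, this⟩
  · rintro ⟨he_d, ⟨a, hde⟩, heM⟩
    have he0 : e ≠ 0 := by rintro rfl; rw [Nat.zero_dvd] at he_d; exact hd0 he_d
    refine ⟨Nat.dvd_gcd he_d heM, ?_⟩
    rw [gcd_div_eq he_d heM he0]
    have h1 : Nat.gcd (d / e) (M / 2 / e) ∣ d / e := Nat.gcd_dvd_left _ _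
    rw [hde] at h1
    obtain ⟨m, -, hm⟩ := (Nat.dvd_prime_pow Nat.prime_two).mp h1
    rw [hde]
    exact ⟨m, hm⟩

lemma inner_sum (hM : 2 ∣ M) {e : ℕ} (heM : e ∣ M) (he2 : e ∣ M / 2) :
    ∑ d ∈ M.divisors.filter (fun d => e ∣ d ∧ TP (d / e)), Nat.totient (M / d)
      = 2 * Nat.totient (M / e) := by
  have hM0 : M ≠ 0 := NeZero.ne M
  have he0 : e ≠ 0 := by rintro rfl; rw [Nat.zero_dvd] at heM; exact hM0 heM
  set N := M / e with hN
  have hMN : M = e * N := (Nat.mul_div_cancel' heM).symm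
  have hN0 : N ≠ 0 := by rintro h; rw [h, mul_zero] at hMN; exact hM0 hMN
  have hNeven : 2 ∣ N := by
    obtain ⟨s, hs⟩ := he2
    have hM2 : M = 2 * (M / 2) := by omega
    have h1 : M = e * (2 * s) := by rw [hM2, hs]; ring
    have h2 : N = 2 * s := by
      rw [hN, h1]
      exact Nat.mul_div_cancel_left _ (Nat.pos_of_ne_zero he0)
    exact ⟨s, h2⟩
  set k := N.factorization 2 with hk
  have hk1 : 1 ≤ k := by
    rw [hk]
    exact (Nat.Prime.factorization_pos_of_dvd Nat.prime_two hN0 hNeven)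
  have h2k : (2 : ℕ) ^ k ∣ N := Nat.ordProj_dvd N 2
  set w := N / 2 ^ k with hw
  have hNw : N = 2 ^ k * w := (Nat.mul_div_cancel' h2k).symm
  have hwodd : ¬ 2 ∣ w := Nat.not_dvd_ordCompl Nat.prime_two hN0
  have hcop : Nat.Coprime (2 ^ k) w :=
    Nat.Coprime.pow_left k ((Nat.Prime.coprime_iff_not_dvd Nat.prime_two).mpr hwodd)
  have hbij : ∑ d ∈ M.divisors.filter (fun d => e ∣ d ∧ TP (d / e)), Nat.totient (M / d)
      = ∑ t ∈ (2 ^ k).divisors, Nat.totient (N / t) := by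
    apply Finset.sum_nbij' (fun d => d / e) (fun t => e * t)
    · intro d hd
      simp only [Finset.mem_filter, Nat.mem_divisors] at hd
      obtain ⟨⟨hdM, -⟩, hed, a, ha⟩ := hd
      have htN : d / e ∣ N := by
        obtain ⟨q, hq⟩ := hdM
        have hde : d = e * (d / e) := (Nat.mul_div_cancel' hed).symm
        have hNq : N = (d / e) * q := by
          rw [hN]
          apply div_helper he0
          calc M = d * q := hq
            _ = e * (d / e * q) := by nth_rw 1 [hde]; ring
        exact ⟨q, hNq⟩
      rw [Nat.mem_divisors]
      refine ⟨?_, by positivity⟩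
      rw [ha] at htN ⊢
      exact pow_dvd_pow 2 ((Nat.Prime.pow_dvd_iff_le_factorization Nat.prime_two hN0).mp htN)
    · intro t ht
      simp only [Nat.mem_divisors] at ht
      obtain ⟨htk, -⟩ := ht
      have htN : t ∣ N := htk.trans h2k
      simp only [Finset.mem_filter, Nat.mem_divisors]
      obtain ⟨r, hr⟩ := htN
      refine ⟨⟨⟨r, by rw [hMN, hr]; ring⟩, hM0⟩, Dvd.intro t rfl, ?_⟩
      rw [Nat.mul_div_cancel_left _ (Nat.pos_of_ne_zero he0)]
      obtain ⟨m, -, hm⟩ := (Nat.dvd_prime_pow Nat.prime_two).mp htk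
      exact ⟨m, hm⟩
    · intro d hd
      simp only [Finset.mem_filter, Nat.mem_divisors] at hd
      exact Nat.mul_div_cancel' hd.2.1
    · intro t _
      exact Nat.mul_div_cancel_left _ (Nat.pos_of_ne_zero he0)
    · intro d hd
      simp only [Finset.mem_filter, Nat.mem_divisors] at hd
      have hde : d = e * (d / e) := (Nat.mul_div_cancel' hd.2.1).symm
      congr 1
      rw [hN, Nat.div_div_eq_div_mul, ← hde]
  rw [hbij]
  have hterm : ∀ t ∈ (2 ^ k).divisors,
      Nat.totient (N / t) = Nat.totient (2 ^ k / t) * Nat.totient w := by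
    intro t ht
    obtain ⟨htk, -⟩ := Nat.mem_divisors.mp ht
    have h1 : N / t = (2 ^ k / t) * w := by
      rw [hNw, mul_comm (2 ^ k) w, Nat.mul_div_assoc w htk, mul_comm]
    rw [h1]
    apply Nat.totient_mul
    exact Nat.Coprime.coprime_dvd_left (Nat.div_dvd_of_dvd htk) hcop
  rw [Finset.sum_congr rfl hterm, ← Finset.sum_mul]
  rw [Nat.sum_div_divisors (2 ^ k) Nat.totient, Nat.sum_totient]
  have hNt : Nat.totient N = Nat.totient (2 ^ k) * Nat.totient w := by
    rw [hNw]
    exact Nat.totient_mul hcop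
  rw [hNt, Nat.totient_prime_pow Nat.prime_two (by omega)]
  have h2 : 2 ^ k = 2 * 2 ^ (k - 1) := by
    conv_lhs => rw [show k = (k - 1) + 1 by omega]
    rw [pow_succ]
    ring
  rw [h2]
  ring

lemma sum_G (hM : 2 ∣ M) :
    ∑ d ∈ M.divisors, Nat.totient (M / d) * Gcount (Nat.gcd d (M / 2))
      = ∑ d ∈ M.divisors.filter (fun d => ¬ Odd (M / d)), Nat.totient (M / d) * 2 ^ d := by
  have hM0 : M ≠ 0 := NeZero.ne M
  -- step 1: rewrite Gcount as a sum over M.divisors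
  have hstep1 : ∀ d ∈ M.divisors,
      Nat.totient (M / d) * Gcount (Nat.gcd d (M / 2)) =
      ∑ e ∈ M.divisors, (if e ∣ d ∧ TP (d / e) ∧ e ∣ M / 2
        then Nat.totient (M / d) * 2 ^ (e - 1) else 0) := by
    intro d hd
    obtain ⟨hdM, -⟩ := Nat.mem_divisors.mp hd
    have hd0 : d ≠ 0 := by rintro rfl; rw [Nat.zero_dvd] at hdM; exact hM0 hdM
    have hg0 : Nat.gcd d (M / 2) ≠ 0 := fun h => hd0 (Nat.eq_zero_of_gcd_eq_zero_left h)
    rw [Gcount_closed _ hg0]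
    have hsetEq : (Nat.gcd d (M / 2)).divisors.filter (fun e => TP (Nat.gcd d (M / 2) / e)) =
        M.divisors.filter (fun e => e ∣ d ∧ TP (d / e) ∧ e ∣ M / 2) := by
      ext e
      simp only [Finset.mem_filter, Nat.mem_divisors]
      constructor
      · rintro ⟨⟨heg, -⟩, htp⟩
        have := (cond_iff hM hdM hd0).mp ⟨heg, htp⟩
        exact ⟨⟨this.1.trans hdM, hM0⟩, this⟩
      · rintro ⟨⟨heM, -⟩, hcond⟩
        have := (cond_iff hM hdM hd0).mpr hcond
        exact ⟨⟨this.1, hg0⟩, this.2⟩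
    rw [hsetEq, Finset.mul_sum, Finset.sum_filter]
  rw [Finset.sum_congr rfl hstep1, Finset.sum_comm]
  -- step 2: evaluate the inner sums
  have hstep2 : ∀ e ∈ M.divisors,
      (∑ d ∈ M.divisors, if e ∣ d ∧ TP (d / e) ∧ e ∣ M / 2
        then Nat.totient (M / d) * 2 ^ (e - 1) else 0) =
      (if e ∣ M / 2 then Nat.totient (M / e) * 2 ^ e else 0) := by
    intro e he
    obtain ⟨heM, -⟩ := Nat.mem_divisors.mp he
    have he0 : e ≠ 0 := by rintro rfl; rw [Nat.zero_dvd] at heM; exact hM0 heM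
    by_cases he2 : e ∣ M / 2
    · rw [if_pos he2]
      have : ∀ d ∈ M.divisors, (if e ∣ d ∧ TP (d / e) ∧ e ∣ M / 2
          then Nat.totient (M / d) * 2 ^ (e - 1) else 0) =
          (if e ∣ d ∧ TP (d / e) then Nat.totient (M / d) * 2 ^ (e - 1) else 0) := by
        intro d _
        by_cases hc : e ∣ d ∧ TP (d / e)
        · rw [if_pos ⟨hc.1, hc.2, he2⟩, if_pos hc]
        · rw [if_neg (by tauto), if_neg hc]
      rw [Finset.sum_congr rfl this, ← Finset.sum_filter, ← Finset.sum_mul, inner_sum hM heM he2]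
      have h2e : 2 ^ e = 2 ^ (e - 1) * 2 := by
        conv_lhs => rw [show e = (e - 1) + 1 by omega]
        rw [pow_succ]
      rw [h2e]
      ring
    · rw [if_neg he2]
      apply Finset.sum_eq_zero
      intro d _
      rw [if_neg (by tauto)]
  rw [Finset.sum_congr rfl hstep2]
  -- step 3: identify the filter
  rw [← Finset.sum_filter]
  apply Finset.sum_congr
  · apply Finset.filter_congr
    intro e he
    obtain ⟨heM, -⟩ := Nat.mem_divisors.mp he
    have he0 : e ≠ 0 := by rintro rfl; rw [Nat.zero_dvd] at heM; exact hM0 heM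
    rw [Nat.not_odd_iff_even]
    constructor
    · intro h2
      obtain ⟨s, hs⟩ := h2
      have hh : M / e = 2 * s := by
        apply div_helper he0
        calc M = 2 * (M / 2) := by omega
          _ = e * (2 * s) := by nth_rw 1 [hs]; ring
      exact ⟨s, by omega⟩
    · intro hev
      obtain ⟨t, ht⟩ := hev
      have hMe : M = e * (M / e) := (Nat.mul_div_cancel' heM).symm
      have hh : M / 2 = e * t := by
        apply div_helper two_ne_zero
        calc M = e * (M / e) := hMe
          _ = 2 * (e * t) := by rw [ht]; ring
      exact ⟨t, hh⟩
  · intro e _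
    rfl

end Arith

section FinalCounts

def FC (M : ℕ) : ℕ → ℕ := fun d => if Odd (M / d) then 2 ^ (d - 1) else 0

def VCC (M : ℕ) [NeZero M] : ℕ → ℕ := fun d =>
  (Finset.univ.filter (fun x : ZMod M → ZMod 2 => Per M d x ∧ Vanishing M x)).card

def BNV (M : ℕ) [NeZero M] : ℕ → ℕ := fun d =>
  (Finset.univ.filter (fun x : ZMod M → ZMod 2 =>
    Per M d x ∧ (Bosonic M x ∧ ¬ Vanishing M x))).card

variable {M : ℕ} [NeZero M]

lemma partition_count {d : ℕ} (hd : d ∣ M) :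
    2 ^ d = FC M d + VCC M d + BNV M d := by
  have h0 := count_all_per hd
  have h1 : (Finset.univ.filter (fun x : ZMod M → ZMod 2 => Per M d x)).card
      = (Finset.univ.filter (fun x : ZMod M → ZMod 2 => Per M d x ∧ Fermionic M x)).card
        + (Finset.univ.filter
            (fun x : ZMod M → ZMod 2 => Per M d x ∧ ¬ Fermionic M x)).card := by
    rw [← Finset.filter_filter, ← Finset.filter_filter]
    exact (Finset.card_filter_add_card_filter_not _).symm
  have h2 : (Finset.univ.filter (fun x : ZMod M → ZMod 2 => Per M d x ∧ ¬ Fermionic M x)).card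
      = VCC M d + BNV M d := by
    have hs := (Finset.card_filter_add_card_filter_not
      (s := Finset.univ.filter (fun x : ZMod M → ZMod 2 => Per M d x ∧ ¬ Fermionic M x))
      (p := Vanishing M)).symm
    rw [Finset.filter_filter, Finset.filter_filter] at hs
    rw [hs]
    congr 1
    · apply congrArg
      apply Finset.filter_congr
      intro x _
      show ((Per M d x ∧ ¬ Fermionic M x) ∧ Vanishing M x) ↔ (Per M d x ∧ Vanishing M x)
      constructor
      · rintro ⟨⟨hp, -⟩, hv⟩; exact ⟨hp, hv⟩
      · rintro ⟨hp, hv⟩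
        exact ⟨⟨hp, (bosonic_iff_not_fermionic x).mp (vanishing_bosonic hv)⟩, hv⟩
    · apply congrArg
      apply Finset.filter_congr
      intro x _
      show ((Per M d x ∧ ¬ Fermionic M x) ∧ ¬ Vanishing M x) ↔
        (Per M d x ∧ (Bosonic M x ∧ ¬ Vanishing M x))
      rw [bosonic_iff_not_fermionic]
      tauto
  have hfer := count_fer hd
  rw [← h0, h1, h2, hfer]
  show (if Odd (M / d) then 2 ^ (d - 1) else 0) + (VCC M d + BNV M d)
    = FC M d + VCC M d + BNV M d
  rw [FC]
  omega

lemma burnside_fer :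
    Nat.card {S : Set (ZMod M → ZMod 2) // ∃ x, Fermionic M x ∧ S = rotOrbit M x} * M
      = ∑ d ∈ M.divisors, Nat.totient (M / d) * FC M d := by
  rw [orbit_count (Fermionic M) fermionic_rot]
  have hk : ∀ k : ZMod M,
      (Finset.univ.filter (fun x : ZMod M → ZMod 2 => Fermionic M x ∧ rot M k x = x)).card
        = FC M (Nat.gcd (ZMod.val k) M) := by
    intro k
    have hiff : ∀ x : ZMod M → ZMod 2,
        (Fermionic M x ∧ rot M k x = x) ↔
          (Per M (Nat.gcd (ZMod.val k) M) x ∧ Fermionic M x) := by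
      intro x
      rw [rot_fixed_iff]
      exact and_comm
    rw [Finset.filter_congr (fun x _ => hiff x), count_fer (Nat.gcd_dvd_right _ M)]
    rfl
  rw [Finset.sum_congr rfl (fun k _ => hk k)]
  exact regroup (FC M)

lemma burnside_bnv :
    Nat.card {S : Set (ZMod M → ZMod 2) //
        ∃ x, (Bosonic M x ∧ ¬ Vanishing M x) ∧ S = rotOrbit M x} * M
      = ∑ d ∈ M.divisors, Nat.totient (M / d) * BNV M d := by
  rw [orbit_count (fun x => Bosonic M x ∧ ¬ Vanishing M x) bos_nonvan_rot]
  have hk : ∀ k : ZMod M,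
      (Finset.univ.filter (fun x : ZMod M → ZMod 2 =>
        (Bosonic M x ∧ ¬ Vanishing M x) ∧ rot M k x = x)).card
        = BNV M (Nat.gcd (ZMod.val k) M) := by
    intro k
    have hiff : ∀ x : ZMod M → ZMod 2,
        ((Bosonic M x ∧ ¬ Vanishing M x) ∧ rot M k x = x) ↔
          (Per M (Nat.gcd (ZMod.val k) M) x ∧ (Bosonic M x ∧ ¬ Vanishing M x)) := by
      intro x
      rw [rot_fixed_iff]
      exact and_comm
    rw [Finset.filter_congr (fun x _ => hiff x)]
    rfl
  rw [Finset.sum_congr rfl (fun k _ => hk k)]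
  exact regroup (BNV M)

lemma sum_FC_double :
    2 * ∑ d ∈ M.divisors, Nat.totient (M / d) * FC M d
      = ∑ d ∈ M.divisors.filter (fun d => Odd (M / d)), Nat.totient (M / d) * 2 ^ d := by
  rw [Finset.mul_sum, Finset.sum_filter]
  apply Finset.sum_congr rfl
  intro d hd
  have hd0 : d ≠ 0 := by
    have := (Nat.mem_divisors.mp hd).1
    rintro rfl
    rw [Nat.zero_dvd] at this
    exact (NeZero.ne M) this
  by_cases h : Odd (M / d)
  · rw [if_pos h]
    show 2 * (Nat.totient (M / d) * (if Odd (M / d) then 2 ^ (d - 1) else 0)) = _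
    rw [if_pos h]
    have h2d : 2 ^ d = 2 * 2 ^ (d - 1) := by
      conv_lhs => rw [show d = (d - 1) + 1 by omega]
      rw [pow_succ]
      ring
    rw [h2d]
    ring
  · rw [if_neg h]
    show 2 * (Nat.totient (M / d) * (if Odd (M / d) then 2 ^ (d - 1) else 0)) = 0
    rw [if_neg h]
    ring

lemma sum_odd_reindex :
    ∑ d ∈ M.divisors.filter (fun d => Odd (M / d)), Nat.totient (M / d) * 2 ^ d
      = ∑ n ∈ M.divisors.filter (fun n => Odd n), Nat.totient n * 2 ^ (M / n) := by
  have hM0 : M ≠ 0 := NeZero.ne M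
  calc ∑ d ∈ M.divisors.filter (fun d => Odd (M / d)), Nat.totient (M / d) * 2 ^ d
      = ∑ d ∈ M.divisors,
          (if Odd (M / d) then Nat.totient (M / d) * 2 ^ d else 0) := Finset.sum_filter _ _
    _ = ∑ d ∈ M.divisors,
          (fun n => Nat.totient n * (if Odd n then 2 ^ (M / n) else 0)) (M / d) := by
        apply Finset.sum_congr rfl
        intro d hd
        have hdvd := (Nat.mem_divisors.mp hd).1
        have hdd : M / (M / d) = d := Nat.div_div_self hdvd hM0
        by_cases h : Odd (M / d)
        · simp only [if_pos h, hdd]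
        · simp only [if_neg h, mul_zero]
    _ = ∑ n ∈ M.divisors, Nat.totient n * (if Odd n then 2 ^ (M / n) else 0) := by
        exact Nat.sum_div_divisors M (fun n => Nat.totient n * (if Odd n then 2 ^ (M / n) else 0))
    _ = ∑ n ∈ M.divisors, (if Odd n then Nat.totient n * 2 ^ (M / n) else 0) := by
        apply Finset.sum_congr rfl
        intro n _
        by_cases h : Odd n
        · simp only [if_pos h]
        · simp only [if_neg h, mul_zero]
    _ = ∑ n ∈ M.divisors.filter (fun n => Odd n), Nat.totient n * 2 ^ (M / n) :=
        (Finset.sum_filter _ _).symm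

lemma sum_BNV_eq_sum_FC :
    ∑ d ∈ M.divisors, Nat.totient (M / d) * BNV M d
      = ∑ d ∈ M.divisors, Nat.totient (M / d) * FC M d := by
  have hM0 : M ≠ 0 := NeZero.ne M
  rcases Nat.even_or_odd M with hME | hMO
  · -- even case
    have h2M : 2 ∣ M := hME.two_dvd
    have hVC : ∀ d ∈ M.divisors, Nat.totient (M / d) * VCC M d
        = Nat.totient (M / d) * Gcount (Nat.gcd d (M / 2)) := by
      intro d hd
      rw [VCC]
      rw [count_van (Nat.mem_divisors.mp hd).1 h2M]
    have hSVC : ∑ d ∈ M.divisors, Nat.totient (M / d) * VCC M d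
        = ∑ d ∈ M.divisors.filter (fun d => ¬ Odd (M / d)),
            Nat.totient (M / d) * 2 ^ d := by
      rw [Finset.sum_congr rfl hVC]
      exact sum_G h2M
    have hsum : ∑ d ∈ M.divisors, Nat.totient (M / d) * 2 ^ d
        = ∑ d ∈ M.divisors, Nat.totient (M / d) * FC M d
          + ∑ d ∈ M.divisors, Nat.totient (M / d) * VCC M d
          + ∑ d ∈ M.divisors, Nat.totient (M / d) * BNV M d := by
      rw [← Finset.sum_add_distrib, ← Finset.sum_add_distrib]
      apply Finset.sum_congr rfl
      intro d hd
      rw [partition_count (Nat.mem_divisors.mp hd).1]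
      ring
    have hsplit : ∑ d ∈ M.divisors, Nat.totient (M / d) * 2 ^ d
        = ∑ d ∈ M.divisors.filter (fun d => Odd (M / d)), Nat.totient (M / d) * 2 ^ d
          + ∑ d ∈ M.divisors.filter (fun d => ¬ Odd (M / d)),
              Nat.totient (M / d) * 2 ^ d :=
      (Finset.sum_filter_add_sum_filter_not _ _ _).symm
    have hF4 := sum_FC_double (M := M)
    omega
  · -- odd case
    have h2M : ¬ 2 ∣ M := by
      rw [Nat.odd_iff] at hMO
      omega
    apply Finset.sum_congr rfl
    intro d hd
    have hdvd := (Nat.mem_divisors.mp hd).1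
    have hd0 : d ≠ 0 := by
      rintro rfl
      rw [Nat.zero_dvd] at hdvd
      exact hM0 hdvd
    have hVC0 : VCC M d = 0 := by
      rw [VCC, Finset.card_eq_zero]
      apply Finset.filter_false_of_mem
      intro x _
      rintro ⟨-, hv⟩
      exact not_vanishing_of_odd h2M x hv
    have hFCd : FC M d = 2 ^ (d - 1) := by
      rw [FC]
      exact if_pos (odd_div_of_odd hMO hdvd)
    have hpart := partition_count hdvd
    have h2d : 2 ^ d = 2 * 2 ^ (d - 1) := by
      conv_lhs => rw [show d = (d - 1) + 1 by omega]
      rw [pow_succ]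
      ring
    have : BNV M d = FC M d := by
      rw [hFCd]
      omega
    rw [this]

end FinalCounts

end STB


open STB in
/-- For every positive integer `M`, the number of orbits of bosonic non-vanishing binary
words of length `M` equals the number of orbits of fermionic binary words of length `M`,
and both equal `(1/(2M)) · Σ_{n | M, n odd} φ(n) · 2^(M/n)`. -/
theorem bosonic_eq_fermionic_single_trace_states (M : ℕ) [NeZero M] :
    Nat.card {S : Set (ZMod M → ZMod 2) //
        ∃ x, (Bosonic M x ∧ ¬ Vanishing M x) ∧ S = rotOrbit M x}
      = Nat.card {S : Set (ZMod M → ZMod 2) // ∃ x, Fermionic M x ∧ S = rotOrbit M x}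
    ∧ (Nat.card {S : Set (ZMod M → ZMod 2) // ∃ x, Fermionic M x ∧ S = rotOrbit M x} : ℚ)
      = (1 / (2 * M)) *
        ∑ n ∈ M.divisors.filter (fun n => Odd n),
          (Nat.totient n : ℚ) * 2 ^ (M / n) := by
  have hM0 : M ≠ 0 := NeZero.ne M
  have hMpos : 0 < M := Nat.pos_of_ne_zero hM0
  have hB := STB.burnside_bnv (M := M)
  have hF := STB.burnside_fer (M := M)
  have hBF := STB.sum_BNV_eq_sum_FC (M := M)
  have h1 : Nat.card {S : Set (ZMod M → ZMod 2) //
        ∃ x, (Bosonic M x ∧ ¬ Vanishing M x) ∧ S = rotOrbit M x}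
      = Nat.card {S : Set (ZMod M → ZMod 2) // ∃ x, Fermionic M x ∧ S = rotOrbit M x} := by
    apply Nat.eq_of_mul_eq_mul_right hMpos
    rw [hB, hF, hBF]
  refine ⟨h1, ?_⟩
  have h2 : 2 * (Nat.card {S : Set (ZMod M → ZMod 2) //
        ∃ x, Fermionic M x ∧ S = rotOrbit M x} * M)
      = ∑ n ∈ M.divisors.filter (fun n => Odd n), Nat.totient n * 2 ^ (M / n) := by
    rw [hF, STB.sum_FC_double, STB.sum_odd_reindex]
  have h3 := congrArg (fun n : ℕ => (n : ℚ)) h2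
  push_cast at h3
  have hM0Q : (M : ℚ) ≠ 0 := Nat.cast_ne_zero.mpr hM0
  field_simp
  linarith [h3]
end

section
/- Let M be a positive integer, let k be an integer with 1 ≤ k ≤ M, and set d = gcd(M,k). If M/d is odd, then the number of fermionic binary words of length M fixed by the rotation c_k equals 2^{d−1}, and the number of bosonic binary words of length M fixed by c_k also equals 2^{d−1}. -/
open Finset


namespace RotAux

/-- number of ones -/
def cnt (n : ℕ) [NeZero n] (y : ZMod n → ZMod 2) : ℕ :=
  (univ.filter (fun i => y i = 1)).card

/-- toggle the value at 0 -/
def tog (n : ℕ) [NeZero n] (y : ZMod n → ZMod 2) : ZMod n → ZMod 2 :=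
  Function.update y 0 (y 0 + 1)

lemma tog_tog (n : ℕ) [NeZero n] (y : ZMod n → ZMod 2) : tog n (tog n y) = y := by
  have h2 : ∀ a : ZMod 2, a + 1 + 1 = a := by decide
  simp only [tog, Function.update_self, Function.update_idem, h2, Function.update_eq_self]

lemma odd_cnt_tog (n : ℕ) [NeZero n] (y : ZMod n → ZMod 2) :
    Odd (cnt n (tog n y)) ↔ ¬ Odd (cnt n y) := by
  by_cases h : y 0 = 1
  · have hset : univ.filter (fun i => tog n y i = 1)
        = (univ.filter (fun i : ZMod n => y i = 1)).erase 0 := by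
      ext i
      simp only [tog, Function.update_apply, mem_filter, mem_univ, true_and, mem_erase]
      by_cases hi : i = 0
      · subst hi; simp [h]
      · simp [hi]
    have hmem : (0 : ZMod n) ∈ univ.filter (fun i : ZMod n => y i = 1) := by simp [h]
    have hcard : cnt n y = cnt n (tog n y) + 1 := by
      unfold cnt
      rw [hset, Finset.card_erase_of_mem hmem]
      have := Finset.card_pos.mpr ⟨0, hmem⟩
      omega
    rw [hcard, Nat.odd_add_one, not_not]
  · have h0 : y 0 = 0 := by
      have : ∀ a : ZMod 2, a ≠ 1 → a = 0 := by decide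
      exact this _ h
    have hset : univ.filter (fun i => tog n y i = 1)
        = insert 0 (univ.filter (fun i : ZMod n => y i = 1)) := by
      ext i
      simp only [tog, Function.update_apply, mem_filter, mem_univ, true_and, mem_insert]
      by_cases hi : i = 0
      · subst hi; simp [h0]
      · simp [hi]
    have hmem : (0 : ZMod n) ∉ univ.filter (fun i : ZMod n => y i = 1) := by simp [h0]
    have hcard : cnt n (tog n y) = cnt n y + 1 := by
      unfold cnt
      rw [hset, Finset.card_insert_of_notMem hmem]
    rw [hcard, Nat.odd_add_one]

lemma card_parity (n : ℕ) [NeZero n] :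
    Nat.card {y : ZMod n → ZMod 2 // Odd (cnt n y)} = 2 ^ (n - 1) ∧
    Nat.card {y : ZMod n → ZMod 2 // Even (cnt n y)} = 2 ^ (n - 1) := by
  classical
  have hOdd : Nat.card {y : ZMod n → ZMod 2 // Odd (cnt n y)}
      = (univ.filter (fun y : ZMod n → ZMod 2 => Odd (cnt n y))).card := by
    rw [Nat.card_eq_fintype_card, Fintype.card_subtype]
  have hEven : Nat.card {y : ZMod n → ZMod 2 // Even (cnt n y)}
      = (univ.filter (fun y : ZMod n → ZMod 2 => ¬ Odd (cnt n y))).card := by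
    rw [Nat.card_eq_fintype_card, Fintype.card_subtype]
    congr 1
    apply Finset.filter_congr
    intro y _
    exact (Nat.not_odd_iff_even).symm
  have hbij : (univ.filter (fun y : ZMod n → ZMod 2 => Odd (cnt n y))).card
      = (univ.filter (fun y : ZMod n → ZMod 2 => ¬ Odd (cnt n y))).card := by
    apply Finset.card_bij' (fun y _ => tog n y) (fun y _ => tog n y)
    · intro y hy
      simp only [mem_filter, mem_univ, true_and] at *
      exact fun hc => ((odd_cnt_tog n y).mp hc) hy
    · intro y hy
      simp only [mem_filter, mem_univ, true_and] at *
      exact (odd_cnt_tog n y).mpr hy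
    · intro y _; exact tog_tog n y
    · intro y _; exact tog_tog n y
  have hsum : (univ.filter (fun y : ZMod n → ZMod 2 => Odd (cnt n y))).card
      + (univ.filter (fun y : ZMod n → ZMod 2 => ¬ Odd (cnt n y))).card
      = 2 ^ n := by
    rw [Finset.card_filter_add_card_filter_not]
    simp [ZMod.card]
  have hn : 0 < n := NeZero.pos n
  have hpow : 2 ^ n = 2 ^ (n - 1) * 2 := by
    conv_lhs => rw [show n = (n - 1) + 1 by omega]
    rw [pow_succ]
  constructor
  · rw [hOdd]; omega
  · rw [hEven]; omega

end RotAux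

open RotAux in
/-- Let `1 ≤ k ≤ M` and `d = gcd(M,k)`.  If `M/d` is odd then there are `2^(d-1)`
fermionic binary words of length `M` fixed by the rotation `c_k`, and likewise `2^(d-1)`
bosonic binary words of length `M` fixed by `c_k`. -/
theorem fixed_words_of_rotation_odd_case (M k : ℕ) [NeZero M]
    (hk1 : 1 ≤ k) (hk2 : k ≤ M) (d : ℕ) (hd : d = Nat.gcd M k)
    (hodd : Odd (M / d)) :
    Nat.card {x : ZMod M → ZMod 2 // rot M (k : ZMod M) x = x ∧ Fermionic M x}
        = 2 ^ (d - 1)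
    ∧ Nat.card {x : ZMod M → ZMod 2 // rot M (k : ZMod M) x = x ∧ Bosonic M x}
        = 2 ^ (d - 1) := by
  classical
  have hM : 0 < M := NeZero.pos M
  have hd0 : 0 < d := by
    rw [hd]; exact Nat.gcd_pos_of_pos_left k hM
  haveI : NeZero d := ⟨hd0.ne'⟩
  have hdvdM : d ∣ M := hd ▸ Nat.gcd_dvd_left M k
  have hdvdk : d ∣ k := hd ▸ Nat.gcd_dvd_right M k
  set c : ZMod M →+* ZMod d := ZMod.castHom hdvdM (ZMod d) with hc
  -- c applied to natCast
  have hcnat : ∀ m : ℕ, c ((m : ZMod M)) = (m : ZMod d) := fun m => map_natCast c m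
  have hck : c ((k : ZMod M)) = 0 := by
    rw [hcnat k, ZMod.natCast_eq_zero_iff]
    exact hdvdk
  have hsurj : Function.Surjective c := by
    intro j
    refine ⟨((j.val : ZMod M)), ?_⟩
    rw [hcnat]
    simp [ZMod.natCast_val, ZMod.cast_id]
  -- fixedness of y ∘ c
  have hfix_comp : ∀ y : ZMod d → ZMod 2, rot M (k : ZMod M) (fun i => y (c i)) = fun i => y (c i) := by
    intro y
    funext i
    simp only [rot, map_add, hck, add_zero]
  -- fixed words are invariant under adding multiples of d
  have hstep : ∀ x : ZMod M → ZMod 2, rot M (k : ZMod M) x = x →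
      ∀ (i : ZMod M) (m : ℕ), x (i + (m : ZMod M) * (d : ZMod M)) = x i := by
    intro x hx
    have hk' : ∀ i : ZMod M, x (i + (k : ZMod M)) = x i := fun i => congrFun hx i
    have hz : ∀ (m : ℤ) (i : ZMod M), x (i + (m : ZMod M) * (k : ZMod M)) = x i := by
      intro m
      induction m using Int.induction_on with
      | zero => intro i; simp
      | succ m ih =>
        intro i
        have h1 : (((m : ℤ) + 1 : ℤ) : ZMod M) * (k : ZMod M)
            = ((m : ℤ) : ZMod M) * (k : ZMod M) + (k : ZMod M) := by
          push_cast
          ring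
        rw [h1, ← add_assoc, hk', ih]
      | pred m ih =>
        intro i
        have hback : ∀ j : ZMod M, x (j - (k : ZMod M)) = x j := by
          intro j
          have := hk' (j - (k : ZMod M))
          rw [sub_add_cancel] at this
          exact this.symm
        have h1 : (((-(m : ℤ) - 1 : ℤ)) : ZMod M) * (k : ZMod M)
            = ((-(m : ℤ) : ℤ) : ZMod M) * (k : ZMod M) - (k : ZMod M) := by
          push_cast
          ring
        rw [h1, ← add_sub_assoc, hback, ih]
    -- d is an integer combination of k mod M
    have hbez : ((d : ℤ) : ZMod M) = ((Nat.gcdB M k : ℤ) : ZMod M) * (k : ZMod M) := by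
      have h := Nat.gcd_eq_gcd_ab M k
      rw [hd]
      have : ((Nat.gcd M k : ℤ) : ZMod M)
          = ((M : ℤ) * Nat.gcdA M k + (k : ℤ) * Nat.gcdB M k : ℤ) := by
        exact_mod_cast congrArg (fun z : ℤ => ((z : ZMod M))) h
      rw [this]
      push_cast
      simp [ZMod.natCast_self]
      ring
    have hstep1 : ∀ i : ZMod M, x (i + (d : ZMod M)) = x i := by
      intro i
      have : (d : ZMod M) = ((Nat.gcdB M k : ℤ) : ZMod M) * (k : ZMod M) := by
        have := hbez
        push_cast at this ⊢
        exact this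
      rw [this]
      exact hz (Nat.gcdB M k) i
    intro i m
    induction m with
    | zero => simp
    | succ m ih =>
      have h1 : ((m + 1 : ℕ) : ZMod M) * (d : ZMod M)
          = (m : ZMod M) * (d : ZMod M) + (d : ZMod M) := by
        push_cast
        ring
      rw [h1, ← add_assoc, hstep1, ih]
  -- every fixed word factors through c
  have hfact : ∀ x : ZMod M → ZMod 2, rot M (k : ZMod M) x = x →
      ∀ i : ZMod M, x i = x (((c i).val : ZMod M)) := by
    intro x hx i
    have hval : (c i).val = i.val % d := by
      have : c i = ((i.val : ℕ) : ZMod d) := by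
        rw [hc, ZMod.castHom_apply, ← ZMod.natCast_val]
      rw [this, ZMod.val_natCast]
    have hi : (i.val : ZMod M) = i := by
      rw [ZMod.natCast_val, ZMod.cast_id]
    have hsplit : i.val = i.val % d + (i.val / d) * d :=
      (Nat.mod_add_div' i.val d).symm
    calc x i = x ((i.val : ZMod M)) := by rw [hi]
      _ = x (((i.val % d : ℕ) : ZMod M) + ((i.val / d : ℕ) : ZMod M) * (d : ZMod M)) := by
          congr 1
          conv_lhs => rw [hsplit]
          push_cast
          ring
      _ = x (((i.val % d : ℕ) : ZMod M)) := hstep x hx _ _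
      _ = x (((c i).val : ZMod M)) := by rw [hval]
  -- fiber cards
  have hfiber : ∀ j : ZMod d, (univ.filter fun i : ZMod M => c i = j).card = M / d := by
    have hconst : ∀ j : ZMod d, (univ.filter fun i : ZMod M => c i = j).card
        = (univ.filter fun i : ZMod M => c i = 0).card := by
      intro j
      obtain ⟨i0, hi0⟩ := hsurj j
      apply Finset.card_bij' (fun i _ => i - i0) (fun i _ => i + i0)
      · intro i hi
        simp only [mem_filter, mem_univ, true_and] at *
        rw [map_sub, hi, hi0, sub_self]
      · intro i hi
        simp only [mem_filter, mem_univ, true_and] at *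
        rw [map_add, hi, hi0, zero_add]
      · intro i _; ring
      · intro i _; ring
    have hsum : ∑ j : ZMod d, (univ.filter fun i : ZMod M => c i = j).card = M := by
      rw [← Finset.card_eq_sum_card_fiberwise (f := fun i : ZMod M => c i)
        (s := univ) (t := univ) (fun x _ => mem_univ _)]
      simp [ZMod.card]
    have hsum2 : (d : ℕ) * (univ.filter fun i : ZMod M => c i = 0).card = M := by
      calc d * (univ.filter fun i : ZMod M => c i = 0).card
          = ∑ _j : ZMod d, (univ.filter fun i : ZMod M => c i = 0).card := by
            rw [Finset.sum_const, smul_eq_mul, Finset.card_univ, ZMod.card]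
        _ = ∑ j : ZMod d, (univ.filter fun i : ZMod M => c i = j).card := by
            exact Finset.sum_congr rfl (fun j _ => (hconst j).symm)
        _ = M := hsum
    intro j
    rw [hconst j]
    exact (Nat.div_eq_of_eq_mul_right hd0 hsum2.symm).symm
  -- counting ones of composed words
  have hcount : ∀ y : ZMod d → ZMod 2,
      (univ.filter fun i : ZMod M => y (c i) = 1).card = (M / d) * cnt d y := by
    intro y
    have h1 : (univ.filter fun i : ZMod M => y (c i) = 1).card
        = ∑ j ∈ univ.filter (fun j : ZMod d => y j = 1),
            ((univ.filter fun i : ZMod M => y (c i) = 1).filter fun i => c i = j).card := by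
      apply Finset.card_eq_sum_card_fiberwise
      intro i hi
      simp only [Finset.mem_coe, mem_filter, mem_univ, true_and] at *
      exact hi
    rw [h1]
    have h2 : ∀ j ∈ univ.filter (fun j : ZMod d => y j = 1),
        ((univ.filter fun i : ZMod M => y (c i) = 1).filter fun i => c i = j).card = M / d := by
      intro j hj
      simp only [mem_filter, mem_univ, true_and] at hj
      rw [← hfiber j]
      congr 1
      ext i
      simp only [mem_filter, mem_univ, true_and]
      constructor
      · rintro ⟨-, h⟩; exact h
      · intro h; exact ⟨by rw [h]; exact hj, h⟩
    rw [Finset.sum_congr rfl h2, Finset.sum_const, smul_eq_mul, mul_comm]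
    rfl
  -- bijections
  have hodd' : Odd (M / d) := hodd
  -- parity transfer
  have hparF : ∀ y : ZMod d → ZMod 2,
      (Fermionic M (fun i => y (c i)) ↔ Odd (cnt d y)) := by
    intro y
    unfold Fermionic
    rw [hcount y, Nat.odd_mul]
    exact ⟨fun h => h.2, fun h => ⟨hodd', h⟩⟩
  have hparB : ∀ y : ZMod d → ZMod 2,
      (Bosonic M (fun i => y (c i)) ↔ Even (cnt d y)) := by
    intro y
    unfold Bosonic
    rw [← Nat.not_odd_iff_even, ← Nat.not_odd_iff_even, hcount y, Nat.odd_mul]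
    constructor
    · intro h hcon; exact h ⟨hodd', hcon⟩
    · intro h hcon; exact h hcon.2
  -- injectivity of composition with c
  have hinj : Function.Injective (fun (y : ZMod d → ZMod 2) => (fun i => y (c i))) := by
    intro y1 y2 h
    funext j
    obtain ⟨i, rfl⟩ := hsurj j
    exact congrFun h i
  -- the two bijections
  have key : ∀ P : (∀ n : ℕ, [NeZero n] → (ZMod n → ZMod 2) → Prop), True := fun _ => trivial
  constructor
  · rw [← (card_parity d).1]
    apply (Nat.card_eq_of_bijective
      (f := fun (y : {y : ZMod d → ZMod 2 // Odd (cnt d y)}) =>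
        (⟨fun i => y.1 (c i), hfix_comp y.1, (hparF y.1).mpr y.2⟩ :
          {x : ZMod M → ZMod 2 // rot M (k : ZMod M) x = x ∧ Fermionic M x})) ?_).symm
    constructor
    · intro y1 y2 h
      apply Subtype.ext
      exact hinj (congrArg Subtype.val h)
    · rintro ⟨x, hx, hferm⟩
      refine ⟨⟨fun j => x ((j.val : ZMod M)), ?_⟩, ?_⟩
      · have hxeq : x = fun i => (fun j : ZMod d => x ((j.val : ZMod M))) (c i) := by
          funext i
          exact hfact x hx i
        rw [← hparF]
        rw [← hxeq]
        exact hferm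
      · apply Subtype.ext
        funext i
        exact (hfact x hx i).symm
  · rw [← (card_parity d).2]
    apply (Nat.card_eq_of_bijective
      (f := fun (y : {y : ZMod d → ZMod 2 // Even (cnt d y)}) =>
        (⟨fun i => y.1 (c i), hfix_comp y.1, (hparB y.1).mpr y.2⟩ :
          {x : ZMod M → ZMod 2 // rot M (k : ZMod M) x = x ∧ Bosonic M x})) ?_).symm
    constructor
    · intro y1 y2 h
      apply Subtype.ext
      exact hinj (congrArg Subtype.val h)
    · rintro ⟨x, hx, hbos⟩
      refine ⟨⟨fun j => x ((j.val : ZMod M)), ?_⟩, ?_⟩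
      · have hxeq : x = fun i => (fun j : ZMod d => x ((j.val : ZMod M))) (c i) := by
          funext i
          exact hfact x hx i
        rw [← hparB]
        rw [← hxeq]
        exact hbos
      · apply Subtype.ext
        funext i
        exact (hfact x hx i).symm
end

section
/- Let M be a positive integer, let k be an integer with 1 ≤ k ≤ M, and set d = gcd(M,k). If M/d is even, then no fermionic binary word of length M is fixed by the rotation c_k, and the number of bosonic binary words of length M fixed by c_k equals 2^{d}. -/
/-- Rotation of a binary word of length `M` by `k`: `(c_k · x)(i) = x (i + k)`. -/
lemma fixed_nat_mul {M : ℕ} {c : ZMod M} {x : ZMod M → ZMod 2}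
    (hx : ∀ i, x (i + c) = x i) (i : ZMod M) (n : ℕ) :
    x (i + (n : ZMod M) * c) = x i := by
  induction n with
  | zero => simp
  | succ n ih =>
    have h : i + ((n + 1 : ℕ) : ZMod M) * c = (i + (n : ZMod M) * c) + c := by
      push_cast; ring
    rw [h, hx, ih]

/-- Let `1 ≤ k ≤ M` and `d = gcd(M,k)`.  If `M/d` is even then no fermionic binary word
of length `M` is fixed by the rotation `c_k`, and there are exactly `2^d` bosonic binary
words of length `M` fixed by `c_k`. -/
theorem fixed_words_of_rotation_even_case (M k : ℕ) [NeZero M]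
    (hk1 : 1 ≤ k) (hk2 : k ≤ M) (d : ℕ) (hd : d = Nat.gcd M k)
    (heven : Even (M / d)) :
    (¬ ∃ x : ZMod M → ZMod 2, rot M (k : ZMod M) x = x ∧ Fermionic M x)
    ∧ Nat.card {x : ZMod M → ZMod 2 // rot M (k : ZMod M) x = x ∧ Bosonic M x}
        = 2 ^ d := by
  have hM : 0 < M := Nat.pos_of_ne_zero (NeZero.ne M)
  have hd0 : 0 < d := hd ▸ Nat.gcd_pos_of_pos_left _ hM
  haveI : NeZero d := ⟨by omega⟩
  have hdvdM : d ∣ M := hd ▸ Nat.gcd_dvd_left M k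
  have hdvdk : d ∣ k := hd ▸ Nat.gcd_dvd_right M k
  -- the projection
  set q : ZMod M →+* ZMod d := ZMod.castHom hdvdM (ZMod d) with hqdef
  have hq : ∀ i : ZMod M, q i = ((i.val : ℕ) : ZMod d) := by
    intro i; rw [hqdef, ZMod.castHom_apply, ← ZMod.natCast_val]
  -- the section
  set e : ZMod d → ZMod M := fun j => ((j.val : ℕ) : ZMod M) with hedef
  have heq : ∀ j : ZMod d, q (e j) = j := by
    intro j; rw [hedef]; simp only [map_natCast]
    exact ZMod.natCast_rightInverse j
  -- (d : ZMod M) is a multiple of k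
  obtain ⟨n, hn⟩ : ∃ n : ℕ, (d : ZMod M) = (n : ZMod M) * (k : ZMod M) := by
    have h := Nat.gcd_eq_gcd_ab M k
    set b : ZMod M := ((Nat.gcdB M k : ℤ) : ZMod M) with hb
    refine ⟨b.val, ?_⟩
    have h2 : ((d : ℤ) : ZMod M) = ((M * Nat.gcdA M k + k * Nat.gcdB M k : ℤ) : ZMod M) := by
      rw [hd]; exact congrArg (fun z : ℤ => (z : ZMod M)) h
    push_cast at h2
    simp only [ZMod.natCast_self, zero_mul] at h2
    rw [ZMod.natCast_val, ZMod.cast_id]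
    rw [h2]; ring
  -- factoring of fixed words through q
  have hfac : ∀ x : ZMod M → ZMod 2, rot M (k : ZMod M) x = x →
      ∀ i i' : ZMod M, q i = q i' → x i = x i' := by
    intro x hx i i' h
    have hk_inv : ∀ i, x (i + (k : ZMod M)) = x i := fun i => congrFun hx i
    have hd_inv : ∀ i, x (i + (d : ZMod M)) = x i := by
      intro i; rw [hn]; exact fixed_nat_mul hk_inv i n
    have hdm : ∀ (i : ZMod M) (m : ℕ), x (i + (m : ZMod M) * (d : ZMod M)) = x i :=
      fun i m => fixed_nat_mul hd_inv i m
    have hval : ∀ a : ℕ, x (a : ZMod M) = x ((a % d : ℕ) : ZMod M) := by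
      intro a
      conv_lhs => rw [← Nat.mod_add_div a d]
      push_cast
      rw [show ((a % d : ℕ) : ZMod M) + (d : ZMod M) * ((a / d : ℕ) : ZMod M)
          = ((a % d : ℕ) : ZMod M) + ((a / d : ℕ) : ZMod M) * (d : ZMod M) by ring]
      exact hdm _ _
    rw [hq, hq] at h
    have hmod : i.val % d = i'.val % d := by
      rwa [ZMod.natCast_eq_natCast_iff', ] at h
    have h1 : ((i.val : ℕ) : ZMod M) = i := ZMod.natCast_rightInverse i
    have h2 : ((i'.val : ℕ) : ZMod M) = i' := ZMod.natCast_rightInverse i'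
    rw [← h1, ← h2, hval i.val, hval i'.val, hmod]
  -- fibers of q all have the same cardinality
  have fib_card : ∀ j : ZMod d, (Finset.univ.filter (fun i => q i = j)).card
      = (Finset.univ.filter (fun i : ZMod M => q i = 0)).card := by
    intro j
    apply Finset.card_bij (fun i _ => i - e j)
    · intro i hi
      simp only [Finset.mem_filter, Finset.mem_univ, true_and] at hi ⊢
      rw [map_sub, hi, heq, sub_self]
    · intro a ha b hb hab
      exact by linear_combination hab  -- a - e j = b - e j → a = b
    · intro t ht
      simp only [Finset.mem_filter, Finset.mem_univ, true_and] at ht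
      refine ⟨t + e j, ?_, by ring⟩
      simp only [Finset.mem_filter, Finset.mem_univ, true_and, map_add, ht, heq, zero_add]
  -- the fiber cardinality is M / d
  set c : ℕ := (Finset.univ.filter (fun i : ZMod M => q i = 0)).card with hc
  have hMdc : M = d * c := by
    have h1 : (Finset.univ : Finset (ZMod M)).card
        = ∑ j : ZMod d, (Finset.univ.filter (fun i => q i = j)).card :=
      Finset.card_eq_sum_card_fiberwise (fun i _ => Finset.mem_univ (q i))
    rw [Finset.card_univ, ZMod.card] at h1
    rw [h1]
    calc ∑ j : ZMod d, (Finset.univ.filter (fun i => q i = j)).card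
        = ∑ _j : ZMod d, c := Finset.sum_congr rfl (fun j _ => fib_card j)
      _ = d * c := by simp [Finset.card_univ, ZMod.card, mul_comm]
  have hcMd : c = M / d := by rw [hMdc, Nat.mul_div_cancel_left _ hd0]
  -- every fixed word is bosonic
  have even_ones : ∀ x : ZMod M → ZMod 2, rot M (k : ZMod M) x = x →
      Even (Finset.univ.filter (fun i : ZMod M => x i = 1)).card := by
    intro x hx
    set y : ZMod d → ZMod 2 := fun j => x (e j) with hy
    have hxy : ∀ i, x i = y (q i) := by
      intro i
      exact hfac x hx i (e (q i)) (by rw [heq])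
    have hsum : (Finset.univ.filter (fun i : ZMod M => x i = 1)).card
        = ∑ j ∈ Finset.univ.filter (fun j : ZMod d => y j = 1),
          ((Finset.univ.filter (fun i : ZMod M => x i = 1)).filter (fun i => q i = j)).card := by
      apply Finset.card_eq_sum_card_fiberwise
      intro i hi
      simp only [Finset.mem_coe, Finset.mem_filter, Finset.mem_univ, true_and] at hi ⊢
      rw [← hxy, hi]
    have hfib : ∀ j ∈ Finset.univ.filter (fun j : ZMod d => y j = 1),
        ((Finset.univ.filter (fun i : ZMod M => x i = 1)).filter (fun i => q i = j)).card = c := by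
      intro j hj
      simp only [Finset.mem_filter, Finset.mem_univ, true_and] at hj
      rw [← fib_card j]
      congr 1
      ext i
      simp only [Finset.mem_filter, Finset.mem_univ, true_and, and_iff_right_iff_imp]
      intro h
      rw [hxy, h, hj]
    rw [hsum, Finset.sum_congr rfl hfib, Finset.sum_const, smul_eq_mul]
    exact (hcMd ▸ heven).mul_left _
  constructor
  · rintro ⟨x, hx, hferm⟩
    exact (Nat.not_even_iff_odd.mpr hferm) (even_ones x hx)
  · -- the fixed-point invariance of y ∘ q
    have hfix : ∀ y : ZMod d → ZMod 2, rot M (k : ZMod M) (y ∘ q) = y ∘ q := by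
      intro y
      funext i
      show y (q (i + (k : ZMod M))) = y (q i)
      rw [map_add, map_natCast, (ZMod.natCast_eq_zero_iff k d).mpr hdvdk, add_zero]
    have E : {x : ZMod M → ZMod 2 // rot M (k : ZMod M) x = x ∧ Bosonic M x}
        ≃ (ZMod d → ZMod 2) :=
      { toFun := fun p j => p.1 (e j)
        invFun := fun y => ⟨y ∘ q, hfix y, even_ones _ (hfix y)⟩
        left_inv := by
          rintro ⟨x, hx, hb⟩
          apply Subtype.ext
          funext i
          exact hfac x hx (e (q i)) i (by rw [heq])
        right_inv := by
          intro y
          funext j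
          show y (q (e j)) = y j
          rw [heq] }
    rw [Nat.card_congr E, Nat.card_eq_fintype_card, Fintype.card_fun, ZMod.card, ZMod.card]
end

section
/- Let M ≥ 2 be an integer, let k be an integer with 1 ≤ k ≤ M−1, let c be real and z₁, z₂ complex, and suppose the supersymmetry constraints Im(z₁) = Im(z₂) and c = Re(z₂) hold. Then 2·Im(z₂)·sin(2kπ/M) ± 2·√( (c − Re(z₂)·cos(2kπ/M))² + |z₁|²·sin²(2kπ/M) ) = 4·( Im(z₁)·cos(kπ/M) ± √( (Re(z₂))²·sin²(kπ/M) + |z₁|²·cos²(kπ/M) ) )·sin(kπ/M), for each choice of sign. -/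
open Real

/-- Under the supersymmetry constraints `Im z₁ = Im z₂` and `c = Re z₂`, for
`1 ≤ k ≤ M−1` the excitation energy satisfies, for each choice of sign,
`2 Im(z₂) sin(2kπ/M) ± 2 √((c − Re z₂ cos(2kπ/M))² + |z₁|² sin²(2kπ/M))
  = 4 (Im(z₁) cos(kπ/M) ± √((Re z₂)² sin²(kπ/M) + |z₁|² cos²(kπ/M))) sin(kπ/M)`. -/
theorem susy_excitation_energy (M k : ℕ) (hM : 2 ≤ M) (hk1 : 1 ≤ k) (hk2 : k ≤ M - 1)
    (c : ℝ) (z₁ z₂ : ℂ) (h1 : z₁.im = z₂.im) (h2 : c = z₂.re) :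
    (2 * z₂.im * Real.sin (2 * k * Real.pi / M)
        + 2 * Real.sqrt ((c - z₂.re * Real.cos (2 * k * Real.pi / M)) ^ 2
            + ‖z₁‖ ^ 2 * Real.sin (2 * k * Real.pi / M) ^ 2)
      = 4 * (z₁.im * Real.cos (k * Real.pi / M)
            + Real.sqrt (z₂.re ^ 2 * Real.sin (k * Real.pi / M) ^ 2
                + ‖z₁‖ ^ 2 * Real.cos (k * Real.pi / M) ^ 2))
          * Real.sin (k * Real.pi / M))
    ∧ (2 * z₂.im * Real.sin (2 * k * Real.pi / M)
        - 2 * Real.sqrt ((c - z₂.re * Real.cos (2 * k * Real.pi / M)) ^ 2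
            + ‖z₁‖ ^ 2 * Real.sin (2 * k * Real.pi / M) ^ 2)
      = 4 * (z₁.im * Real.cos (k * Real.pi / M)
            - Real.sqrt (z₂.re ^ 2 * Real.sin (k * Real.pi / M) ^ 2
                + ‖z₁‖ ^ 2 * Real.cos (k * Real.pi / M) ^ 2))
          * Real.sin (k * Real.pi / M)) := by
  set θ : ℝ := k * Real.pi / M with hθ
  have hMpos : (0:ℝ) < M := by positivity
  have hθnn : 0 ≤ θ := by positivity
  have hθle : θ ≤ Real.pi := by
    rw [hθ, div_le_iff₀ hMpos]
    have : (k:ℝ) ≤ M := by exact_mod_cast Nat.le_of_lt (Nat.lt_of_le_of_lt hk2 (Nat.sub_lt (by omega) one_pos))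
    nlinarith [Real.pi_pos]
  have hsin : 0 ≤ Real.sin θ := Real.sin_nonneg_of_nonneg_of_le_pi hθnn hθle
  have h2θ : 2 * (k:ℝ) * Real.pi / M = 2 * θ := by rw [hθ]; ring
  rw [h2θ, Real.sin_two_mul, Real.cos_two_mul']
  have harg : (c - z₂.re * (Real.cos θ ^ 2 - Real.sin θ ^ 2)) ^ 2
      + ‖z₁‖ ^ 2 * (2 * Real.sin θ * Real.cos θ) ^ 2
      = (2 * Real.sin θ) ^ 2 * (z₂.re ^ 2 * Real.sin θ ^ 2
        + ‖z₁‖ ^ 2 * Real.cos θ ^ 2) := by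
    subst h2
    have hc : Real.cos θ ^ 2 = 1 - Real.sin θ ^ 2 := Real.cos_sq' θ
    linear_combination (-(z₂.re ^ 2) * (1 - Real.cos θ ^ 2 + Real.sin θ ^ 2
      + 2 * Real.sin θ ^ 2)) * hc
  rw [harg, Real.sqrt_mul (by positivity), Real.sqrt_sq (by positivity)]
  constructor <;> (rw [h1]; ring)
end
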